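/- arXiv:2601.17700 — 5 statements merged into one kernel-verified Lean document; each statement's English description precedes it below -/
import Mathlib

section
/- Let V : [0,∞) × D → ℝ be continuously differentiable and suppose there are continuous functions W1, W2, W3 : D → ℝ, each positive definite relative to x*, such that W1(x) ≤ V(t,x) ≤ W2(x) and ∂V/∂t (t,x) + ∇ₓV(t,x) · f(t,x) ≤ −W3(x) for all (t,x) ∈ [0,∞) × D. Then for every r ∈ (0, r0) and every c with 0 < c < min{W1(x) : ‖x − x*‖ = r}, there exists a class KL function β such that every solution x(·) of ẋ = f(t,x) on [t0,∞) with x(t0) ∈ {x ∈ closure B(x*, r) : W2(x) ≤ c} satisfies ‖x(t) − x*‖ ≤ β(‖x(t0) − x*‖, t − t0) for all t ≥ t0 ≥ 0. -/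
open Set Filter Metric Topology
open scoped ENNReal NNReal

noncomputable section

/-- The domain `[0, a)` of a class `KL` function, where `a : ℝ≥0∞` (`a = ⊤` means `[0, ∞)`). -/
def KLdom (a : ℝ≥0∞) : Set ℝ := {r : ℝ | 0 ≤ r ∧ ENNReal.ofReal r < a}

/-- `β : [0, a) × [0, ∞) → [0, ∞)` is a class `KL` function: it is continuous, for each fixed
`t` the map `r ↦ β r t` is strictly increasing and vanishes at `0` (class `K`), and for each
fixed `r` the map `t ↦ β r t` is decreasing and tends to `0` at infinity. -/
def IsClassKL (a : ℝ≥0∞) (β : ℝ → ℝ → ℝ) : Prop :=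
  ContinuousOn (fun p : ℝ × ℝ => β p.1 p.2) (KLdom a ×ˢ Ici (0 : ℝ)) ∧
  (∀ r ∈ KLdom a, ∀ t ∈ Ici (0 : ℝ), 0 ≤ β r t) ∧
  (∀ t ∈ Ici (0 : ℝ), StrictMonoOn (fun r => β r t) (KLdom a)) ∧
  (∀ t ∈ Ici (0 : ℝ), β 0 t = 0) ∧
  (∀ r ∈ KLdom a, AntitoneOn (fun t => β r t) (Ici (0 : ℝ))) ∧
  (∀ r ∈ KLdom a, Tendsto (fun t => β r t) atTop (nhds 0))

/-- `W` is continuous on `D` and positive definite relative to `x₀`. -/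
def PosDefOn {E : Type*} [NormedAddCommGroup E] (D : Set E) (x₀ : E) (W : E → ℝ) : Prop :=
  ContinuousOn W D ∧ W x₀ = 0 ∧ ∀ x ∈ D, x ≠ x₀ → 0 < W x


/-- If `g` has one-sided derivatives `g' ≤ C` on `[a,b] ⊆ [t₀,∞)`, then `g b ≤ g a + C (b - a)`. -/
lemma decay_bound {g g' : ℝ → ℝ} {t₀ a b C : ℝ} (ht₀ : t₀ ≤ a) (hab : a ≤ b)
    (hg : ∀ t ∈ Icc a b, HasDerivWithinAt g (g' t) (Ici t₀) t)
    (hC : ∀ t ∈ Icc a b, g' t ≤ C) : g b ≤ g a + C * (b - a) := by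
  have key : AntitoneOn (fun t => g t - C * t) (Icc a b) := by
    apply antitoneOn_of_deriv_nonpos (convex_Icc a b)
    · exact ContinuousOn.sub
        (fun t ht => ((hg t ht).continuousWithinAt).mono (Icc_subset_Ici_self.trans
          (Ici_subset_Ici.2 ht₀)))
        (continuous_const.mul continuous_id).continuousOn
    · intro t ht
      rw [interior_Icc] at ht
      have h1 : HasDerivAt g (g' t) t :=
        (hg t (Ioo_subset_Icc_self ht)).hasDerivAt (Ici_mem_nhds (lt_of_le_of_lt ht₀ ht.1))
      exact ((h1.sub ((hasDerivAt_id t).const_mul C)).differentiableAt).differentiableWithinAt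
    · intro t ht
      rw [interior_Icc] at ht
      have h1 : HasDerivAt g (g' t) t :=
        (hg t (Ioo_subset_Icc_self ht)).hasDerivAt (Ici_mem_nhds (lt_of_le_of_lt ht₀ ht.1))
      have h2 : HasDerivAt (fun t => g t - C * t) (g' t - C * 1) t :=
        h1.sub ((hasDerivAt_id t).const_mul C)
      rw [h2.deriv]
      have := hC t (Ioo_subset_Icc_self ht)
      linarith
  have := key ⟨le_rfl, hab⟩ ⟨hab, le_rfl⟩ hab
  simp only [] at this
  linarith

/-- If `g` has one-sided derivatives `≤ 0` on `[a,∞)`, it is antitone there. -/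
lemma antitone_of_decay {g g' : ℝ → ℝ} {a : ℝ}
    (hg : ∀ t ∈ Ici a, HasDerivWithinAt g (g' t) (Ici a) t)
    (hC : ∀ t ∈ Ici a, g' t ≤ 0) : AntitoneOn g (Ici a) := by
  intro s hs t ht hst
  have := decay_bound hs hst (fun τ hτ => hg τ (le_trans hs hτ.1))
    (fun τ hτ => hC τ (le_trans hs hτ.1))
  linarith

/-- Chain rule along a solution curve for a time-dependent function on `[0,∞) ×ˢ D`. -/
lemma chain_rule_V {E : Type*} [NormedAddCommGroup E] [NormedSpace ℝ E]
    {D : Set E} (hD : IsOpen D) {V : ℝ → E → ℝ}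
    (hV : ContDiffOn ℝ 1 (fun p : ℝ × E => V p.1 p.2) (Ici (0:ℝ) ×ˢ D))
    {x : ℝ → E} {v : ℝ → E} {t₀ : ℝ} (ht₀ : 0 ≤ t₀)
    (hxD : ∀ t ∈ Ici t₀, x t ∈ D)
    (hx : ∀ t ∈ Ici t₀, HasDerivWithinAt x (v t) (Ici t₀) t)
    {t : ℝ} (ht : t ∈ Ici t₀) :
    HasDerivWithinAt (fun τ => V τ (x τ))
      (derivWithin (fun τ => V τ (x t)) (Ici (0:ℝ)) t + fderiv ℝ (V t) (x t) (v t))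
      (Ici t₀) t := by
  have ht0 : (0:ℝ) ≤ t := le_trans ht₀ ht
  have hmem : ((t, x t) : ℝ × E) ∈ Ici (0:ℝ) ×ˢ D := ⟨ht0, hxD t ht⟩
  have hdiff : DifferentiableWithinAt ℝ (fun p : ℝ × E => V p.1 p.2) (Ici (0:ℝ) ×ˢ D) (t, x t) :=
    (hV.differentiableOn one_ne_zero) _ hmem
  set L := fderivWithin ℝ (fun p : ℝ × E => V p.1 p.2) (Ici (0:ℝ) ×ˢ D) (t, x t) with hLdef
  have hL : HasFDerivWithinAt (fun p : ℝ × E => V p.1 p.2) L (Ici (0:ℝ) ×ˢ D) (t, x t) := by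
    apply hdiff.hasFDerivWithinAt
  -- composite along the curve
  have hp : HasDerivWithinAt (fun τ => ((τ, x τ) : ℝ × E)) ((1:ℝ), v t) (Ici t₀) t :=
    (hasDerivWithinAt_id t _).prodMk (hx t ht)
  have hmaps : MapsTo (fun τ => ((τ, x τ) : ℝ × E)) (Ici t₀) (Ici (0:ℝ) ×ˢ D) :=
    fun τ hτ => ⟨le_trans ht₀ hτ, hxD τ hτ⟩
  have hcomp : HasDerivWithinAt (fun τ => V τ (x τ)) (L (1, v t)) (Ici t₀) t := by
    have := hL.comp_hasDerivWithinAt t hp hmaps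
    simpa [Function.comp_def] using this
  -- partial derivative in t
  have hi : HasDerivWithinAt (fun τ => ((τ, x t) : ℝ × E)) ((1:ℝ), (0:E)) (Ici (0:ℝ)) t :=
    (hasDerivWithinAt_id t _).prodMk (hasDerivWithinAt_const t _ _)
  have hmaps2 : MapsTo (fun τ => ((τ, x t) : ℝ × E)) (Ici (0:ℝ)) (Ici (0:ℝ) ×ˢ D) :=
    fun τ hτ => ⟨hτ, hxD t ht⟩
  have h1 : HasDerivWithinAt (fun τ => V τ (x t)) (L (1, 0)) (Ici (0:ℝ)) t := by
    have := hL.comp_hasDerivWithinAt t hi hmaps2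
    simpa [Function.comp_def] using this
  have e1 : derivWithin (fun τ => V τ (x t)) (Ici (0:ℝ)) t = L (1, 0) :=
    h1.derivWithin (uniqueDiffOn_Ici 0 t ht0)
  -- partial derivative in x
  have hj : HasFDerivAt (fun y : E => ((t, y) : ℝ × E)) (ContinuousLinearMap.inr ℝ ℝ E) (x t) :=
    hasFDerivAt_prodMk_right t (x t)
  have hmaps3 : MapsTo (fun y : E => ((t, y) : ℝ × E)) D (Ici (0:ℝ) ×ˢ D) :=
    fun y hy => ⟨ht0, hy⟩
  have h2 : HasFDerivWithinAt (V t) (L.comp (ContinuousLinearMap.inr ℝ ℝ E)) D (x t) := by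
    have := hL.comp (x t) hj.hasFDerivWithinAt hmaps3
    simpa [Function.comp_def] using this
  have h2' : HasFDerivAt (V t) (L.comp (ContinuousLinearMap.inr ℝ ℝ E)) (x t) :=
    h2.hasFDerivAt (hD.mem_nhds (hxD t ht))
  have e2 : fderiv ℝ (V t) (x t) = L.comp (ContinuousLinearMap.inr ℝ ℝ E) := h2'.fderiv
  have e3 : L (1, v t) = L (1, 0) + L (0, v t) := by
    rw [← map_add]
    norm_num
  rw [e1, e2]
  simpa [e3] using hcomp

lemma KLdom_top : KLdom ⊤ = Ici (0:ℝ) := by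
  ext ρ
  simp [KLdom, ENNReal.ofReal_lt_top, mem_Ici]

set_option linter.unusedVariables false
set_option linter.unusedSectionVars false

lemma PosDefOn.nonneg {E : Type*} [NormedAddCommGroup E] {D : Set E} {x₀ : E} {W : E → ℝ}
    (h : PosDefOn D x₀ W) {x : E} (hx : x ∈ D) : 0 ≤ W x := by
  by_cases hx0 : x = x₀
  · simp [hx0, h.2.1]
  · exact (h.2.2 x hx hx0).le

section Constructions
variable {E : Type*} [NormedAddCommGroup E] [NormedSpace ℝ E] [ProperSpace E]
variable (W₁ W₂ W₃ : E → ℝ) (xstar : E) (r c : ℝ)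

/-- `m(d) = inf { W₁ y : d ≤ dist y xstar ≤ r }`. -/
def mlow (d : ℝ) : ℝ := sInf (W₁ '' (closedBall xstar r \ ball xstar d))

/-- `M(ρ) = sup { W₂ y : dist y xstar ≤ clamp ρ }`. -/
def Msup (ρ : ℝ) : ℝ := sSup (W₂ '' closedBall xstar (min (max ρ 0) r))

def psiF (ρ : ℝ) : ℝ :=
  sSup {d | d ∈ Icc 0 r ∧ mlow W₁ xstar r d ≤ Msup W₂ xstar r ρ}

def psiBar (ρ : ℝ) : ℝ := ρ + ∫ u in (1:ℝ)..2, psiF W₁ W₂ xstar r (ρ * u)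

def kinf (ε : ℝ) : ℝ :=
  sInf (insert 1 (W₃ '' {y | y ∈ closedBall xstar r ∧ mlow W₁ xstar r ε ≤ W₂ y}))

def PhiT (s : ℝ) : ℝ :=
  sInf (insert r {ε | ε ∈ Ioc 0 r ∧ c / kinf W₁ W₂ W₃ xstar r ε ≤ s})

def PhiBar (s : ℝ) : ℝ :=
  Real.exp (-s) + 2 * ∫ u in (1/2:ℝ)..1, PhiT W₁ W₂ W₃ xstar r c (max (s * u - 1) 0)

variable {W₁ W₂ W₃ xstar r c}
variable {D : Set E} (hD : IsOpen D) (hr : 0 < r) (hsub : closedBall xstar r ⊆ D)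
  (hW₁ : PosDefOn D xstar W₁) (hW₂ : PosDefOn D xstar W₂) (hW₃ : PosDefOn D xstar W₃)
  (hsph : (sphere xstar r).Nonempty) (hc : 0 < c)

include hsub hW₁

lemma mlow_nonneg (d : ℝ) : 0 ≤ mlow W₁ xstar r d := by
  apply Real.sInf_nonneg
  rintro x ⟨y, hy, rfl⟩
  exact hW₁.nonneg (hsub hy.1)

lemma mlow_le {d : ℝ} {y : E} (hy : y ∈ closedBall xstar r) (hy' : y ∉ ball xstar d) :
    mlow W₁ xstar r d ≤ W₁ y := by
  refine csInf_le ⟨0, ?_⟩ (mem_image_of_mem _ ⟨hy, hy'⟩)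
  rintro x ⟨z, hz, rfl⟩
  exact hW₁.nonneg (hsub hz.1)

include hr in
lemma mlow_zero : mlow W₁ xstar r 0 = 0 := by
  apply le_antisymm
  · have h1 : xstar ∈ closedBall xstar r := mem_closedBall_self hr.le
    have h := mlow_le hsub hW₁ (d := 0) h1 (by simp)
    simpa [hW₁.2.1] using h
  · exact mlow_nonneg hsub hW₁ 0

include hsph in
lemma mlow_mono : MonotoneOn (mlow W₁ xstar r) (Icc 0 r) := by
  intro d hd d' hd' hdd'
  apply csInf_le_csInf ⟨0, ?_⟩
  · obtain ⟨y, hy⟩ := hsph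
    have hyr : dist y xstar = r := mem_sphere.1 hy
    exact ⟨W₁ y, mem_image_of_mem _ ⟨mem_closedBall.2 hyr.le,
      by simp [mem_ball, hyr, not_lt.2 hd'.2]⟩⟩
  · exact image_mono (diff_subset_diff_right (ball_subset_ball hdd'))
  · rintro x ⟨z, hz, rfl⟩
    exact hW₁.nonneg (hsub hz.1)

include hsph in
lemma mlow_pos {ε : ℝ} (hε : 0 < ε) (hεr : ε ≤ r) : 0 < mlow W₁ xstar r ε := by
  set A := closedBall xstar r \ ball xstar ε with hA
  have hAc : IsCompact A := (isCompact_closedBall xstar r).diff isOpen_ball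
  have hAne : A.Nonempty := by
    obtain ⟨y, hy⟩ := hsph
    have hyr : dist y xstar = r := mem_sphere.1 hy
    exact ⟨y, mem_closedBall.2 hyr.le, by simp [mem_ball, hyr, not_lt.2 hεr]⟩
  have hAD : A ⊆ D := fun y hy => hsub hy.1
  obtain ⟨y₀, hy₀, hmin⟩ := hAc.exists_isMinOn hAne (hW₁.1.mono hAD)
  have hy₀pos : 0 < W₁ y₀ := by
    apply hW₁.2.2 y₀ (hAD hy₀)
    intro h
    rw [h] at hy₀
    exact hy₀.2 (mem_ball_self hε)
  have hle : W₁ y₀ ≤ mlow W₁ xstar r ε := by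
    apply le_csInf ⟨W₁ y₀, mem_image_of_mem _ hy₀⟩
    rintro x ⟨z, hz, rfl⟩
    exact hmin hz
  linarith


omit hsub hW₁

include hr hsub hW₂

lemma Msup_bddAbove (ρ : ℝ) : BddAbove (W₂ '' closedBall xstar (min (max ρ 0) r)) := by
  have hss : closedBall xstar (min (max ρ 0) r) ⊆ closedBall xstar r :=
    closedBall_subset_closedBall (min_le_right _ _)
  exact ((isCompact_closedBall _ _).image_of_continuousOn
    (hW₂.1.mono (hss.trans hsub))).bddAbove

lemma Msup_nonneg (ρ : ℝ) : 0 ≤ Msup W₂ xstar r ρ := by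
  have hx : xstar ∈ closedBall xstar (min (max ρ 0) r) :=
    mem_closedBall_self (le_min (le_max_right _ _) hr.le)
  have := le_csSup (Msup_bddAbove hr hsub hW₂ ρ) (mem_image_of_mem W₂ hx)
  rw [hW₂.2.1] at this
  exact this

lemma Msup_mono : Monotone (Msup W₂ xstar r) := by
  intro ρ ρ' hρ
  apply csSup_le_csSup (Msup_bddAbove hr hsub hW₂ ρ')
  · exact ⟨W₂ xstar, mem_image_of_mem W₂
      (mem_closedBall_self (le_min (le_max_right _ _) hr.le))⟩
  · exact image_mono (closedBall_subset_closedBall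
      (min_le_min (max_le_max hρ le_rfl) le_rfl))

lemma Msup_ge {y : E} (hy : y ∈ closedBall xstar r) :
    W₂ y ≤ Msup W₂ xstar r (dist y xstar) := by
  apply le_csSup (Msup_bddAbove hr hsub hW₂ _)
  apply mem_image_of_mem
  have h0 : max (dist y xstar) 0 = dist y xstar := max_eq_left dist_nonneg
  rw [mem_closedBall]
  rw [h0, min_eq_left (mem_closedBall.1 hy)]

include hW₁

lemma psiF_zero_mem (ρ : ℝ) :
    (0:ℝ) ∈ {d | d ∈ Icc 0 r ∧ mlow W₁ xstar r d ≤ Msup W₂ xstar r ρ} := by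
  refine ⟨⟨le_rfl, hr.le⟩, ?_⟩
  rw [mlow_zero hr hsub hW₁]
  exact Msup_nonneg hr hsub hW₂ ρ

lemma psiF_bddAbove (ρ : ℝ) :
    BddAbove {d | d ∈ Icc 0 r ∧ mlow W₁ xstar r d ≤ Msup W₂ xstar r ρ} :=
  ⟨r, fun d hd => hd.1.2⟩

lemma psiF_nonneg (ρ : ℝ) : 0 ≤ psiF W₁ W₂ xstar r ρ :=
  le_csSup (psiF_bddAbove hr hsub hW₁ hW₂ ρ) (psiF_zero_mem hr hsub hW₁ hW₂ ρ)

lemma psiF_le_r (ρ : ℝ) : psiF W₁ W₂ xstar r ρ ≤ r :=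
  csSup_le ⟨0, psiF_zero_mem hr hsub hW₁ hW₂ ρ⟩ (fun d hd => hd.1.2)

lemma psiF_mono : Monotone (psiF W₁ W₂ xstar r) := by
  intro ρ ρ' hρ
  apply csSup_le_csSup (psiF_bddAbove hr hsub hW₁ hW₂ ρ')
    ⟨0, psiF_zero_mem hr hsub hW₁ hW₂ ρ⟩
  intro d hd
  exact ⟨hd.1, hd.2.trans (Msup_mono hr hsub hW₂ hρ)⟩

lemma psiF_ge {d ρ : ℝ} (hd : d ∈ Icc 0 r)
    (h : mlow W₁ xstar r d ≤ Msup W₂ xstar r ρ) : d ≤ psiF W₁ W₂ xstar r ρ :=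
  le_csSup (psiF_bddAbove hr hsub hW₁ hW₂ ρ) ⟨hd, h⟩

include hD hsph in
lemma psiF_small {η : ℝ} (hη : 0 < η) :
    ∃ δ > 0, ∀ ρ ≤ δ, psiF W₁ W₂ xstar r ρ ≤ η := by
  have hxstar : xstar ∈ D := hsub (mem_closedBall_self hr.le)
  set η' := min η r with hη'
  have hη'0 : 0 < η' := lt_min hη hr
  have hη'r : η' ≤ r := min_le_right _ _
  set m := mlow W₁ xstar r η' with hm
  have hm0 : 0 < m := mlow_pos hsub hW₁ hsph hη'0 hη'r
  have hWc : ContinuousAt W₂ xstar := hW₂.1.continuousAt (hD.mem_nhds hxstar)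
  obtain ⟨δ', hδ'0, hδ'⟩ := Metric.continuousAt_iff.1 hWc (m/2) (by linarith)
  set δ := min (δ'/2) r with hδdef
  have hδ0 : 0 < δ := lt_min (by linarith) hr
  refine ⟨δ, hδ0, fun ρ hρ => ?_⟩
  have hMδ : Msup W₂ xstar r δ ≤ m / 2 := by
    apply csSup_le ⟨W₂ xstar, mem_image_of_mem W₂
      (mem_closedBall_self (le_min (le_max_right _ _) hr.le))⟩
    rintro y ⟨z, hz, rfl⟩
    have hzd : dist z xstar < δ' := by
      have h1 : dist z xstar ≤ min (max δ 0) r := mem_closedBall.1 hz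
      have h2 : min (max δ 0) r ≤ δ := by
        rw [max_eq_left hδ0.le]
        exact min_le_left _ _
      have : dist z xstar ≤ δ'/2 := (h1.trans h2).trans (min_le_left _ _)
      linarith
    have := hδ' hzd
    rw [hW₂.2.1] at this
    have := abs_lt.1 this
    linarith [this.2]
  have hMρ : Msup W₂ xstar r ρ < m := by
    calc Msup W₂ xstar r ρ ≤ Msup W₂ xstar r δ := Msup_mono hr hsub hW₂ hρ
    _ ≤ m / 2 := hMδ
    _ < m := by linarith
  apply csSup_le ⟨0, psiF_zero_mem hr hsub hW₁ hW₂ ρ⟩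
  intro d hd
  by_contra hcon
  push_neg at hcon
  have hdη' : η' < d := lt_of_le_of_lt (min_le_left _ _) hcon
  have : m ≤ mlow W₁ xstar r d :=
    mlow_mono hsub hW₁ hsph ⟨hη'0.le, hη'r⟩ hd.1 hdη'.le
  linarith [hd.2, this.trans hd.2]

include hD hsph in
lemma psiF_zero : psiF W₁ W₂ xstar r 0 = 0 := by
  refine le_antisymm ?_ (psiF_nonneg hr hsub hW₁ hW₂ 0)
  by_contra h
  push_neg at h
  obtain ⟨δ, hδ0, hδ⟩ := psiF_small hD hr hsub hW₁ hW₂ hsph (half_pos h)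
  have := hδ 0 hδ0.le
  linarith


include hD hsph in
lemma psiF_tendsto : Tendsto (psiF W₁ W₂ xstar r) (𝓝[≥] 0) (𝓝 0) := by
  rw [Metric.tendsto_nhdsWithin_nhds]
  intro η hη
  obtain ⟨δ, hδ0, hδ⟩ := psiF_small hD hr hsub hW₁ hW₂ hsph (half_pos hη)
  refine ⟨δ, hδ0, fun {ρ} hρ hd => ?_⟩
  have h1 : psiF W₁ W₂ xstar r ρ ≤ η / 2 := hδ ρ (by
    rw [Real.dist_eq] at hd
    have := abs_lt.1 hd
    linarith [this.2])
  have h2 : 0 ≤ psiF W₁ W₂ xstar r ρ := psiF_nonneg hr hsub hW₁ hW₂ ρ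
  rw [Real.dist_eq]
  rw [abs_lt]
  constructor <;> simp <;> linarith

lemma psiF_intervalIntegrable {ρ : ℝ} (hρ : 0 ≤ ρ) (a b : ℝ) :
    IntervalIntegrable (fun u => psiF W₁ W₂ xstar r (ρ * u)) MeasureTheory.volume a b := by
  apply Monotone.intervalIntegrable
  intro u₁ u₂ h
  exact psiF_mono hr hsub hW₁ hW₂ (mul_le_mul_of_nonneg_left h hρ)

lemma psiBar_ge {ρ : ℝ} (hρ : 0 ≤ ρ) : psiF W₁ W₂ xstar r ρ ≤ psiBar W₁ W₂ xstar r ρ := by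
  have h1 : (∫ u in (1:ℝ)..2, psiF W₁ W₂ xstar r ρ) ≤
      ∫ u in (1:ℝ)..2, psiF W₁ W₂ xstar r (ρ * u) := by
    apply intervalIntegral.integral_mono_on (by norm_num) intervalIntegrable_const
      (psiF_intervalIntegrable hr hsub hW₁ hW₂ hρ 1 2)
    intro u hu
    exact psiF_mono hr hsub hW₁ hW₂ (le_mul_of_one_le_right hρ hu.1)
  simp only [intervalIntegral.integral_const, smul_eq_mul] at h1
  unfold psiBar
  norm_num at h1 ⊢
  linarith

lemma psiBar_nonneg {ρ : ℝ} (hρ : 0 ≤ ρ) : 0 ≤ psiBar W₁ W₂ xstar r ρ := by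
  have h1 : (0:ℝ) ≤ ∫ u in (1:ℝ)..2, psiF W₁ W₂ xstar r (ρ * u) :=
    intervalIntegral.integral_nonneg (by norm_num)
      (fun u _ => psiF_nonneg hr hsub hW₁ hW₂ _)
  unfold psiBar
  linarith

lemma psiBar_strictMono : StrictMonoOn (psiBar W₁ W₂ xstar r) (Ici 0) := by
  intro ρ hρ ρ' hρ' hlt
  have h1 : (∫ u in (1:ℝ)..2, psiF W₁ W₂ xstar r (ρ * u)) ≤
      ∫ u in (1:ℝ)..2, psiF W₁ W₂ xstar r (ρ' * u) := by
    apply intervalIntegral.integral_mono_on (by norm_num)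
      (psiF_intervalIntegrable hr hsub hW₁ hW₂ hρ 1 2)
      (psiF_intervalIntegrable hr hsub hW₁ hW₂ (le_trans hρ hlt.le) 1 2)
    intro u hu
    exact psiF_mono hr hsub hW₁ hW₂
      (mul_le_mul_of_nonneg_right hlt.le (by linarith [hu.1]))
  unfold psiBar
  have : ρ < ρ' := hlt
  linarith

include hD hsph in
lemma psiBar_zero : psiBar W₁ W₂ xstar r 0 = 0 := by
  unfold psiBar
  simp [psiF_zero hD hr hsub hW₁ hW₂ hsph]

include hD hsph in
lemma psiBar_contOn : ContinuousOn (psiBar W₁ W₂ xstar r) (Ici 0) := by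
  set ψ := psiF W₁ W₂ xstar r with hψ
  have hψmono : Monotone ψ := psiF_mono hr hsub hW₁ hW₂
  have hψint : ∀ a b : ℝ, IntervalIntegrable ψ MeasureTheory.volume a b :=
    fun a b => hψmono.intervalIntegrable
  set G : ℝ → ℝ := fun y => ∫ x in (0:ℝ)..y, ψ x with hG
  have hGcont : Continuous G := intervalIntegral.continuous_primitive hψint 0
  intro ρ₀ hρ₀
  rcases eq_or_lt_of_le (mem_Ici.1 hρ₀) with h0 | h0
  · -- at 0, squeeze
    rw [Metric.continuousWithinAt_iff]
    intro η hη
    obtain ⟨δ, hδ0, hδ⟩ := psiF_small hD hr hsub hW₁ hW₂ hsph (by positivity : 0 < η/4)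
    refine ⟨min (δ/2) (η/4), by positivity, fun {ρ} hρ hd => ?_⟩
    have hρ0 : 0 ≤ ρ := hρ
    rw [Real.dist_eq, ← h0, sub_zero] at hd
    have hρδ : ρ < min (δ/2) (η/4) := by
      have := abs_lt.1 hd
      linarith [this.2]
    have hIub : (∫ u in (1:ℝ)..2, ψ (ρ * u)) ≤ ψ (2 * ρ) := by
      have : (∫ u in (1:ℝ)..2, ψ (ρ * u)) ≤ ∫ u in (1:ℝ)..2, ψ (2 * ρ) := by
        apply intervalIntegral.integral_mono_on (by norm_num)
          (psiF_intervalIntegrable hr hsub hW₁ hW₂ hρ0 1 2) intervalIntegrable_const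
        intro u hu
        apply hψmono
        rw [mul_comm 2 ρ]
        exact mul_le_mul_of_nonneg_left hu.2 hρ0
      simp only [intervalIntegral.integral_const, smul_eq_mul] at this
      linarith
    have h2 : ψ (2 * ρ) ≤ η/4 := hδ _ (by
      have : ρ < δ/2 := lt_of_lt_of_le hρδ (min_le_left _ _)
      linarith)
    have hIlb : (0:ℝ) ≤ ∫ u in (1:ℝ)..2, ψ (ρ * u) :=
      intervalIntegral.integral_nonneg (by norm_num)
        (fun u _ => psiF_nonneg hr hsub hW₁ hW₂ _)
    have hps0 : psiBar W₁ W₂ xstar r 0 = 0 := psiBar_zero hD hr hsub hW₁ hW₂ hsph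
    rw [← h0, hps0, Real.dist_eq, sub_zero]
    have hub : psiBar W₁ W₂ xstar r ρ ≤ ρ + η/4 := by
      unfold psiBar
      linarith [hIub.trans h2]
    have hnn : 0 ≤ psiBar W₁ W₂ xstar r ρ := psiBar_nonneg hr hsub hW₁ hW₂ hρ0
    rw [abs_of_nonneg hnn]
    have : ρ < η/4 := lt_of_lt_of_le hρδ (min_le_right _ _)
    linarith
  · -- at ρ₀ > 0, use change of variables
    apply ContinuousAt.continuousWithinAt
    have hev : (fun ρ => psiBar W₁ W₂ xstar r ρ) =ᶠ[𝓝 ρ₀]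
        (fun ρ => ρ + ρ⁻¹ * (G (2 * ρ) - G ρ)) := by
      filter_upwards [Ioi_mem_nhds h0] with ρ hρ
      have hρ0 : ρ ≠ 0 := ne_of_gt hρ
      unfold psiBar
      congr 1
      rw [intervalIntegral.integral_comp_mul_left (fun x => ψ x) hρ0]
      have hsplit : (∫ x in (0:ℝ)..(ρ*1), ψ x) + (∫ x in (ρ*1)..(ρ*2), ψ x)
          = ∫ x in (0:ℝ)..(ρ*2), ψ x :=
        intervalIntegral.integral_add_adjacent_intervals (hψint _ _) (hψint _ _)
      have : (∫ x in (ρ*1)..(ρ*2), ψ x) = G (2*ρ) - G ρ := by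
        rw [hG]
        simp only [mul_one] at hsplit ⊢
        rw [mul_comm ρ 2] at hsplit ⊢
        linarith
      rw [this]
      simp [smul_eq_mul]
    have hca : ContinuousAt (fun ρ : ℝ => ρ + ρ⁻¹ * (G (2 * ρ) - G ρ)) ρ₀ := by
      apply continuousAt_id.add
      apply (continuousAt_inv₀ (ne_of_gt h0)).mul
      exact ((hGcont.comp (continuous_const.mul continuous_id)).continuousAt).sub
        hGcont.continuousAt
    exact hca.congr hev.symm


omit hW₂
include hW₃

lemma kinf_le {ε : ℝ} {y : E} (hy : y ∈ closedBall xstar r)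
    (h : mlow W₁ xstar r ε ≤ W₂ y) : kinf W₁ W₂ W₃ xstar r ε ≤ W₃ y := by
  refine csInf_le ⟨0, ?_⟩ (mem_insert_of_mem _ (mem_image_of_mem _ ⟨hy, h⟩))
  rintro x (rfl | ⟨z, hz, rfl⟩)
  · norm_num
  · exact hW₃.nonneg (hsub hz.1)

include hD hr hW₂ hsph in
lemma kinf_pos {ε : ℝ} (hε : 0 < ε) (hεr : ε ≤ r) : 0 < kinf W₁ W₂ W₃ xstar r ε := by
  have hxstar : xstar ∈ D := hsub (mem_closedBall_self hr.le)
  set m := mlow W₁ xstar r ε with hm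
  have hm0 : 0 < m := mlow_pos hsub hW₁ hsph hε hεr
  have hWc : ContinuousAt W₂ xstar := hW₂.1.continuousAt (hD.mem_nhds hxstar)
  obtain ⟨δ', hδ'0, hδ'⟩ := Metric.continuousAt_iff.1 hWc m hm0
  set δ := min (δ'/2) r with hδdef
  have hδ0 : 0 < δ := lt_min (by linarith) hr
  set A := closedBall xstar r \ ball xstar δ with hA
  have hAc : IsCompact A := (isCompact_closedBall xstar r).diff isOpen_ball
  have hAne : A.Nonempty := by
    obtain ⟨y, hy⟩ := hsph
    have hyr : dist y xstar = r := mem_sphere.1 hy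
    exact ⟨y, mem_closedBall.2 hyr.le, by simp [mem_ball, hyr, not_lt.2 (show δ ≤ r from min_le_right (δ'/2) r)]⟩
  have hAD : A ⊆ D := fun y hy => hsub hy.1
  obtain ⟨y₁, hy₁, hmin⟩ := hAc.exists_isMinOn hAne (hW₃.1.mono hAD)
  have hy₁pos : 0 < W₃ y₁ := by
    apply hW₃.2.2 y₁ (hAD hy₁)
    intro h
    rw [h] at hy₁
    exact hy₁.2 (mem_ball_self hδ0)
  have hbound : min 1 (W₃ y₁) ≤ kinf W₁ W₂ W₃ xstar r ε := by
    apply le_csInf ⟨1, mem_insert _ _⟩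
    rintro b (rfl | ⟨z, hz, rfl⟩)
    · exact min_le_left _ _
    · refine le_trans (min_le_right _ _) (hmin ?_)
      refine ⟨hz.1, fun hzball => ?_⟩
      have h1 : dist z xstar < δ' := by
        have := mem_ball.1 hzball
        have h2 : δ ≤ δ'/2 := min_le_left _ _
        linarith
      have := hδ' h1
      rw [hW₂.2.1] at this
      have := (abs_lt.1 this).2
      rw [sub_zero] at this
      linarith [hz.2]
  exact lt_of_lt_of_le (lt_min one_pos hy₁pos) hbound

include hr in
lemma PhiT_bddBelow (s : ℝ) :
    BddBelow (insert r {ε | ε ∈ Ioc 0 r ∧ c / kinf W₁ W₂ W₃ xstar r ε ≤ s}) := by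
  refine ⟨0, ?_⟩
  rintro b (rfl | ⟨hb, _⟩)
  · exact hr.le
  · exact hb.1.le

include hr in
lemma PhiT_nonneg (s : ℝ) : 0 ≤ PhiT W₁ W₂ W₃ xstar r c s := by
  apply le_csInf ⟨r, mem_insert _ _⟩
  rintro b (rfl | ⟨hb, _⟩)
  · exact hr.le
  · exact hb.1.le

include hr in
lemma PhiT_le_r (s : ℝ) : PhiT W₁ W₂ W₃ xstar r c s ≤ r :=
  csInf_le (PhiT_bddBelow hr hsub hW₁ hW₃ s) (mem_insert _ _)

include hr in
lemma PhiT_le {ε s : ℝ} (hε : ε ∈ Ioc 0 r) (h : c / kinf W₁ W₂ W₃ xstar r ε ≤ s) :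
    PhiT W₁ W₂ W₃ xstar r c s ≤ ε :=
  csInf_le (PhiT_bddBelow hr hsub hW₁ hW₃ s) (mem_insert_of_mem _ ⟨hε, h⟩)

include hr in
lemma PhiT_ge {s b : ℝ} (hb : b ≤ r)
    (h : ∀ ε, ε ∈ Ioc 0 r → c / kinf W₁ W₂ W₃ xstar r ε ≤ s → b ≤ ε) :
    b ≤ PhiT W₁ W₂ W₃ xstar r c s := by
  apply le_csInf ⟨r, mem_insert _ _⟩
  rintro x (rfl | ⟨hx, hT⟩)
  · exact hb
  · exact h x hx hT

include hr in
lemma PhiT_anti : Antitone (PhiT W₁ W₂ W₃ xstar r c) := by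
  intro s s' hss'
  apply csInf_le_csInf (PhiT_bddBelow hr hsub hW₁ hW₃ s') ⟨r, mem_insert _ _⟩
  apply insert_subset_insert
  intro ε hε
  exact ⟨hε.1, hε.2.trans hss'⟩

include hD hr hW₂ hsph hc in
lemma PhiT_tendsto : Tendsto (PhiT W₁ W₂ W₃ xstar r c) atTop (𝓝 0) := by
  rw [tendsto_order]
  constructor
  · intro b hb
    exact Eventually.of_forall (fun s => lt_of_lt_of_le hb (PhiT_nonneg hr hsub hW₁ hW₃ s))
  · intro b hb
    set ε := min (b/2) r with hε
    have hε0 : 0 < ε := lt_min (by linarith) hr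
    have hεr : ε ≤ r := min_le_right _ _
    have hk : 0 < kinf W₁ W₂ W₃ xstar r ε := kinf_pos hD hr hsub hW₁ hW₂ hW₃ hsph hε0 hεr
    filter_upwards [Ici_mem_atTop (c / kinf W₁ W₂ W₃ xstar r ε)] with s hs
    have := PhiT_le hr hsub hW₁ hW₃ ⟨hε0, hεr⟩ hs
    have hεb : ε ≤ b/2 := min_le_left _ _
    linarith


lemma Phi1_anti : Antitone (fun σ => PhiT W₁ W₂ W₃ xstar r c (max (σ - 1) 0)) := by
  intro a b hab
  exact PhiT_anti hr hsub hW₁ hW₃ (max_le_max (sub_le_sub_right hab 1) le_rfl)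

include hr in
lemma Phi1_int {s : ℝ} (hs : 0 ≤ s) (a b : ℝ) :
    IntervalIntegrable (fun u => PhiT W₁ W₂ W₃ xstar r c (max (s * u - 1) 0))
      MeasureTheory.volume a b := by
  apply Antitone.intervalIntegrable
  intro u₁ u₂ h
  exact Phi1_anti hr hsub hW₁ hW₃ (mul_le_mul_of_nonneg_left h hs)

include hr in
lemma PhiBar_pos (s : ℝ) : 0 < PhiBar W₁ W₂ W₃ xstar r c s := by
  have h1 : (0:ℝ) ≤ ∫ u in (1/2:ℝ)..1, PhiT W₁ W₂ W₃ xstar r c (max (s * u - 1) 0) :=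
    intervalIntegral.integral_nonneg (by norm_num)
      (fun u _ => PhiT_nonneg hr hsub hW₁ hW₃ _)
  unfold PhiBar
  have := Real.exp_pos (-s)
  linarith

include hr in
lemma PhiBar_ge {s : ℝ} (hs : 0 ≤ s) :
    PhiT W₁ W₂ W₃ xstar r c s ≤ PhiBar W₁ W₂ W₃ xstar r c s := by
  have h1 : (∫ u in (1/2:ℝ)..1, PhiT W₁ W₂ W₃ xstar r c (max (s - 1) 0)) ≤
      ∫ u in (1/2:ℝ)..1, PhiT W₁ W₂ W₃ xstar r c (max (s * u - 1) 0) := by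
    apply intervalIntegral.integral_mono_on (by norm_num) intervalIntegrable_const
      (Phi1_int hr hsub hW₁ hW₃ hs _ _)
    intro u hu
    apply Phi1_anti hr hsub hW₁ hW₃
    calc s * u ≤ s * 1 := mul_le_mul_of_nonneg_left hu.2 hs
    _ = s := mul_one s
  simp only [intervalIntegral.integral_const, smul_eq_mul] at h1
  have h2 : PhiT W₁ W₂ W₃ xstar r c s ≤ PhiT W₁ W₂ W₃ xstar r c (max (s - 1) 0) := by
    apply PhiT_anti hr hsub hW₁ hW₃
    apply max_le (by linarith) hs
  have h3 := Real.exp_pos (-s)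
  unfold PhiBar
  norm_num at h1 ⊢
  linarith

include hr in
lemma PhiBar_anti : AntitoneOn (PhiBar W₁ W₂ W₃ xstar r c) (Ici 0) := by
  intro s hs s' hs' hss'
  have h1 : (∫ u in (1/2:ℝ)..1, PhiT W₁ W₂ W₃ xstar r c (max (s' * u - 1) 0)) ≤
      ∫ u in (1/2:ℝ)..1, PhiT W₁ W₂ W₃ xstar r c (max (s * u - 1) 0) := by
    apply intervalIntegral.integral_mono_on (by norm_num)
      (Phi1_int hr hsub hW₁ hW₃ hs' _ _) (Phi1_int hr hsub hW₁ hW₃ (mem_Ici.1 hs) _ _)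
    intro u hu
    apply Phi1_anti hr hsub hW₁ hW₃
    exact mul_le_mul_of_nonneg_right hss' (by linarith [hu.1])
  have h2 : Real.exp (-s') ≤ Real.exp (-s) := Real.exp_le_exp.2 (by linarith)
  unfold PhiBar
  linarith

include hD hr hW₂ hsph hc in
lemma PhiBar_tendsto : Tendsto (PhiBar W₁ W₂ W₃ xstar r c) atTop (𝓝 0) := by
  have hup : ∀ s : ℝ, 0 ≤ s → PhiBar W₁ W₂ W₃ xstar r c s ≤
      Real.exp (-s) + PhiT W₁ W₂ W₃ xstar r c (max (s/2 - 1) 0) := by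
    intro s hs
    have h1 : (∫ u in (1/2:ℝ)..1, PhiT W₁ W₂ W₃ xstar r c (max (s * u - 1) 0)) ≤
        ∫ u in (1/2:ℝ)..1, PhiT W₁ W₂ W₃ xstar r c (max (s/2 - 1) 0) := by
      apply intervalIntegral.integral_mono_on (by norm_num)
        (Phi1_int hr hsub hW₁ hW₃ hs _ _) intervalIntegrable_const
      intro u hu
      apply Phi1_anti hr hsub hW₁ hW₃
      calc s / 2 = s * (1/2) := by ring
      _ ≤ s * u := mul_le_mul_of_nonneg_left hu.1 hs
    simp only [intervalIntegral.integral_const, smul_eq_mul] at h1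
    unfold PhiBar
    norm_num at h1 ⊢
    linarith
  have hlow : ∀ s : ℝ, 0 ≤ PhiBar W₁ W₂ W₃ xstar r c s :=
    fun s => (PhiBar_pos hr hsub hW₁ hW₃ s).le
  have hmax : Tendsto (fun s : ℝ => max (s/2 - 1) 0) atTop atTop := by
    apply tendsto_atTop_mono (fun s => le_max_left _ _)
    apply tendsto_atTop_add_const_right
    exact (tendsto_id.atTop_div_const two_pos)
  have hPhiT := (PhiT_tendsto hD hr hsub hW₁ hW₂ hW₃ hsph hc).comp hmax
  have hexp := Real.tendsto_exp_neg_atTop_nhds_zero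
  have hsum : Tendsto (fun s : ℝ => Real.exp (-s) +
      PhiT W₁ W₂ W₃ xstar r c (max (s/2 - 1) 0)) atTop (𝓝 0) := by
    have := hexp.add hPhiT
    simpa using this
  apply tendsto_of_tendsto_of_tendsto_of_le_of_le' tendsto_const_nhds hsum
  · exact Eventually.of_forall hlow
  · filter_upwards [Ici_mem_atTop (0:ℝ)] with s hs
    exact hup s hs

include hD hr hW₂ hsph hc in
lemma PhiBar_contOn : ContinuousOn (PhiBar W₁ W₂ W₃ xstar r c) (Ici 0) := by
  set Φ1 : ℝ → ℝ := fun σ => PhiT W₁ W₂ W₃ xstar r c (max (σ - 1) 0) with hΦ1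
  have hΦanti : Antitone Φ1 := Phi1_anti hr hsub hW₁ hW₃
  have hΦint : ∀ a b : ℝ, IntervalIntegrable Φ1 MeasureTheory.volume a b :=
    fun a b => hΦanti.intervalIntegrable
  set G : ℝ → ℝ := fun y => ∫ x in (0:ℝ)..y, Φ1 x with hG
  have hGcont : Continuous G := intervalIntegral.continuous_primitive hΦint 0
  have hEq : ∀ s : ℝ, 0 ≤ s → s < 1 → PhiBar W₁ W₂ W₃ xstar r c s =
      Real.exp (-s) + PhiT W₁ W₂ W₃ xstar r c 0 := by
    intro s hs hs1
    unfold PhiBar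
    have : (∫ u in (1/2:ℝ)..1, PhiT W₁ W₂ W₃ xstar r c (max (s * u - 1) 0)) =
        ∫ u in (1/2:ℝ)..1, PhiT W₁ W₂ W₃ xstar r c 0 := by
      apply intervalIntegral.integral_congr
      intro u hu
      rw [uIcc_of_le (by norm_num : (1/2:ℝ) ≤ 1)] at hu
      have h1 : s * u ≤ s := by
        calc s * u ≤ s * 1 := mul_le_mul_of_nonneg_left hu.2 hs
        _ = s := mul_one s
      have hmax : max (s * u - 1) 0 = 0 := max_eq_right (by linarith)
      show PhiT W₁ W₂ W₃ xstar r c (max (s * u - 1) 0) = _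
      rw [hmax]
    rw [this]
    simp only [intervalIntegral.integral_const, smul_eq_mul]
    ring
  intro s₀ hs₀
  rcases lt_or_ge s₀ 1 with h1 | h1
  · -- eventually equal to a continuous function within Ici 0
    have hev : (fun s => PhiBar W₁ W₂ W₃ xstar r c s) =ᶠ[𝓝[Ici 0] s₀]
        (fun s => Real.exp (-s) + PhiT W₁ W₂ W₃ xstar r c 0) := by
      filter_upwards [self_mem_nhdsWithin, mem_nhdsWithin_of_mem_nhds (Iio_mem_nhds h1)]
        with s hs hs1
      exact hEq s hs hs1
    have hg : ContinuousWithinAt (fun s => Real.exp (-s) + PhiT W₁ W₂ W₃ xstar r c 0)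
        (Ici 0) s₀ :=
      ((Real.continuous_exp.comp continuous_neg).add continuous_const).continuousWithinAt
    exact hg.congr_of_eventuallyEq hev (hEq s₀ hs₀ h1)
  · -- s₀ ≥ 1 > 0, use change of variables
    have h0 : (0:ℝ) < s₀ := lt_of_lt_of_le one_pos h1
    apply ContinuousAt.continuousWithinAt
    have hev : (fun s => PhiBar W₁ W₂ W₃ xstar r c s) =ᶠ[𝓝 s₀]
        (fun s => Real.exp (-s) + 2 * (s⁻¹ * (G s - G (s/2)))) := by
      filter_upwards [Ioi_mem_nhds h0] with s hs
      have hs0 : s ≠ 0 := ne_of_gt hs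
      unfold PhiBar
      congr 1
      have hcv : (∫ u in (1/2:ℝ)..1, Φ1 (s * u)) = s⁻¹ • ∫ x in s*(1/2)..s*1, Φ1 x :=
        intervalIntegral.integral_comp_mul_left Φ1 hs0
      have hsplit : (∫ x in (0:ℝ)..(s*(1/2)), Φ1 x) + (∫ x in (s*(1/2))..(s*1), Φ1 x)
          = ∫ x in (0:ℝ)..(s*1), Φ1 x :=
        intervalIntegral.integral_add_adjacent_intervals (hΦint _ _) (hΦint _ _)
      have h2 : (∫ x in (s*(1/2))..(s*1), Φ1 x) = G s - G (s/2) := by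
        have e1 : s * (1/2) = s / 2 := by ring
        have e2 : s * 1 = s := mul_one s
        have hGs : G s = ∫ x in (0:ℝ)..(s*1), Φ1 x := by rw [e2]
        have hGs2 : G (s/2) = ∫ x in (0:ℝ)..(s*(1/2)), Φ1 x := by rw [e1]
        rw [hGs, hGs2]
        linarith
      calc (2:ℝ) * ∫ u in (1/2:ℝ)..1, PhiT W₁ W₂ W₃ xstar r c (max (s * u - 1) 0)
          = 2 * ∫ u in (1/2:ℝ)..1, Φ1 (s * u) := by rfl
      _ = 2 * (s⁻¹ * (G s - G (s/2))) := by rw [hcv, h2, smul_eq_mul]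
    have hca : ContinuousAt (fun s : ℝ => Real.exp (-s) + 2 * (s⁻¹ * (G s - G (s/2)))) s₀ := by
      apply ContinuousAt.add
      · exact (Real.continuous_exp.comp continuous_neg).continuousAt
      · apply continuousAt_const.mul
        apply (continuousAt_inv₀ (ne_of_gt h0)).mul
        exact (hGcont.continuousAt).sub
          ((hGcont.comp (continuous_id.div_const 2)).continuousAt)
    exact hca.congr hev.symm

end Constructions


theorem stmt_0
    {n : ℕ} (hn : 1 ≤ n)
    (D : Set (EuclideanSpace ℝ (Fin n))) (hD : IsOpen D)
    (xstar : EuclideanSpace ℝ (Fin n)) (hxstar : xstar ∈ D)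
    (f : ℝ → EuclideanSpace ℝ (Fin n) → EuclideanSpace ℝ (Fin n))
    -- `f` is continuous in `t`
    (hf_t : ∀ x ∈ D, ContinuousOn (fun t => f t x) (Ici (0 : ℝ)))
    -- `f` is locally Lipschitz in `x`
    (hf_x : ∀ t ∈ Ici (0 : ℝ), ∀ x₀ ∈ D, ∃ K : ℝ≥0, ∃ ε > (0 : ℝ),
      LipschitzOnWith K (f t) (ball x₀ ε ∩ D))
    -- `xstar` is an equilibrium point
    (hf_eq : ∀ t ∈ Ici (0 : ℝ), f t xstar = 0)
    (V : ℝ → EuclideanSpace ℝ (Fin n) → ℝ)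
    -- `V` is continuously differentiable on `[0, ∞) × D`
    (hV : ContDiffOn ℝ 1 (fun p : ℝ × EuclideanSpace ℝ (Fin n) => V p.1 p.2)
      (Ici (0 : ℝ) ×ˢ D))
    (W₁ W₂ W₃ : EuclideanSpace ℝ (Fin n) → ℝ)
    (hW₁ : PosDefOn D xstar W₁) (hW₂ : PosDefOn D xstar W₂) (hW₃ : PosDefOn D xstar W₃)
    -- `W₁ x ≤ V t x ≤ W₂ x`
    (hVbound : ∀ t ∈ Ici (0 : ℝ), ∀ x ∈ D, W₁ x ≤ V t x ∧ V t x ≤ W₂ x)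
    -- `∂V/∂t + ∇ₓV ⬝ f ≤ -W₃`
    (hVderiv : ∀ t ∈ Ici (0 : ℝ), ∀ x ∈ D,
      derivWithin (fun τ => V τ x) (Ici (0 : ℝ)) t + fderiv ℝ (V t) x (f t x) ≤ -W₃ x)
    -- `r ∈ (0, r₀)` where `r₀ = sup {r > 0 : ball xstar r ⊆ D}`
    (r : ℝ) (hr : 0 < r) (hrlt : ∃ r' : ℝ, r < r' ∧ ball xstar r' ⊆ D)
    -- `0 < c < min {W₁ x : ‖x - xstar‖ = r}`
    (c : ℝ) (hc : 0 < c) (hcmin : ∀ x ∈ sphere xstar r, c < W₁ x) :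
    ∃ β : ℝ → ℝ → ℝ, IsClassKL ⊤ β ∧
      ∀ (t₀ : ℝ) (x : ℝ → EuclideanSpace ℝ (Fin n)), 0 ≤ t₀ →
        (∀ t ∈ Ici t₀, x t ∈ D) →
        (∀ t ∈ Ici t₀, HasDerivWithinAt x (f t (x t)) (Ici t₀) t) →
        x t₀ ∈ closure (ball xstar r) → W₂ (x t₀) ≤ c →
        ∀ t ∈ Ici t₀, dist (x t) xstar ≤ β (dist (x t₀) xstar) (t - t₀) := by
  classical
  obtain ⟨r', hrr', hball⟩ := hrlt
  have hsub : closedBall xstar r ⊆ D := (closedBall_subset_ball hrr').trans hball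
  haveI : Nonempty (Fin n) := ⟨⟨0, hn⟩⟩
  haveI : Nontrivial (EuclideanSpace ℝ (Fin n)) := by
    refine ⟨⟨EuclideanSpace.single (⟨0, hn⟩ : Fin n) (1:ℝ), 0, ?_⟩⟩
    intro h
    have := congrArg (fun v : EuclideanSpace ℝ (Fin n) => v (⟨0, hn⟩ : Fin n)) h
    simp [EuclideanSpace.single_apply] at this
  have hsph : (sphere xstar r).Nonempty := NormedSpace.sphere_nonempty.2 hr.le
  refine ⟨fun ρ s => Real.sqrt (psiBar W₁ W₂ xstar r ρ) *
      Real.sqrt (PhiBar W₁ W₂ W₃ xstar r c s), ?_, ?_⟩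
  · -- class KL
    refine ⟨?_, ?_, ?_, ?_, ?_, ?_⟩
    · rw [KLdom_top]
      apply ContinuousOn.mul
      · apply Real.continuous_sqrt.comp_continuousOn
        exact (psiBar_contOn hD hr hsub hW₁ hW₂ hsph).comp
          continuousOn_fst (fun p hp => hp.1)
      · apply Real.continuous_sqrt.comp_continuousOn
        exact (PhiBar_contOn hD hr hsub hW₁ hW₂ hW₃ hsph hc).comp
          continuousOn_snd (fun p hp => hp.2)
    · intro ρ _ t _
      positivity
    · intro t ht
      rw [KLdom_top]
      intro ρ hρ ρ' hρ' hlt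
      have h1 : Real.sqrt (psiBar W₁ W₂ xstar r ρ) < Real.sqrt (psiBar W₁ W₂ xstar r ρ') := by
        apply Real.sqrt_lt_sqrt (psiBar_nonneg hr hsub hW₁ hW₂ hρ)
        exact psiBar_strictMono hr hsub hW₁ hW₂ hρ hρ' hlt
      have h2 : 0 < Real.sqrt (PhiBar W₁ W₂ W₃ xstar r c t) :=
        Real.sqrt_pos.2 (PhiBar_pos hr hsub hW₁ hW₃ t)
      exact mul_lt_mul_of_pos_right h1 h2
    · intro t _
      show Real.sqrt (psiBar W₁ W₂ xstar r 0) * _ = 0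
      rw [psiBar_zero hD hr hsub hW₁ hW₂ hsph, Real.sqrt_zero, zero_mul]
    · intro ρ hρ
      rw [KLdom_top] at hρ
      intro s hs s' hs' hss'
      apply mul_le_mul_of_nonneg_left _ (Real.sqrt_nonneg _)
      exact Real.sqrt_le_sqrt (PhiBar_anti hr hsub hW₁ hW₃ hs hs' hss')
    · intro ρ _
      have h1 : Tendsto (fun s => Real.sqrt (PhiBar W₁ W₂ W₃ xstar r c s)) atTop (𝓝 0) := by
        have := (Real.continuous_sqrt.tendsto 0).comp
          (PhiBar_tendsto hD hr hsub hW₁ hW₂ hW₃ hsph hc)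
        simpa [Function.comp_def, Real.sqrt_zero] using this
      have := h1.const_mul (Real.sqrt (psiBar W₁ W₂ xstar r ρ))
      simpa using this
  · -- solution estimate
    intro t₀ x ht₀ hxD hxode hx0 hW2c
    set g : ℝ → ℝ := fun τ => V τ (x τ) with hgdef
    set g' : ℝ → ℝ := fun τ => derivWithin (fun σ => V σ (x τ)) (Ici (0:ℝ)) τ +
      fderiv ℝ (V τ) (x τ) (f τ (x τ)) with hg'def
    have hg : ∀ τ ∈ Ici t₀, HasDerivWithinAt g (g' τ) (Ici t₀) τ :=
      fun τ hτ => chain_rule_V hD hV ht₀ hxD hxode hτ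
    have hg'le : ∀ τ ∈ Ici t₀, g' τ ≤ -W₃ (x τ) :=
      fun τ hτ => hVderiv τ (le_trans ht₀ hτ) (x τ) (hxD τ hτ)
    have hW₃nn : ∀ τ ∈ Ici t₀, 0 ≤ W₃ (x τ) := fun τ hτ => hW₃.nonneg (hxD τ hτ)
    have hganti : AntitoneOn g (Ici t₀) :=
      antitone_of_decay hg (fun τ hτ => le_trans (hg'le τ hτ) (by linarith [hW₃nn τ hτ]))
    have hxcont : ContinuousOn x (Ici t₀) :=
      fun τ hτ => (hxode τ hτ).continuousWithinAt
    have hx0' : x t₀ ∈ closedBall xstar r := by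
      rwa [closure_ball xstar hr.ne'] at hx0
    have hglb : ∀ τ ∈ Ici t₀, W₁ (x τ) ≤ g τ :=
      fun τ hτ => (hVbound τ (le_trans ht₀ hτ) (x τ) (hxD τ hτ)).1
    have hgub : ∀ τ ∈ Ici t₀, g τ ≤ W₂ (x τ) :=
      fun τ hτ => (hVbound τ (le_trans ht₀ hτ) (x τ) (hxD τ hτ)).2
    have hgt₀c : g t₀ ≤ c := le_trans (hgub t₀ (le_refl t₀)) hW2c
    have hdist0 : dist (x t₀) xstar < r := by
      rcases lt_or_eq_of_le (mem_closedBall.1 hx0') with h | h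
      · exact h
      · exfalso
        have h1 : c < W₁ (x t₀) := hcmin _ (mem_sphere.2 h)
        have h2 := hglb t₀ (le_refl t₀)
        linarith [hgt₀c]
    have htrap : ∀ τ ∈ Ici t₀, dist (x τ) xstar < r := by
      by_contra h
      push_neg at h
      obtain ⟨τ₁, hτ₁, hge⟩ := h
      have hcont : ContinuousOn (fun τ => dist (x τ) xstar) (Icc t₀ τ₁) :=
        (continuous_id.dist continuous_const).comp_continuousOn
          (hxcont.mono Icc_subset_Ici_self)
      have hmem : r ∈ Icc (dist (x t₀) xstar) (dist (x τ₁) xstar) := ⟨hdist0.le, hge⟩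
      obtain ⟨τ₂, hτ₂, hd⟩ := intermediate_value_Icc hτ₁ hcont hmem
      have hτ₂' : τ₂ ∈ Ici t₀ := hτ₂.1
      have h1 : c < W₁ (x τ₂) := hcmin _ (mem_sphere.2 hd)
      have h2 : W₁ (x τ₂) ≤ g τ₂ := hglb τ₂ hτ₂'
      have h3 : g τ₂ ≤ g t₀ := hganti Set.self_mem_Ici hτ₂' hτ₂.1
      linarith
    have hatt : ∀ ε, ε ∈ Ioc 0 r → ∀ τ ∈ Ici t₀,
        c / kinf W₁ W₂ W₃ xstar r ε ≤ τ - t₀ → dist (x τ) xstar < ε := by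
      intro ε hε τ hτ hT
      have hk : 0 < kinf W₁ W₂ W₃ xstar r ε :=
        kinf_pos hD hr hsub hW₁ hW₂ hW₃ hsph hε.1 hε.2
      by_contra hcon
      push_neg at hcon
      have hm : mlow W₁ xstar r ε ≤ g τ := by
        have h1 : mlow W₁ xstar r ε ≤ W₁ (x τ) :=
          mlow_le hsub hW₁ (mem_closedBall.2 (htrap τ hτ).le)
            (fun hb => absurd (mem_ball.1 hb) (not_lt.2 hcon))
        exact h1.trans (hglb τ hτ)
      have hW₃lb : ∀ σ ∈ Icc t₀ τ, kinf W₁ W₂ W₃ xstar r ε ≤ W₃ (x σ) := by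
        intro σ hσ
        apply kinf_le hr hsub hW₁ hW₃ (mem_closedBall.2 (htrap σ hσ.1).le)
        have h1 : g σ ≥ g τ := hganti hσ.1 hτ hσ.2
        have h2 := hgub σ hσ.1
        linarith [hm]
      have hτt₀ : t₀ ≤ τ := hτ
      have hdecay : g τ ≤ g t₀ + (-(kinf W₁ W₂ W₃ xstar r ε)) * (τ - t₀) :=
        decay_bound (le_refl t₀) hτt₀ (fun σ hσ => hg σ hσ.1)
          (fun σ hσ => le_trans (hg'le σ hσ.1) (neg_le_neg (hW₃lb σ hσ)))
      have hmpos : 0 < mlow W₁ xstar r ε := mlow_pos hsub hW₁ hsph hε.1 hε.2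
      have hkT : c ≤ kinf W₁ W₂ W₃ xstar r ε * (τ - t₀) := by
        have h1 := mul_le_mul_of_nonneg_left hT hk.le
        have h2 : kinf W₁ W₂ W₃ xstar r ε * (c / kinf W₁ W₂ W₃ xstar r ε) = c := by
          field_simp
        linarith
      linarith
    intro t ht
    have htt₀ : t₀ ≤ t := ht
    have hb1 : dist (x t) xstar ≤ psiF W₁ W₂ xstar r (dist (x t₀) xstar) := by
      apply psiF_ge hr hsub hW₁ hW₂ ⟨dist_nonneg, (htrap t ht).le⟩
      have h1 : mlow W₁ xstar r (dist (x t) xstar) ≤ W₁ (x t) :=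
        mlow_le hsub hW₁ (mem_closedBall.2 (htrap t ht).le) (by simp [mem_ball])
      have h2 : W₂ (x t₀) ≤ Msup W₂ xstar r (dist (x t₀) xstar) := Msup_ge hr hsub hW₂ hx0'
      have h3 : g t ≤ g t₀ := hganti Set.self_mem_Ici ht htt₀
      have h4 := hglb t ht
      have h5 := hgub t₀ (le_refl t₀)
      linarith
    have hb2 : dist (x t) xstar ≤ PhiT W₁ W₂ W₃ xstar r c (t - t₀) := by
      apply PhiT_ge hr hsub hW₁ hW₃ (htrap t ht).le
      intro ε hε hT
      exact (hatt ε hε t ht hT).le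
    have hψ := psiBar_ge hr hsub hW₁ hW₂ (dist_nonneg : (0:ℝ) ≤ dist (x t₀) xstar)
    have hΦ := PhiBar_ge (W₂ := W₂) (c := c) hr hsub hW₁ hW₃ (sub_nonneg.2 htt₀)
    have hψnn := psiBar_nonneg hr hsub hW₁ hW₂ (dist_nonneg : (0:ℝ) ≤ dist (x t₀) xstar)
    have hdd : dist (x t) xstar * dist (x t) xstar ≤
        psiBar W₁ W₂ xstar r (dist (x t₀) xstar) * PhiBar W₁ W₂ W₃ xstar r c (t - t₀) :=
      mul_le_mul (hb1.trans hψ) (hb2.trans hΦ) dist_nonneg hψnn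
    calc dist (x t) xstar = Real.sqrt (dist (x t) xstar * dist (x t) xstar) :=
        (Real.sqrt_mul_self dist_nonneg).symm
    _ ≤ Real.sqrt (psiBar W₁ W₂ xstar r (dist (x t₀) xstar) *
        PhiBar W₁ W₂ W₃ xstar r c (t - t₀)) := Real.sqrt_le_sqrt hdd
    _ = Real.sqrt (psiBar W₁ W₂ xstar r (dist (x t₀) xstar)) *
        Real.sqrt (PhiBar W₁ W₂ W₃ xstar r c (t - t₀)) := Real.sqrt_mul hψnn _
end
end

section
/- Assume r0 < ∞. Let V : [0,∞) × D → ℝ be continuously differentiable and suppose there are continuous functions W1, W2, W3 : D → ℝ, each positive definite relative to x*, such that W1(x) ≤ V(t,x) ≤ W2(x) and ∂V/∂t (t,x) + ∇ₓV(t,x) · f(t,x) ≤ −W3(x) for all (t,x) ∈ [0,∞) × D. Assume in addition that W1(x)/(r0² − ‖x − x*‖²) → +∞ as ‖x − x*‖ → r0 with x ∈ B(x*, r0), and that 2⟨x − x*, f(t,x)⟩ ≤ 0 (i.e., the derivative of ‖x − x*‖² along f is nonpositive) for all (t,x) ∈ [0,∞) × B(x*, r0). Then there exists a class KL function β defined on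 [0, r0) × [0,∞) such that every solution x(·) of ẋ = f(t,x) on [t0,∞) with x(t0) ∈ B(x*, r0) satisfies ‖x(t) − x*‖ ≤ β(‖x(t0) − x*‖, t − t0) for all t ≥ t0 ≥ 0. -/
open Set Filter Metric Topology
open scoped ENNReal NNReal RealInnerProductSpace

noncomputable section

section
open intervalIntegral

namespace KLaux

/-- Abstract decay-bound function interface. -/
structure GoodG (r₀ : ℝ) (g : ℝ → ℝ → ℝ) : Prop where
  nonneg : ∀ r s, 0 ≤ r → 0 ≤ g r s
  le_r : ∀ r s, 0 ≤ r → g r s ≤ r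
  mono : ∀ s ⦃r r'⦄, 0 ≤ r → r ≤ r' → r' < r₀ → g r s ≤ g r' s
  anti : ∀ r, Antitone (g r)
  tend : ∀ r, 0 ≤ r → r < r₀ → Tendsto (g r) atTop (nhds 0)

variable {r₀ : ℝ} {g : ℝ → ℝ → ℝ}

/-- time-averaged version of `g`. -/
def G (g : ℝ → ℝ → ℝ) (ρ s : ℝ) : ℝ := ∫ v in (0:ℝ)..1, g ρ (s - v)

def Phi (g : ℝ → ℝ → ℝ) (a s : ℝ) : ℝ := ∫ ρ in (0:ℝ)..a, G g ρ s

def Bfun (r₀ : ℝ) (g : ℝ → ℝ → ℝ) (r s : ℝ) : ℝ :=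
  ∫ u in (0:ℝ)..1, G g (r + u * ((r₀ - r)/2)) s

lemma integrable_v (hg : GoodG r₀ g) (ρ s a b : ℝ) :
    IntervalIntegrable (fun v => g ρ (s - v)) MeasureTheory.volume a b := by
  have : Monotone (fun v => g ρ (s - v)) := fun v v' hv => hg.anti ρ (by linarith)
  exact this.intervalIntegrable

lemma hG_nonneg (hg : GoodG r₀ g) {ρ : ℝ} (hρ : 0 ≤ ρ) (s : ℝ) : 0 ≤ G g ρ s := by
  apply intervalIntegral.integral_nonneg (by norm_num)
  exact fun u _ => hg.nonneg _ _ hρ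

lemma hg_le_G (hg : GoodG r₀ g) {ρ : ℝ} (hρ : 0 ≤ ρ) (s : ℝ) : g ρ s ≤ G g ρ s := by
  have h : ∫ v in (0:ℝ)..1, g ρ s ≤ G g ρ s := by
    apply intervalIntegral.integral_mono_on (by norm_num)
      (intervalIntegrable_const) (integrable_v hg ρ s 0 1)
    intro v hv
    exact hg.anti ρ (by linarith [hv.1])
  simpa using h

lemma hG_le (hg : GoodG r₀ g) {ρ : ℝ} (hρ : 0 ≤ ρ) (s : ℝ) : G g ρ s ≤ g ρ (s - 1) := by
  have h : G g ρ s ≤ ∫ v in (0:ℝ)..1, g ρ (s - 1) := by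
    apply intervalIntegral.integral_mono_on (by norm_num)
      (integrable_v hg ρ s 0 1) (intervalIntegrable_const)
    intro v hv
    exact hg.anti ρ (by linarith [hv.2])
  simpa using h

lemma hG_mono (hg : GoodG r₀ g) (s : ℝ) {ρ ρ' : ℝ} (h0 : 0 ≤ ρ) (hle : ρ ≤ ρ')
    (hlt : ρ' < r₀) : G g ρ s ≤ G g ρ' s := by
  apply intervalIntegral.integral_mono_on (by norm_num)
    (integrable_v hg ρ s 0 1) (integrable_v hg ρ' s 0 1)
  intro v _
  exact hg.mono _ h0 hle hlt

lemma hG_anti (hg : GoodG r₀ g) (ρ : ℝ) {s s' : ℝ} (h : s ≤ s') : G g ρ s' ≤ G g ρ s := by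
  apply intervalIntegral.integral_mono_on (by norm_num)
    (integrable_v hg ρ s' 0 1) (integrable_v hg ρ s 0 1)
  intro v _
  exact hg.anti ρ (by linarith)

lemma hG_bound (hg : GoodG r₀ g) {ρ : ℝ} (h0 : 0 ≤ ρ) (hlt : ρ < r₀) (s : ℝ) :
    ‖G g ρ s‖ ≤ r₀ := by
  rw [Real.norm_eq_abs, abs_le]
  constructor
  · linarith [hG_nonneg hg h0 s]
  · linarith [hG_le hg h0 s, hg.le_r ρ (s-1) h0]

lemma G_eq (hg : GoodG r₀ g) (ρ s : ℝ) :
    G g ρ s = (∫ τ in (0:ℝ)..s, g ρ τ) - ∫ τ in (0:ℝ)..(s-1), g ρ τ := by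
  have h1 : G g ρ s = ∫ τ in (s-1)..s, g ρ τ := by
    have := intervalIntegral.integral_comp_sub_left (a := (0:ℝ)) (b := 1) (g ρ) s
    simpa [G] using this
  have h2 := intervalIntegral.integral_add_adjacent_intervals
    (a := (0:ℝ)) (b := s-1) (c := s)
    ((hg.anti ρ).intervalIntegrable (μ := MeasureTheory.volume)) ((hg.anti ρ).intervalIntegrable (μ := MeasureTheory.volume))
  rw [h1]; linarith

lemma norm_int_le (hg : GoodG r₀ g) {ρ : ℝ} (h0 : 0 ≤ ρ) (hlt : ρ < r₀) (a b : ℝ) :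
    ‖∫ τ in a..b, g ρ τ‖ ≤ r₀ * |b - a| := by
  apply intervalIntegral.norm_integral_le_of_norm_le_const
  intro x _
  rw [Real.norm_eq_abs, abs_le]
  constructor
  · linarith [hg.nonneg ρ x h0]
  · linarith [hg.le_r ρ x h0]

lemma G_lip (hg : GoodG r₀ g) {ρ : ℝ} (h0 : 0 ≤ ρ) (hlt : ρ < r₀) (s s' : ℝ) :
    |G g ρ s - G g ρ s'| ≤ 2 * r₀ * |s - s'| := by
  have e1 : (∫ τ in (0:ℝ)..s, g ρ τ) - ∫ τ in (0:ℝ)..s', g ρ τ = ∫ τ in s'..s, g ρ τ := by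
    have := intervalIntegral.integral_add_adjacent_intervals
      (a := (0:ℝ)) (b := s') (c := s)
      ((hg.anti ρ).intervalIntegrable (μ := MeasureTheory.volume)) ((hg.anti ρ).intervalIntegrable (μ := MeasureTheory.volume))
    linarith
  have e2 : (∫ τ in (0:ℝ)..(s-1), g ρ τ) - ∫ τ in (0:ℝ)..(s'-1), g ρ τ
      = ∫ τ in (s'-1)..(s-1), g ρ τ := by
    have := intervalIntegral.integral_add_adjacent_intervals
      (a := (0:ℝ)) (b := s'-1) (c := s-1)
      ((hg.anti ρ).intervalIntegrable (μ := MeasureTheory.volume)) ((hg.anti ρ).intervalIntegrable (μ := MeasureTheory.volume))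
    linarith
  have b1 := norm_int_le hg h0 hlt s' s
  have b2 := norm_int_le hg h0 hlt (s'-1) (s-1)
  rw [Real.norm_eq_abs] at b1 b2
  have : G g ρ s - G g ρ s' = (∫ τ in s'..s, g ρ τ) - ∫ τ in (s'-1)..(s-1), g ρ τ := by
    rw [G_eq hg ρ s, G_eq hg ρ s']; linarith
  rw [this]
  calc |(∫ τ in s'..s, g ρ τ) - ∫ τ in (s'-1)..(s-1), g ρ τ|
      ≤ |∫ τ in s'..s, g ρ τ| + |∫ τ in (s'-1)..(s-1), g ρ τ| := abs_sub _ _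
    _ ≤ r₀ * |s - s'| + r₀ * |s - 1 - (s' - 1)| := add_le_add b1 b2
    _ ≤ 2 * r₀ * |s - s'| := by rw [show s - 1 - (s' - 1) = s - s' by ring]; linarith

end KLaux

namespace KLaux2
open KLaux

variable {r₀ : ℝ} {g : ℝ → ℝ → ℝ}

lemma integrable_G (hg : GoodG r₀ g) (s : ℝ) {a b : ℝ} (ha : 0 ≤ a) (hb : 0 ≤ b)
    (ha' : a < r₀) (hb' : b < r₀) :
    IntervalIntegrable (fun ρ => G g ρ s) MeasureTheory.volume a b := by
  apply MonotoneOn.intervalIntegrable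
  intro ρ hρ ρ' hρ' hle
  have h1 : (0:ℝ) ≤ ρ := le_trans (le_min ha hb) (by simpa [uIcc] using hρ.1)
  have h2 : ρ' < r₀ := lt_of_le_of_lt (by simpa [uIcc] using hρ'.2) (max_lt ha' hb')
  exact hG_mono hg s h1 hle h2

lemma Phi_sub_a (hg : GoodG r₀ g) (s : ℝ) {a a' : ℝ} (ha : 0 ≤ a) (hb : 0 ≤ a')
    (ha' : a < r₀) (hb' : a' < r₀) :
    Phi g a s - Phi g a' s = ∫ ρ in a'..a, G g ρ s := by
  have := intervalIntegral.integral_add_adjacent_intervals (a := (0:ℝ)) (b := a') (c := a)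
    (integrable_G hg s le_rfl hb (by linarith) hb') (integrable_G hg s hb ha hb' ha')
  simp only [Phi]; linarith

lemma Phi_lip_a (hg : GoodG r₀ g) (s : ℝ) {a a' : ℝ} (ha : 0 ≤ a) (hb : 0 ≤ a')
    (ha' : a < r₀) (hb' : a' < r₀) :
    |Phi g a s - Phi g a' s| ≤ r₀ * |a - a'| := by
  rw [Phi_sub_a hg s ha hb ha' hb', ← Real.norm_eq_abs]
  apply intervalIntegral.norm_integral_le_of_norm_le_const
  intro x hx
  have h1 : (0:ℝ) ≤ x := le_trans (le_min hb ha) (le_of_lt hx.1)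
  have h2 : x < r₀ := lt_of_le_of_lt hx.2 (max_lt hb' ha')
  exact hG_bound hg h1 h2 s

lemma Phi_lip_s (hg : GoodG r₀ g) {a : ℝ} (ha : 0 ≤ a) (ha' : a < r₀) (s s' : ℝ) :
    |Phi g a s - Phi g a s'| ≤ (2 * r₀ * |s - s'|) * a := by
  have heq : Phi g a s - Phi g a s' = ∫ ρ in (0:ℝ)..a, (G g ρ s - G g ρ s') :=
    (intervalIntegral.integral_sub (integrable_G hg s le_rfl ha (by linarith) ha')
      (integrable_G hg s' le_rfl ha (by linarith) ha')).symm
  rw [heq, ← Real.norm_eq_abs]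
  have := intervalIntegral.norm_integral_le_of_norm_le_const
    (a := (0:ℝ)) (b := a) (C := 2 * r₀ * |s - s'|)
    (f := fun ρ => G g ρ s - G g ρ s') ?_
  · calc ‖∫ ρ in (0:ℝ)..a, (G g ρ s - G g ρ s')‖ ≤ 2 * r₀ * |s - s'| * |a - 0| := this
      _ = 2 * r₀ * |s - s'| * a := by rw [sub_zero, abs_of_nonneg ha]
  · intro x hx
    rw [Set.uIoc_of_le ha] at hx
    have h1 : (0:ℝ) ≤ x := le_of_lt hx.1
    have h2 : x < r₀ := lt_of_le_of_lt hx.2 ha'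
    rw [Real.norm_eq_abs]
    exact G_lip hg h1 h2 s s'

lemma Phi_cont (hg : GoodG r₀ g) (hr₀ : 0 < r₀) :
    ContinuousOn (fun p : ℝ × ℝ => Phi g p.1 p.2) (Ico 0 r₀ ×ˢ (univ : Set ℝ)) := by
  have K : ℝ≥0 := ⟨r₀ + 2 * r₀ * r₀, by positivity⟩
  apply LipschitzOnWith.continuousOn (K := ⟨r₀ + 2 * r₀ * r₀, by positivity⟩)
  apply LipschitzOnWith.of_dist_le_mul
  rintro ⟨a, s⟩ ⟨ha, -⟩ ⟨a', s'⟩ ⟨ha', -⟩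
  have d1 : dist a a' ≤ dist (a, s) (a', s') := le_max_left _ _
  have d2 : dist s s' ≤ dist (a, s) (a', s') := le_max_right _ _
  have dnn : (0:ℝ) ≤ dist (a, s) (a', s') := dist_nonneg
  have key : |Phi g a s - Phi g a' s'| ≤ r₀ * |a - a'| + 2 * r₀ * |s - s'| * a' := by
    calc |Phi g a s - Phi g a' s'|
        ≤ |Phi g a s - Phi g a' s| + |Phi g a' s - Phi g a' s'| := by
          have := abs_add_le (Phi g a s - Phi g a' s) (Phi g a' s - Phi g a' s')
          simpa using this
      _ ≤ r₀ * |a - a'| + 2 * r₀ * |s - s'| * a' :=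
          add_le_add (Phi_lip_a hg s ha.1 ha'.1 ha.2 ha'.2)
            (Phi_lip_s hg ha'.1 ha'.2 s s')
  rw [Real.dist_eq]
  calc |Phi g a s - Phi g a' s'| ≤ r₀ * |a - a'| + 2 * r₀ * |s - s'| * a' := key
    _ ≤ r₀ * dist (a,s) (a',s') + 2 * r₀ * dist (a,s) (a',s') * r₀ := by
        have e1 : |a - a'| = dist a a' := (Real.dist_eq a a').symm
        have e2 : |s - s'| = dist s s' := (Real.dist_eq s s').symm
        rw [e1, e2]
        have h2 : 2 * r₀ * dist s s' * a' ≤ 2 * r₀ * dist (a,s) (a',s') * r₀ := by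
          apply mul_le_mul (by nlinarith [dist_nonneg (x := s) (y := s')])
            (le_of_lt ha'.2) ha'.1 (by positivity)
        exact add_le_add (mul_le_mul_of_nonneg_left d1 (le_of_lt hr₀)) h2
    _ = (↑(⟨r₀ + 2 * r₀ * r₀, by positivity⟩ : ℝ≥0) : ℝ) * dist (a,s) (a',s') := by
        push_cast; ring

end KLaux2

namespace KLaux3
open KLaux KLaux2

variable {r₀ : ℝ} {g : ℝ → ℝ → ℝ}

lemma arg_mem {r u : ℝ} (h0 : 0 ≤ r) (hr : r < r₀) (hu : u ∈ Icc (0:ℝ) 1) :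
    r ≤ r + u * ((r₀ - r)/2) ∧ r + u * ((r₀ - r)/2) ≤ (r + r₀)/2 := by
  constructor
  · nlinarith [hu.1, hu.2]
  · nlinarith [hu.1, hu.2]

lemma mid_lt {r : ℝ} (hr : r < r₀) : (r + r₀)/2 < r₀ := by linarith

lemma integrable_u (hg : GoodG r₀ g) {r : ℝ} (h0 : 0 ≤ r) (hr : r < r₀) (s : ℝ) :
    IntervalIntegrable (fun u => G g (r + u * ((r₀ - r)/2)) s) MeasureTheory.volume 0 1 := by
  apply MonotoneOn.intervalIntegrable
  rw [Set.uIcc_of_le (by norm_num : (0:ℝ) ≤ 1)]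
  intro u hu u' hu' hle
  have h1 := arg_mem (r₀ := r₀) h0 hr hu
  have h2 := arg_mem (r₀ := r₀) h0 hr hu'
  apply hG_mono hg s (by linarith [h1.1]) _ (lt_of_le_of_lt h2.2 (mid_lt hr))
  nlinarith [hu.1]

lemma B_ge_g (hg : GoodG r₀ g) {r : ℝ} (h0 : 0 ≤ r) (hr : r < r₀) (s : ℝ) :
    g r s ≤ Bfun r₀ g r s := by
  have h : (∫ u in (0:ℝ)..1, g r s) ≤ Bfun r₀ g r s := by
    apply intervalIntegral.integral_mono_on (by norm_num)
      intervalIntegrable_const (integrable_u hg h0 hr s)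
    intro u hu
    have h1 := arg_mem (r₀ := r₀) h0 hr hu
    have hlt := lt_of_le_of_lt h1.2 (mid_lt hr)
    calc g r s ≤ g (r + u * ((r₀ - r)/2)) s := hg.mono s h0 h1.1 hlt
      _ ≤ G g (r + u * ((r₀ - r)/2)) s := hg_le_G hg (by linarith [h1.1]) s
  simpa using h

lemma B_nonneg (hg : GoodG r₀ g) {r : ℝ} (h0 : 0 ≤ r) (hr : r < r₀) (s : ℝ) :
    0 ≤ Bfun r₀ g r s := le_trans (hg.nonneg r s h0) (B_ge_g hg h0 hr s)

lemma B_le (hg : GoodG r₀ g) {r : ℝ} (h0 : 0 ≤ r) (hr : r < r₀) (s : ℝ) :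
    Bfun r₀ g r s ≤ g ((r + r₀)/2) (s - 1) := by
  have h : Bfun r₀ g r s ≤ ∫ u in (0:ℝ)..1, g ((r + r₀)/2) (s - 1) := by
    apply intervalIntegral.integral_mono_on (by norm_num)
      (integrable_u hg h0 hr s) intervalIntegrable_const
    intro u hu
    have h1 := arg_mem (r₀ := r₀) h0 hr hu
    have harg0 : 0 ≤ r + u * ((r₀ - r)/2) := by linarith [h1.1]
    calc G g (r + u * ((r₀ - r)/2)) s ≤ g (r + u * ((r₀ - r)/2)) (s - 1) := hG_le hg harg0 _
      _ ≤ g ((r + r₀)/2) (s - 1) := hg.mono _ harg0 h1.2 (mid_lt hr)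
  simpa using h

lemma B_mono (hg : GoodG r₀ g) {r r' : ℝ} (h0 : 0 ≤ r) (hle : r ≤ r') (hr' : r' < r₀)
    (s : ℝ) : Bfun r₀ g r s ≤ Bfun r₀ g r' s := by
  have hr : r < r₀ := lt_of_le_of_lt hle hr'
  apply intervalIntegral.integral_mono_on (by norm_num)
    (integrable_u hg h0 hr s) (integrable_u hg (by linarith) hr' s)
  intro u hu
  have h1 := arg_mem (r₀ := r₀) h0 hr hu
  have h2 := arg_mem (r₀ := r₀) (by linarith : (0:ℝ) ≤ r') hr' hu
  apply hG_mono hg s (by linarith [h1.1]) _ (lt_of_le_of_lt h2.2 (mid_lt hr'))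
  nlinarith [hu.1, hu.2]

lemma B_anti (hg : GoodG r₀ g) {r : ℝ} (h0 : 0 ≤ r) (hr : r < r₀) {s s' : ℝ} (h : s ≤ s') :
    Bfun r₀ g r s' ≤ Bfun r₀ g r s := by
  apply intervalIntegral.integral_mono_on (by norm_num)
    (integrable_u hg h0 hr s') (integrable_u hg h0 hr s)
  intro u hu
  exact hG_anti hg _ h

lemma B_tendsto (hg : GoodG r₀ g) {r : ℝ} (h0 : 0 ≤ r) (hr : r < r₀) :
    Tendsto (fun s => Bfun r₀ g r s) atTop (nhds 0) := by
  apply squeeze_zero (fun s => B_nonneg hg h0 hr s) (fun s => B_le hg h0 hr s)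
  have hmid0 : 0 ≤ (r + r₀)/2 := by nlinarith [lt_of_le_of_lt h0 hr]
  have := (hg.tend ((r + r₀)/2) hmid0 (mid_lt hr)).comp
    (tendsto_atTop_add_const_right atTop (-1) tendsto_id)
  simpa [Function.comp_def, sub_eq_add_neg] using this

lemma B_eq (hg : GoodG r₀ g) {r : ℝ} (h0 : 0 ≤ r) (hr : r < r₀) (s : ℝ) :
    Bfun r₀ g r s = (2 / (r₀ - r)) * (Phi g ((r + r₀)/2) s - Phi g r s) := by
  have hk : (r₀ - r)/2 ≠ 0 := ne_of_gt (by linarith : (0:ℝ) < (r₀ - r)/2)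
  have h1 : Bfun r₀ g r s
      = ∫ u in (0:ℝ)..1, (fun ρ => G g ρ s) (((r₀ - r)/2) * u + r) := by
    unfold Bfun; congr 1; ext u; ring_nf
  rw [h1, intervalIntegral.integral_comp_mul_add (fun ρ => G g ρ s) hk r]
  have e1 : (r₀ - r)/2 * 0 + r = r := by ring
  have e2 : (r₀ - r)/2 * 1 + r = (r + r₀)/2 := by ring
  rw [e1, e2, Phi_sub_a hg s (by linarith) h0 (mid_lt hr) hr]
  rw [smul_eq_mul]
  congr 1
  rw [inv_eq_one_div]
  field_simp

lemma B_cont (hg : GoodG r₀ g) (hr₀ : 0 < r₀) :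
    ContinuousOn (fun p : ℝ × ℝ => Bfun r₀ g p.1 p.2) (Ico 0 r₀ ×ˢ (univ : Set ℝ)) := by
  have hPhi := Phi_cont hg hr₀
  have c1 : Continuous (fun p : ℝ × ℝ => ((p.1 + r₀)/2, p.2)) :=
    ((continuous_fst.add continuous_const).div_const 2).prodMk continuous_snd
  have c2 : Continuous (fun p : ℝ × ℝ => r₀ - p.1) := continuous_const.sub continuous_fst
  have hcont : ContinuousOn
      (fun p : ℝ × ℝ => (2 / (r₀ - p.1)) * (Phi g ((p.1 + r₀)/2) p.2 - Phi g p.1 p.2))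
      (Ico 0 r₀ ×ˢ (univ : Set ℝ)) := by
    apply ContinuousOn.mul
    · apply ContinuousOn.div continuousOn_const c2.continuousOn
      rintro ⟨a, s⟩ ⟨⟨ha0, ha1⟩, -⟩
      exact ne_of_gt (by simpa using sub_pos.mpr ha1)
    · apply ContinuousOn.sub
      · apply hPhi.comp c1.continuousOn
        rintro ⟨a, s⟩ ⟨⟨ha0, ha1⟩, -⟩
        refine ⟨⟨by linarith, ?_⟩, trivial⟩
        simpa using mid_lt ha1
      · exact hPhi
  apply ContinuousOn.congr hcont
  rintro ⟨a, s⟩ ⟨⟨ha0, ha1⟩, -⟩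
  exact B_eq hg ha0 ha1 s

end KLaux3

namespace KLaux4
open KLaux KLaux2 KLaux3

variable {r₀ : ℝ} {g : ℝ → ℝ → ℝ}

lemma KLdom_eq (hr₀ : 0 < r₀) : KLdom (ENNReal.ofReal r₀) = Ico 0 r₀ := by
  ext r
  simp only [KLdom, mem_setOf_eq, mem_Ico]
  constructor
  · rintro ⟨h0, h1⟩
    exact ⟨h0, by rwa [ENNReal.ofReal_lt_ofReal_iff hr₀] at h1⟩
  · rintro ⟨h0, h1⟩
    exact ⟨h0, by rwa [ENNReal.ofReal_lt_ofReal_iff hr₀]⟩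

lemma exists_KL (hr₀ : 0 < r₀) (hg : GoodG r₀ g) :
    ∃ β : ℝ → ℝ → ℝ, IsClassKL (ENNReal.ofReal r₀) β ∧
      ∀ r s, 0 ≤ r → r < r₀ → g r s ≤ β r s := by
  refine ⟨fun r s => r * Real.exp (-s) + min r (Bfun r₀ g r s), ?_, ?_⟩
  · rw [IsClassKL, KLdom_eq hr₀]
    refine ⟨?_, ?_, ?_, ?_, ?_, ?_⟩
    · -- continuity
      apply ContinuousOn.add
      · exact (Continuous.continuousOn
          (continuous_fst.mul ((Real.continuous_exp).comp continuous_snd.neg)))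
      · apply ContinuousOn.inf' (Continuous.continuousOn continuous_fst)
        exact (B_cont hg hr₀).mono (Set.prod_mono_right (subset_univ _))
    · rintro r ⟨h0, h1⟩ t -
      have := B_nonneg hg h0 h1 t
      have : 0 ≤ min r (Bfun r₀ g r t) := le_min h0 this
      positivity
    · rintro t - r ⟨h0, h1⟩ r' ⟨h0', h1'⟩ hlt
      have e : Real.exp (-t) > 0 := Real.exp_pos _
      have h2 : r * Real.exp (-t) < r' * Real.exp (-t) := by
        exact mul_lt_mul_of_pos_right hlt e
      have h3 : min r (Bfun r₀ g r t) ≤ min r' (Bfun r₀ g r' t) :=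
        min_le_min (le_of_lt hlt) (B_mono hg h0 (le_of_lt hlt) h1' t)
      exact add_lt_add_of_lt_of_le h2 h3
    · rintro t -
      simp only [zero_mul, zero_add]
      exact min_eq_left (B_nonneg hg le_rfl hr₀ t)
    · rintro r ⟨h0, h1⟩ t (ht : (0:ℝ) ≤ t) t' (ht' : (0:ℝ) ≤ t') hle
      have h2 : r * Real.exp (-t') ≤ r * Real.exp (-t) :=
        mul_le_mul_of_nonneg_left (Real.exp_le_exp.2 (by linarith)) h0
      exact add_le_add h2 (min_le_min le_rfl (B_anti hg h0 h1 hle))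
    · rintro r ⟨h0, h1⟩
      have t1 : Tendsto (fun t : ℝ => r * Real.exp (-t)) atTop (nhds 0) := by
        have := Real.tendsto_exp_neg_atTop_nhds_zero.const_mul r
        simpa using this
      have t2 : Tendsto (fun t => min r (Bfun r₀ g r t)) atTop (nhds 0) := by
        apply squeeze_zero (fun t => le_min h0 (B_nonneg hg h0 h1 t))
          (fun t => min_le_right _ _) (B_tendsto hg h0 h1)
      simpa using t1.add t2
  · intro r s h0 h1
    have h2 : g r s ≤ min r (Bfun r₀ g r s) := le_min (hg.le_r r s h0) (B_ge_g hg h0 h1 s)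
    have h3 : 0 ≤ r * Real.exp (-s) := mul_nonneg h0 (le_of_lt (Real.exp_pos _))
    simp only []
    calc g r s ≤ min r (Bfun r₀ g r s) := h2
      _ ≤ r * Real.exp (-s) + min r (Bfun r₀ g r s) := le_add_of_nonneg_left h3

end KLaux4

end


theorem stmt_2
    {n : ℕ} (hn : 1 ≤ n)
    (D : Set (EuclideanSpace ℝ (Fin n))) (hD : IsOpen D)
    (xstar : EuclideanSpace ℝ (Fin n)) (hxstar : xstar ∈ D)
    (f : ℝ → EuclideanSpace ℝ (Fin n) → EuclideanSpace ℝ (Fin n))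
    -- `f` is continuous in `t`
    (hf_t : ∀ x ∈ D, ContinuousOn (fun t => f t x) (Ici (0 : ℝ)))
    -- `f` is locally Lipschitz in `x`
    (hf_x : ∀ t ∈ Ici (0 : ℝ), ∀ x₀ ∈ D, ∃ K : ℝ≥0, ∃ ε > (0 : ℝ),
      LipschitzOnWith K (f t) (ball x₀ ε ∩ D))
    -- `xstar` is an equilibrium point
    (hf_eq : ∀ t ∈ Ici (0 : ℝ), f t xstar = 0)
    -- `r₀ = sup {r > 0 : ball xstar r ⊆ D} < ∞`
    (r₀ : ℝ) (hr₀pos : 0 < r₀) (hr₀ball : ball xstar r₀ ⊆ D)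
    (hr₀sup : ∀ r : ℝ, ball xstar r ⊆ D → r ≤ r₀)
    (V : ℝ → EuclideanSpace ℝ (Fin n) → ℝ)
    -- `V` is continuously differentiable on `[0, ∞) × D`
    (hV : ContDiffOn ℝ 1 (fun p : ℝ × EuclideanSpace ℝ (Fin n) => V p.1 p.2)
      (Ici (0 : ℝ) ×ˢ D))
    (W₁ W₂ W₃ : EuclideanSpace ℝ (Fin n) → ℝ)
    (hW₁ : PosDefOn D xstar W₁) (hW₂ : PosDefOn D xstar W₂) (hW₃ : PosDefOn D xstar W₃)
    -- `W₁ x ≤ V t x ≤ W₂ x`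
    (hVbound : ∀ t ∈ Ici (0 : ℝ), ∀ x ∈ D, W₁ x ≤ V t x ∧ V t x ≤ W₂ x)
    -- `∂V/∂t + ∇ₓV ⬝ f ≤ -W₃`
    (hVderiv : ∀ t ∈ Ici (0 : ℝ), ∀ x ∈ D,
      derivWithin (fun τ => V τ x) (Ici (0 : ℝ)) t + fderiv ℝ (V t) x (f t x) ≤ -W₃ x)
    -- `W₁ x / (r₀² - ‖x - xstar‖²) → +∞` as `‖x - xstar‖ → r₀` with `x ∈ B(xstar, r₀)`
    (hblow : Tendsto (fun x => W₁ x / (r₀ ^ 2 - dist x xstar ^ 2))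
      (comap (fun x => dist x xstar) (nhdsWithin r₀ (Iio r₀))) atTop)
    -- the derivative of `‖x - xstar‖²` along `f` is nonpositive on `B(xstar, r₀)`
    (hmono : ∀ t ∈ Ici (0 : ℝ), ∀ x ∈ ball xstar r₀, 2 * (inner ℝ (x - xstar) (f t x) : ℝ) ≤ 0) :
    ∃ β : ℝ → ℝ → ℝ, IsClassKL (ENNReal.ofReal r₀) β ∧
      ∀ (t₀ : ℝ) (x : ℝ → EuclideanSpace ℝ (Fin n)), 0 ≤ t₀ →
        (∀ t ∈ Ici t₀, x t ∈ D) →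
        (∀ t ∈ Ici t₀, HasDerivWithinAt x (f t (x t)) (Ici t₀) t) →
        x t₀ ∈ ball xstar r₀ →
        ∀ t ∈ Ici t₀, dist (x t) xstar ≤ β (dist (x t₀) xstar) (t - t₀) := by
  classical
  have hWnn : ∀ (W : EuclideanSpace ℝ (Fin n) → ℝ), PosDefOn D xstar W →
      ∀ y ∈ D, 0 ≤ W y := by
    intro W hW y hy
    by_cases h : y = xstar
    · subst h; rw [hW.2.1]
    · exact le_of_lt (hW.2.2 y hy h)
  -- auxiliary functions
  set A : ℝ → ℝ → Set (EuclideanSpace ℝ (Fin n)) :=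
    fun ε r => {y | ε ≤ dist y xstar ∧ dist y xstar ≤ r} with hA
  set Mf : ℝ → ℝ := fun r => sSup (W₂ '' closedBall xstar r) with hMfdef
  set mf : ℝ → ℝ → ℝ := fun ε r => sInf (W₃ '' A ε r) with hmfdef
  set T : ℝ → ℝ → ℝ := fun r ε => Mf r / mf ε r + 1 with hTdef
  set g : ℝ → ℝ → ℝ := fun r s => sInf ({r} ∪ {ε | 0 < ε ∧ T r ε ≤ s}) with hgdef
  -- basic set facts
  have hcbD : ∀ {r : ℝ}, r < r₀ → closedBall xstar r ⊆ D :=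
    fun hr => (closedBall_subset_ball hr).trans hr₀ball
  have hAcb : ∀ {ε r : ℝ}, A ε r ⊆ closedBall xstar r := fun hy => hy.2
  have hAD : ∀ {ε r : ℝ}, r < r₀ → A ε r ⊆ D := fun hr => hAcb.trans (hcbD hr)
  have hAcompact : ∀ ε r : ℝ, IsCompact (A ε r) := by
    intro ε r
    apply IsCompact.of_isClosed_subset (isCompact_closedBall xstar r) _ hAcb
    have : A ε r = (fun y => dist y xstar) ⁻¹' (Icc ε r) := rfl
    rw [this]
    exact isClosed_Icc.preimage (continuous_id.dist continuous_const)
  have hAne : ∀ {ε r : ℝ}, 0 ≤ ε → ε ≤ r → (A ε r).Nonempty := by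
    intro ε r h0 hle
    have h0r : 0 ≤ r := h0.trans hle
    refine ⟨xstar + r • EuclideanSpace.single ⟨0, hn⟩ (1:ℝ), ?_, ?_⟩
    all_goals
      have hd : dist (xstar + r • EuclideanSpace.single (⟨0, hn⟩ : Fin n) (1:ℝ)) xstar = r := by
        rw [dist_eq_norm]
        simp only [add_sub_cancel_left]
        rw [norm_smul, EuclideanSpace.norm_single]
        simp [abs_of_nonneg h0r]
    · rw [hd]; exact hle
    · rw [hd]
  -- Mf facts
  have hMbdd : ∀ {r : ℝ}, r < r₀ → BddAbove (W₂ '' closedBall xstar r) :=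
    fun hr => (isCompact_closedBall xstar _).bddAbove_image (hW₂.1.mono (hcbD hr))
  have hMle : ∀ {r : ℝ} {y}, r < r₀ → y ∈ closedBall xstar r → W₂ y ≤ Mf r :=
    fun hr hy => le_csSup (hMbdd hr) (mem_image_of_mem _ hy)
  have hMnn : ∀ {r : ℝ}, 0 ≤ r → r < r₀ → 0 ≤ Mf r := by
    intro r h0 hr
    have := hMle hr (mem_closedBall_self h0)
    rw [hW₂.2.1] at this; exact this
  have hMmono : ∀ {r r' : ℝ}, 0 ≤ r → r ≤ r' → r' < r₀ → Mf r ≤ Mf r' := by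
    intro r r' h0 hle hr'
    apply csSup_le_csSup (hMbdd hr')
      ⟨W₂ xstar, mem_image_of_mem _ (mem_closedBall_self h0)⟩
    exact image_mono (closedBall_subset_closedBall hle)
  -- mf facts
  have hmbdd : ∀ {ε r : ℝ}, r < r₀ → BddBelow (W₃ '' A ε r) := by
    intro ε r hr
    refine ⟨0, ?_⟩
    rintro - ⟨y, hy, rfl⟩
    exact hWnn W₃ hW₃ y (hAD hr hy)
  have hmnn : ∀ {ε r : ℝ}, r < r₀ → 0 ≤ mf ε r := by
    intro ε r hr
    apply Real.sInf_nonneg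
    rintro - ⟨y, hy, rfl⟩
    exact hWnn W₃ hW₃ y (hAD hr hy)
  have hmle : ∀ {ε r : ℝ} {y}, r < r₀ → y ∈ A ε r → mf ε r ≤ W₃ y :=
    fun hr hy => csInf_le (hmbdd hr) (mem_image_of_mem _ hy)
  have hmpos : ∀ {ε r : ℝ}, 0 < ε → ε ≤ r → r < r₀ → 0 < mf ε r := by
    intro ε r hε hle hr
    obtain ⟨y₀, hy₀A, hy₀min⟩ := (hAcompact ε r).exists_isMinOn (hAne (le_of_lt hε) hle)
      (hW₃.1.mono (hAD hr))
    have hy₀pos : 0 < W₃ y₀ := by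
      apply hW₃.2.2 y₀ (hAD hr hy₀A)
      intro hcon
      have h1 : ε ≤ dist y₀ xstar := hy₀A.1
      rw [hcon, dist_self] at h1
      linarith
    have : W₃ y₀ ≤ mf ε r := by
      apply le_csInf ((hAne (le_of_lt hε) hle).image _)
      rintro - ⟨y, hy, rfl⟩
      exact hy₀min hy
    linarith
  have hmanti : ∀ {ε r r' : ℝ}, 0 < ε → ε ≤ r → r ≤ r' → r' < r₀ → mf ε r' ≤ mf ε r := by
    intro ε r r' hε hle hle' hr'
    apply csInf_le_csInf (hmbdd hr') ((hAne (le_of_lt hε) hle).image _)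
    apply image_mono
    exact fun y hy => ⟨hy.1, hy.2.trans hle'⟩
  -- emptiness of annulus
  have hAempty : ∀ {ε r : ℝ}, r < ε → mf ε r = 0 := by
    intro ε r hlt
    have : A ε r = ∅ := by
      ext y; simp only [hA, mem_setOf_eq, mem_empty_iff_false, iff_false, not_and, not_le]
      intro h1; linarith
    rw [hmfdef]
    simp only [this, image_empty, Real.sInf_empty]
  -- T monotone in r
  have hTmono : ∀ {r r' ε : ℝ}, 0 ≤ r → r ≤ r' → r' < r₀ → 0 < ε → T r ε ≤ T r' ε := by
    intro r r' ε h0 hle hr' hε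
    have hr : r < r₀ := lt_of_le_of_lt hle hr'
    by_cases h1 : ε ≤ r
    · have := div_le_div₀ (hMnn (h0.trans hle) hr') (hMmono h0 hle hr')
        (hmpos hε (h1.trans hle) hr') (hmanti hε h1 hle hr')
      simp only [hTdef]; linarith
    · push_neg at h1
      have e1 : T r ε = 1 := by simp only [hTdef, hAempty h1, div_zero, zero_add]
      rw [e1]
      by_cases h2 : ε ≤ r'
      · have := div_nonneg (hMnn (h0.trans hle) hr') (hmnn (ε := ε) hr')
        simp only [hTdef]; linarith
      · push_neg at h2
        simp only [hTdef, hAempty h2, div_zero, zero_add]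
        exact le_rfl

  -- g interface
  have hgSne : ∀ r s : ℝ, ({r} ∪ {ε | 0 < ε ∧ T r ε ≤ s}).Nonempty :=
    fun r s => ⟨r, Or.inl rfl⟩
  have hgSbdd : ∀ {r : ℝ}, 0 ≤ r → ∀ s, BddBelow ({r} ∪ {ε | 0 < ε ∧ T r ε ≤ s}) := by
    intro r h0 s
    refine ⟨0, ?_⟩
    rintro b (rfl | ⟨hb, -⟩)
    · exact h0
    · exact le_of_lt hb
  have hg_nonneg : ∀ r s : ℝ, 0 ≤ r → 0 ≤ g r s := by
    intro r s h0
    apply le_csInf (hgSne r s)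
    rintro b (rfl | ⟨hb, -⟩)
    · exact h0
    · exact le_of_lt hb
  have hg_le_r : ∀ r s : ℝ, 0 ≤ r → g r s ≤ r :=
    fun r s h0 => csInf_le (hgSbdd h0 s) (Or.inl rfl)
  have hg_mono : ∀ (s : ℝ) ⦃r r' : ℝ⦄, 0 ≤ r → r ≤ r' → r' < r₀ → g r s ≤ g r' s := by
    intro s r r' h0 hle hr'
    apply le_csInf (hgSne r' s)
    rintro b (rfl | ⟨hb, hTb⟩)
    · exact (hg_le_r r s h0).trans hle
    · exact csInf_le (hgSbdd h0 s) (Or.inr ⟨hb, le_trans (hTmono h0 hle hr' hb) hTb⟩)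
  have hg_anti : ∀ r : ℝ, Antitone (g r) := by
    intro r s s' hss'
    apply csInf_le_csInf ?_ (hgSne r s) ?_
    · refine ⟨min r 0, ?_⟩
      rintro b (rfl | ⟨hb, -⟩)
      · exact min_le_left _ _
      · exact le_trans (min_le_right _ _) (le_of_lt hb)
    · rintro b (rfl | ⟨hb, hTb⟩)
      · exact Or.inl rfl
      · exact Or.inr ⟨hb, hTb.trans hss'⟩
  have hg_tend : ∀ r : ℝ, 0 ≤ r → r < r₀ → Tendsto (g r) atTop (nhds 0) := by
    intro r h0 hr
    rcases eq_or_lt_of_le h0 with h0' | h0'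
    · have : ∀ s, g r s = 0 := by
        intro s
        have h1 := hg_le_r r s h0
        have h2 := hg_nonneg r s h0
        rw [← h0'] at h1 h2 ⊢
        linarith
      rw [show g r = fun _ => (0:ℝ) from funext this]
      exact tendsto_const_nhds
    · rw [Metric.tendsto_atTop]
      intro ε hε
      refine ⟨T r (min (ε/2) r), fun s hs => ?_⟩
      have hε' : 0 < min (ε/2) r := lt_min (by linarith) h0'
      have hmem : min (ε/2) r ∈ ({r} ∪ {ε | 0 < ε ∧ T r ε ≤ s}) := Or.inr ⟨hε', hs⟩
      have h1 : g r s ≤ min (ε/2) r := csInf_le (hgSbdd h0 s) hmem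
      have h2 := hg_nonneg r s h0
      rw [Real.dist_eq, sub_zero, abs_of_nonneg h2]
      have := min_le_left (ε/2) r
      linarith
  have hgood : KLaux.GoodG r₀ g :=
    ⟨hg_nonneg, hg_le_r, hg_mono, hg_anti, hg_tend⟩
  obtain ⟨β, hβKL, hβg⟩ := KLaux4.exists_KL hr₀pos hgood
  refine ⟨β, hβKL, ?_⟩
  intro t₀ x ht₀ hxD hxder hx0 t ht
  have hxcont : ContinuousOn x (Ici t₀) := fun τ hτ => (hxder τ hτ).continuousWithinAt
  set φ : ℝ → ℝ := fun σ => ‖x σ - xstar‖^2 with hφdef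
  have hφd : ∀ τ ∈ Ici t₀, HasDerivWithinAt φ
      (2 * (inner ℝ (x τ - xstar) (f τ (x τ)) : ℝ)) (Ici t₀) τ := by
    intro τ hτ
    have h1 : HasDerivWithinAt (fun σ => x σ - xstar) (f τ (x τ)) (Ici t₀) τ :=
      (hxder τ hτ).sub_const _
    have h2 := HasDerivWithinAt.inner ℝ h1 h1
    have heq : (inner ℝ (x τ - xstar) (f τ (x τ)) : ℝ) + (inner ℝ (f τ (x τ)) (x τ - xstar) : ℝ)
        = 2 * (inner ℝ (x τ - xstar) (f τ (x τ)) : ℝ) := by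
      rw [real_inner_comm (f τ (x τ))]; ring
    rw [heq] at h2
    have h3 : φ = fun σ => (inner ℝ (x σ - xstar) (x σ - xstar) : ℝ) := by
      funext σ
      simp only [hφdef]
      exact (real_inner_self_eq_norm_sq _).symm
    rw [h3]
    exact h2
  have hφanti : ∀ a b : ℝ, t₀ ≤ a → a ≤ b →
      (∀ τ ∈ Ioo a b, dist (x τ) xstar < r₀) → AntitoneOn φ (Icc a b) := by
    intro a b ha hab hball
    have hIcc : Icc a b ⊆ Ici t₀ := fun τ hτ => le_trans ha hτ.1
    have hderiv : ∀ τ ∈ Ioo a b, HasDerivAt φ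
        (2 * (inner ℝ (x τ - xstar) (f τ (x τ)) : ℝ)) τ := by
      intro τ hτ
      exact (hφd τ (hIcc (Ioo_subset_Icc_self hτ))).hasDerivAt
        (Ici_mem_nhds (lt_of_le_of_lt ha hτ.1))
    apply antitoneOn_of_deriv_nonpos (convex_Icc a b)
    · exact (((hxcont.mono hIcc).sub continuousOn_const).norm).pow 2
    · intro τ hτ
      rw [interior_Icc] at hτ
      exact (hderiv τ hτ).differentiableAt.differentiableWithinAt
    · intro τ hτ
      rw [interior_Icc] at hτ
      rw [(hderiv τ hτ).deriv]
      exact hmono τ (le_trans ht₀ (le_trans ha (le_of_lt hτ.1))) (x τ)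
        (mem_ball.mpr (hball τ hτ))
  have hinball : ∀ τ ∈ Ici t₀, dist (x τ) xstar < r₀ := by
    by_contra hcon
    push_neg at hcon
    obtain ⟨t₁, ht₁, ht₁r⟩ := hcon
    set S : Set ℝ := {τ | τ ∈ Icc t₀ t₁ ∧ r₀ ≤ dist (x τ) xstar} with hSdef
    have hSne : S.Nonempty := ⟨t₁, ⟨⟨ht₁, le_rfl⟩, ht₁r⟩⟩
    have hSbdd : BddBelow S := ⟨t₀, fun τ hτ => hτ.1.1⟩
    have hSclosed : IsClosed S := by
      have he : S = Icc t₀ t₁ ∩ (fun τ => dist (x τ) xstar) ⁻¹' Ici r₀ := rfl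
      rw [he]
      exact ContinuousOn.preimage_isClosed_of_isClosed
        ((continuous_id.dist continuous_const).comp_continuousOn (hxcont.mono Icc_subset_Ici_self)) isClosed_Icc isClosed_Ici
    set tstar := sInf S with htstardef
    have htS : tstar ∈ S := hSclosed.csInf_mem hSne hSbdd
    have ht0star : t₀ < tstar := by
      have hne : t₀ ≠ tstar := by
        intro h
        have h1 := htS.2
        rw [← h] at h1
        have h2 := mem_ball.mp hx0
        linarith
      exact lt_of_le_of_ne htS.1.1 hne
    have hball' : ∀ τ ∈ Ioo t₀ tstar, dist (x τ) xstar < r₀ := by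
      intro τ hτ
      by_contra hc
      push_neg at hc
      have hτS : τ ∈ S := ⟨⟨le_of_lt hτ.1, le_trans (le_of_lt hτ.2) htS.1.2⟩, hc⟩
      have h3 := csInf_le hSbdd hτS
      rw [← htstardef] at h3
      linarith [hτ.2]
    have hanti := hφanti t₀ tstar le_rfl (le_of_lt ht0star) hball'
    have h1 : φ tstar ≤ φ t₀ := hanti (left_mem_Icc.mpr (le_of_lt ht0star))
      (right_mem_Icc.mpr (le_of_lt ht0star)) (le_of_lt ht0star)
    have hd0 : dist (x t₀) xstar < r₀ := mem_ball.mp hx0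
    have hd1 : r₀ ≤ dist (x tstar) xstar := htS.2
    simp only [hφdef, ← dist_eq_norm] at h1
    nlinarith [dist_nonneg (x := x t₀) (y := xstar)]
  have hantiglob : AntitoneOn φ (Ici t₀) := by
    apply antitoneOn_of_deriv_nonpos (convex_Ici t₀)
    · exact (((hxcont).sub continuousOn_const).norm).pow 2
    · intro τ hτ
      rw [interior_Ici] at hτ
      exact (((hφd τ (mem_Ici.mpr (le_of_lt hτ))).hasDerivAt
        (Ici_mem_nhds hτ))).differentiableAt.differentiableWithinAt
    · intro τ hτ
      rw [interior_Ici] at hτ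
      rw [((hφd τ (mem_Ici.mpr (le_of_lt hτ))).hasDerivAt (Ici_mem_nhds hτ)).deriv]
      exact hmono τ (mem_Ici.mpr (le_trans ht₀ (le_of_lt hτ))) (x τ)
        (mem_ball.mpr (hinball τ (mem_Ici.mpr (le_of_lt hτ))))
  have hdistmono : ∀ {τ τ' : ℝ}, t₀ ≤ τ → τ ≤ τ' →
      dist (x τ') xstar ≤ dist (x τ) xstar := by
    intro τ τ' h1 h2
    have h3 := hantiglob h1 (le_trans h1 h2) h2
    simp only [hφdef, ← dist_eq_norm] at h3
    nlinarith [dist_nonneg (x := x τ') (y := xstar), dist_nonneg (x := x τ) (y := xstar)]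
  set ψ : ℝ → ℝ := fun τ => V τ (x τ) with hψdef
  have hψd : ∀ τ ∈ Ici t₀, ∃ dv : ℝ,
      HasDerivWithinAt ψ dv (Ici t₀) τ ∧ dv ≤ -W₃ (x τ) := by
    intro τ hτ
    have hτ0 : (0:ℝ) ≤ τ := le_trans ht₀ hτ
    set S' : Set (ℝ × EuclideanSpace ℝ (Fin n)) := Ici (0:ℝ) ×ˢ D with hS'def
    have hmem : (τ, x τ) ∈ S' := ⟨hτ0, hxD τ hτ⟩
    have hFdiff := (hV.differentiableOn one_ne_zero) _ hmem
    set L := fderivWithin ℝ (fun p : ℝ × EuclideanSpace ℝ (Fin n) => V p.1 p.2) S' (τ, x τ)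
      with hLdef
    have hL : HasFDerivWithinAt (fun p : ℝ × EuclideanSpace ℝ (Fin n) => V p.1 p.2)
        L S' (τ, x τ) := hFdiff.hasFDerivWithinAt
    have hcurve : HasDerivWithinAt (fun σ : ℝ => (σ, x σ)) ((1:ℝ), f τ (x τ)) (Ici t₀) τ :=
      (hasDerivWithinAt_id τ _).prodMk (hxder τ hτ)
    have hmaps : MapsTo (fun σ : ℝ => (σ, x σ)) (Ici t₀) S' :=
      fun σ hσ => ⟨le_trans ht₀ hσ, hxD σ hσ⟩
    have hψτ : HasDerivWithinAt ψ (L (1, f τ (x τ))) (Ici t₀) τ :=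
      by have := hL.comp_hasDerivWithinAt τ hcurve hmaps; exact this
    have hcurve2 : HasDerivWithinAt (fun σ : ℝ => (σ, x τ))
        ((1:ℝ), (0 : EuclideanSpace ℝ (Fin n))) (Ici (0:ℝ)) τ :=
      (hasDerivWithinAt_id τ _).prodMk (hasDerivWithinAt_const τ _ _)
    have hmaps2 : MapsTo (fun σ : ℝ => (σ, x τ)) (Ici (0:ℝ)) S' :=
      fun σ hσ => ⟨hσ, hxD τ hτ⟩
    have hpt : HasDerivWithinAt (fun σ => V σ (x τ)) (L (1, 0)) (Ici (0:ℝ)) τ :=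
      by have := hL.comp_hasDerivWithinAt τ hcurve2 hmaps2; exact this
    have hptd : derivWithin (fun σ => V σ (x τ)) (Ici (0:ℝ)) τ = L (1, 0) :=
      hpt.derivWithin (uniqueDiffOn_Ici 0 τ hτ0)
    have hinr : HasFDerivAt (fun y : EuclideanSpace ℝ (Fin n) => ((τ : ℝ), y))
        (ContinuousLinearMap.inr ℝ ℝ (EuclideanSpace ℝ (Fin n))) (x τ) :=
      hasFDerivAt_prodMk_right τ (x τ)
    have hmaps3 : MapsTo (fun y : EuclideanSpace ℝ (Fin n) => ((τ : ℝ), y)) D S' :=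
      fun y hy => ⟨hτ0, hy⟩
    have hpx : HasFDerivWithinAt (V τ)
        (L.comp (ContinuousLinearMap.inr ℝ ℝ (EuclideanSpace ℝ (Fin n)))) D (x τ) :=
      hL.comp (x τ) hinr.hasFDerivWithinAt hmaps3
    have hpx' : HasFDerivAt (V τ)
        (L.comp (ContinuousLinearMap.inr ℝ ℝ (EuclideanSpace ℝ (Fin n)))) (x τ) :=
      hpx.hasFDerivAt (hD.mem_nhds (hxD τ hτ))
    have hfd : fderiv ℝ (V τ) (x τ) (f τ (x τ)) = L (0, f τ (x τ)) := by
      rw [hpx'.fderiv]; rfl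
    have hsum : L (1, f τ (x τ)) = L (1, 0) + L (0, f τ (x τ)) := by
      have hadd : ((1:ℝ), (0 : EuclideanSpace ℝ (Fin n))) + ((0:ℝ), f τ (x τ))
          = ((1:ℝ), f τ (x τ)) := by simp
      rw [← hadd, map_add]
    refine ⟨L (1, f τ (x τ)), hψτ, ?_⟩
    have hVd := hVderiv τ hτ0 (x τ) (hxD τ hτ)
    rw [hptd, hfd] at hVd
    rw [hsum]
    linarith
  have hψcont : ContinuousOn ψ (Ici t₀) :=
    fun τ hτ => ((hψd τ hτ).choose_spec.1).continuousWithinAt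
  set r := dist (x t₀) xstar with hrdef
  have hr0 : 0 ≤ r := dist_nonneg
  have hrlt : r < r₀ := mem_ball.mp hx0
  have hkey : ∀ ε : ℝ, 0 < ε → T r ε ≤ t - t₀ → dist (x t) xstar ≤ ε := by
    intro ε hε hTle
    by_cases hεr : r < ε
    · exact le_trans (hdistmono le_rfl ht) (le_of_lt hεr)
    · push_neg at hεr
      by_contra hc
      push_neg at hc
      have hall : ∀ τ ∈ Icc t₀ t, ε < dist (x τ) xstar := fun τ hτ =>
        lt_of_lt_of_le hc (hdistmono hτ.1 hτ.2)
      set m := mf ε r with hm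
      have hmp : 0 < m := hmpos hε hεr hrlt
      have hMr := hMnn hr0 hrlt
      set χ : ℝ → ℝ := fun τ => ψ τ + m * τ with hχdef
      have ht₀t : t₀ ≤ t := ht
      have hχanti : AntitoneOn χ (Icc t₀ t) := by
        apply antitoneOn_of_deriv_nonpos (convex_Icc t₀ t)
        · exact (hψcont.mono Icc_subset_Ici_self).add
            (continuousOn_const.mul continuousOn_id)
        · intro τ hτ
          rw [interior_Icc] at hτ
          obtain ⟨dv, hdv, hdvle⟩ := hψd τ (le_of_lt hτ.1)
          have h2 : HasDerivAt ψ dv τ := hdv.hasDerivAt (Ici_mem_nhds hτ.1)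
          have h3 : HasDerivAt (fun σ : ℝ => m * σ) m τ := by
            simpa using (hasDerivAt_id τ).const_mul m
          exact (h2.add h3).differentiableAt.differentiableWithinAt
        · intro τ hτ
          rw [interior_Icc] at hτ
          obtain ⟨dv, hdv, hdvle⟩ := hψd τ (le_of_lt hτ.1)
          have h2 : HasDerivAt ψ dv τ := hdv.hasDerivAt (Ici_mem_nhds hτ.1)
          have h3 : HasDerivAt (fun σ : ℝ => m * σ) m τ := by
            simpa using (hasDerivAt_id τ).const_mul m
          rw [(show HasDerivAt χ (dv + m) τ from h2.add h3).deriv]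
          have hxA : x τ ∈ A ε r := ⟨le_of_lt (hall τ (Ioo_subset_Icc_self hτ)),
            hdistmono le_rfl (le_of_lt hτ.1)⟩
          have h4 := hmle hrlt hxA
          linarith
      have hc1 : χ t ≤ χ t₀ :=
        hχanti (left_mem_Icc.mpr ht₀t) (right_mem_Icc.mpr ht₀t) ht₀t
      have hψt₀ : ψ t₀ ≤ Mf r := by
        have h1 := (hVbound t₀ ht₀ (x t₀) (hxD t₀ self_mem_Ici)).2
        exact le_trans h1 (hMle hrlt (mem_closedBall.mpr le_rfl))
      have hψt : 0 ≤ ψ t := by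
        have h1 := (hVbound t (le_trans ht₀ ht) (x t) (hxD t ht)).1
        exact le_trans (hWnn W₁ hW₁ (x t) (hxD t ht)) h1
      have hineq : m * (t - t₀) ≤ Mf r := by
        simp only [hχdef] at hc1
        nlinarith
      have h2 : t - t₀ ≤ Mf r / m := by
        rw [le_div_iff₀ hmp]
        calc (t - t₀) * m = m * (t - t₀) := by ring
          _ ≤ Mf r := hineq
      simp only [hTdef] at hTle
      rw [← hm] at hTle
      linarith
  have hgb : dist (x t) xstar ≤ g r (t - t₀) := by
    apply le_csInf (hgSne r (t - t₀))
    rintro b (rfl | ⟨hb, hTb⟩)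
    · exact hdistmono le_rfl ht
    · exact hkey b hb hTb
  calc dist (x t) xstar ≤ g r (t - t₀) := hgb
    _ ≤ β r (t - t₀) := hβg r (t - t₀) hr0 hrlt
end
end

section
/- Let a > 0, A = (0, a), and define ρ : H² × H² → ℝ by ρ(x, x̂) = ln[(s₊ + s₋)/(s₊ − s₋)] with s± = √((x₁ − x̂₁)² + (x₂ ± x̂₂)²), and S(x) = √(x₁² + (a + x₂)²) · √(x₁² + (a − x₂)²). Then for every x = (x₁, x₂) ∈ H² with x ≠ A, the function x ↦ ρ(x, A)² is differentiable at x with partial derivatives ∂/∂x₁ [ρ(x,A)²] = 4 ρ(x,A) x₁ / S(x) and ∂/∂x₂ [ρ(x,A)²] = 2 ρ(x,A) (x₂² − x₁² − a²) / (x₂ S(x)). -/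
open Set Filter Topology

noncomputable section

theorem stmt_8 (a : ℝ) (ha : 0 < a)
    (A : ℝ × ℝ) (hA : A = ((0 : ℝ), a))
    -- the hyperbolic distance of the Poincaré upper half-plane model
    (ρ : ℝ × ℝ → ℝ × ℝ → ℝ)
    (hρ : ∀ x y : ℝ × ℝ, ρ x y =
      Real.log
        ((Real.sqrt ((x.1 - y.1) ^ 2 + (x.2 + y.2) ^ 2) +
            Real.sqrt ((x.1 - y.1) ^ 2 + (x.2 - y.2) ^ 2)) /
          (Real.sqrt ((x.1 - y.1) ^ 2 + (x.2 + y.2) ^ 2) -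
            Real.sqrt ((x.1 - y.1) ^ 2 + (x.2 - y.2) ^ 2))))
    (S : ℝ × ℝ → ℝ)
    (hS : ∀ x : ℝ × ℝ, S x =
      Real.sqrt (x.1 ^ 2 + (a + x.2) ^ 2) * Real.sqrt (x.1 ^ 2 + (a - x.2) ^ 2)) :
    ∀ x : ℝ × ℝ, 0 < x.2 → x ≠ A →
      ∃ L : ℝ × ℝ →L[ℝ] ℝ,
        HasFDerivAt (fun y : ℝ × ℝ => ρ y A ^ 2) L x ∧
        L (1, 0) = 4 * ρ x A * x.1 / S x ∧
        L (0, 1) = 2 * ρ x A * (x.2 ^ 2 - x.1 ^ 2 - a ^ 2) / (x.2 * S x) := by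
  subst hA
  rintro ⟨p, q⟩ hq hxA
  simp only at hq
  -- basic positivity facts
  have hqa : 0 < q + a := by linarith
  have hsp2 : (0:ℝ) < p ^ 2 + (q + a) ^ 2 := by positivity
  have hsm2 : (0:ℝ) < p ^ 2 + (q - a) ^ 2 := by
    rcases (by positivity : (0:ℝ) ≤ p ^ 2 + (q - a) ^ 2).lt_or_eq with h | h
    · exact h
    · exfalso
      have hp0 : p = 0 := by nlinarith [sq_nonneg p, sq_nonneg (q - a)]
      have hq0 : q = a := by nlinarith [sq_nonneg p, sq_nonneg (q - a)]
      exact hxA (by simp [hp0, hq0])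
  set sp := Real.sqrt (p ^ 2 + (q + a) ^ 2) with hsp_def
  set sm := Real.sqrt (p ^ 2 + (q - a) ^ 2) with hsm_def
  have hsp : 0 < sp := Real.sqrt_pos.2 hsp2
  have hsm : 0 < sm := Real.sqrt_pos.2 hsm2
  have hsp_sq : sp ^ 2 = p ^ 2 + (q + a) ^ 2 := Real.sq_sqrt hsp2.le
  have hsm_sq : sm ^ 2 = p ^ 2 + (q - a) ^ 2 := Real.sq_sqrt hsm2.le
  have hlt : sm < sp := by
    rw [hsp_def, hsm_def]
    apply Real.sqrt_lt_sqrt hsm2.le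
    nlinarith
  have hdpos : 0 < sp - sm := by linarith
  have hspos : 0 < sp + sm := by linarith
  -- derivatives of the two square roots
  have hin₁ : HasFDerivAt (fun y : ℝ × ℝ => y.1 ^ 2 + (y.2 + a) ^ 2)
      ((2 * p) • ContinuousLinearMap.fst ℝ ℝ ℝ + (2 * (q + a)) • ContinuousLinearMap.snd ℝ ℝ ℝ)
      (p, q) := by
    have h1 : HasFDerivAt (fun y : ℝ × ℝ => y.1 ^ 2)
        ((2 * p) • ContinuousLinearMap.fst ℝ ℝ ℝ) (p, q) := by
      have := (hasDerivAt_pow 2 p).comp_hasFDerivAt (p, q) (hasFDerivAt_fst : HasFDerivAt Prod.fst (ContinuousLinearMap.fst ℝ ℝ ℝ) (p, q))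
      simpa [Function.comp_def] using this
    have h2 : HasFDerivAt (fun y : ℝ × ℝ => (y.2 + a) ^ 2)
        ((2 * (q + a)) • ContinuousLinearMap.snd ℝ ℝ ℝ) (p, q) := by
      have := (hasDerivAt_pow 2 (q + a)).comp_hasFDerivAt (p, q)
        ((hasFDerivAt_snd : HasFDerivAt Prod.snd (ContinuousLinearMap.snd ℝ ℝ ℝ) (p, q)).add_const a)
      simpa [Function.comp_def] using this
    exact h1.add h2
  have hin₂ : HasFDerivAt (fun y : ℝ × ℝ => y.1 ^ 2 + (y.2 - a) ^ 2)
      ((2 * p) • ContinuousLinearMap.fst ℝ ℝ ℝ + (2 * (q - a)) • ContinuousLinearMap.snd ℝ ℝ ℝ)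
      (p, q) := by
    have h1 : HasFDerivAt (fun y : ℝ × ℝ => y.1 ^ 2)
        ((2 * p) • ContinuousLinearMap.fst ℝ ℝ ℝ) (p, q) := by
      have := (hasDerivAt_pow 2 p).comp_hasFDerivAt (p, q) (hasFDerivAt_fst : HasFDerivAt Prod.fst (ContinuousLinearMap.fst ℝ ℝ ℝ) (p, q))
      simpa [Function.comp_def] using this
    have h2 : HasFDerivAt (fun y : ℝ × ℝ => (y.2 - a) ^ 2)
        ((2 * (q - a)) • ContinuousLinearMap.snd ℝ ℝ ℝ) (p, q) := by
      have := (hasDerivAt_pow 2 (q - a)).comp_hasFDerivAt (p, q)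
        ((hasFDerivAt_snd : HasFDerivAt Prod.snd (ContinuousLinearMap.snd ℝ ℝ ℝ) (p, q)).sub_const a)
      simpa [Function.comp_def] using this
    exact h1.add h2
  have hu : HasFDerivAt (fun y : ℝ × ℝ => Real.sqrt (y.1 ^ 2 + (y.2 + a) ^ 2)) _ (p, q) :=
    (Real.hasDerivAt_sqrt hsp2.ne').comp_hasFDerivAt (p, q) hin₁
  have hv : HasFDerivAt (fun y : ℝ × ℝ => Real.sqrt (y.1 ^ 2 + (y.2 - a) ^ 2)) _ (p, q) :=
    (Real.hasDerivAt_sqrt hsm2.ne').comp_hasFDerivAt (p, q) hin₂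
  have hlog₁ : HasFDerivAt (fun y : ℝ × ℝ =>
      Real.log (Real.sqrt (y.1 ^ 2 + (y.2 + a) ^ 2) + Real.sqrt (y.1 ^ 2 + (y.2 - a) ^ 2))) _
      (p, q) := (hu.add hv).log hspos.ne'
  have hlog₂ : HasFDerivAt (fun y : ℝ × ℝ =>
      Real.log (Real.sqrt (y.1 ^ 2 + (y.2 + a) ^ 2) - Real.sqrt (y.1 ^ 2 + (y.2 - a) ^ 2))) _
      (p, q) := (hu.sub hv).log hdpos.ne'
  have hρ' := hlog₁.sub hlog₂
  have hF := (hasDerivAt_pow 2 (Real.log (sp + sm) - Real.log (sp - sm))).comp_hasFDerivAt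
      (p, q) hρ'
  -- the value of ρ at the point
  have hρx : ρ (p, q) ((0:ℝ), a) = Real.log (sp + sm) - Real.log (sp - sm) := by
    rw [hρ]
    simp only [sub_zero]
    rw [Real.log_div hspos.ne' hdpos.ne']
  -- eventual equality
  have hcont : ContinuousAt (fun y : ℝ × ℝ =>
      Real.sqrt (y.1 ^ 2 + (y.2 + a) ^ 2) - Real.sqrt (y.1 ^ 2 + (y.2 - a) ^ 2)) (p, q) :=
    (hu.continuousAt).sub (hv.continuousAt)
  have hev : ∀ᶠ y : ℝ × ℝ in 𝓝 (p, q),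
      0 < Real.sqrt (y.1 ^ 2 + (y.2 + a) ^ 2) - Real.sqrt (y.1 ^ 2 + (y.2 - a) ^ 2) :=
    hcont (Ioi_mem_nhds hdpos)
  have heq : (fun y : ℝ × ℝ => ρ y ((0:ℝ), a) ^ 2) =ᶠ[𝓝 ((p : ℝ), q)]
      (fun y : ℝ × ℝ => (Real.log (Real.sqrt (y.1 ^ 2 + (y.2 + a) ^ 2)
          + Real.sqrt (y.1 ^ 2 + (y.2 - a) ^ 2))
        - Real.log (Real.sqrt (y.1 ^ 2 + (y.2 + a) ^ 2)
          - Real.sqrt (y.1 ^ 2 + (y.2 - a) ^ 2))) ^ 2) := by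
    filter_upwards [hev] with y hy
    have hsum : 0 < Real.sqrt (y.1 ^ 2 + (y.2 + a) ^ 2) + Real.sqrt (y.1 ^ 2 + (y.2 - a) ^ 2) := by
      have := Real.sqrt_nonneg (y.1 ^ 2 + (y.2 - a) ^ 2)
      linarith
    rw [hρ]
    simp only [sub_zero]
    rw [Real.log_div hsum.ne' hy.ne']
  refine ⟨_, hF.congr_of_eventuallyEq heq, ?_, ?_⟩
  · rw [hS]
    simp only [ContinuousLinearMap.smul_apply, ContinuousLinearMap.add_apply,
      ContinuousLinearMap.sub_apply, ContinuousLinearMap.coe_fst', ContinuousLinearMap.coe_snd',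
      smul_eq_mul, Pi.add_apply, Pi.sub_apply, hρx]
    rw [show a + q = q + a from add_comm a q, show (a - q) ^ 2 = (q - a) ^ 2 by ring,
      ← hsp_def, ← hsm_def]
    set r := Real.log (sp + sm) - Real.log (sp - sm)
    field_simp
    ring
  · rw [hS]
    simp only [ContinuousLinearMap.smul_apply, ContinuousLinearMap.add_apply,
      ContinuousLinearMap.sub_apply, ContinuousLinearMap.coe_fst', ContinuousLinearMap.coe_snd',
      smul_eq_mul, Pi.add_apply, Pi.sub_apply, hρx]
    rw [show a + q = q + a from add_comm a q, show (a - q) ^ 2 = (q - a) ^ 2 by ring,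
      ← hsp_def, ← hsm_def]
    set r := Real.log (sp + sm) - Real.log (sp - sm)
    field_simp
    linear_combination (2*r*(p^2+(q-a)^2)) * hsp_sq - (2*r*(p^2+(q+a)^2)) * hsm_sq
end
end

section
/- Let a > 0, A = (0, a), let d : [0,∞) × H² → ℝ, and define f₁(t,x) = −2 d(t,x) x₁ x₂² and f₂(t,x) = d(t,x) x₂ (a² + x₁² − x₂²). Let ρ(x, A) = ln[(s₊ + s₋)/(s₊ − s₋)] with s± = √(x₁² + (x₂ ± a)²) and S(x) = √(x₁² + (a + x₂)²)·√(x₁² + (a − x₂)²). Then for every t ≥ 0 and every x ∈ H² with x ≠ A, the derivative of V(x) := ρ(x, A)² along the vector field f satisfies ∂V/∂x₁ · f₁(t,x) + ∂V/∂x₂ · f₂(t,x) = −2 d(t,x) ρ(x,A) (4 x₁² x₂² + (x₂² − x₁² − a²)²) / S(x). -/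
open Set Filter Topology

noncomputable section

private lemma logder_aux (cu cv : ℝ → ℝ) (p u v du dv : ℝ)
    (hcu : HasDerivAt cu du p) (hcv : HasDerivAt cv dv p)
    (hup : 0 < cu p) (hvp : 0 < cv p)
    (hu : u = Real.sqrt (cu p)) (hv : v = Real.sqrt (cv p))
    (hv0 : 0 < v) (hvu : v < u) :
    HasDerivAt (fun s => Real.log ((Real.sqrt (cu s) + Real.sqrt (cv s)) /
        (Real.sqrt (cu s) - Real.sqrt (cv s))))
      ((dv * u ^ 2 - du * v ^ 2) / (u * v * (u - v) * (u + v))) p := by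
  have hu0 : 0 < u := lt_trans hv0 hvu
  have hUV : u - v ≠ 0 := sub_ne_zero.mpr (ne_of_gt hvu)
  have hUVp : 0 < u + v := by linarith
  have hU : HasDerivAt (fun s => Real.sqrt (cu s)) (du / (2 * u)) p := by
    have h := (Real.hasDerivAt_sqrt (ne_of_gt hup)).comp p hcu
    refine h.congr_deriv ?_
    rw [← hu]; ring
  have hV : HasDerivAt (fun s => Real.sqrt (cv s)) (dv / (2 * v)) p := by
    have h := (Real.hasDerivAt_sqrt (ne_of_gt hvp)).comp p hcv
    refine h.congr_deriv ?_
    rw [← hv]; ring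
  have hW := (hU.add hV).div (hU.sub hV) (by
    show Real.sqrt (cu p) - Real.sqrt (cv p) ≠ 0
    rw [← hu, ← hv]
    exact hUV)
  have hWne : (Real.sqrt (cu p) + Real.sqrt (cv p)) /
      (Real.sqrt (cu p) - Real.sqrt (cv p)) ≠ 0 := by
    rw [← hu, ← hv]
    exact ne_of_gt (div_pos hUVp (by linarith))
  have hlog := (Real.hasDerivAt_log (by simpa using hWne)).comp p hW
  refine hlog.congr_deriv ?_
  simp only [Pi.add_apply, Pi.sub_apply, Pi.div_apply]
  rw [← hu, ← hv]
  field_simp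
  ring

theorem stmt_10 (a : ℝ) (ha : 0 < a)
    (A : ℝ × ℝ) (hA : A = ((0 : ℝ), a))
    (d : ℝ → ℝ × ℝ → ℝ)
    (f₁ f₂ : ℝ → ℝ × ℝ → ℝ)
    (hf₁ : ∀ t x, f₁ t x = -2 * d t x * x.1 * x.2 ^ 2)
    (hf₂ : ∀ t x, f₂ t x = d t x * x.2 * (a ^ 2 + x.1 ^ 2 - x.2 ^ 2))
    -- the hyperbolic distance of the Poincaré upper half-plane model
    (ρ : ℝ × ℝ → ℝ × ℝ → ℝ)
    (hρ : ∀ x y : ℝ × ℝ, ρ x y =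
      Real.log
        ((Real.sqrt ((x.1 - y.1) ^ 2 + (x.2 + y.2) ^ 2) +
            Real.sqrt ((x.1 - y.1) ^ 2 + (x.2 - y.2) ^ 2)) /
          (Real.sqrt ((x.1 - y.1) ^ 2 + (x.2 + y.2) ^ 2) -
            Real.sqrt ((x.1 - y.1) ^ 2 + (x.2 - y.2) ^ 2))))
    (S : ℝ × ℝ → ℝ)
    (hS : ∀ x : ℝ × ℝ, S x =
      Real.sqrt (x.1 ^ 2 + (a + x.2) ^ 2) * Real.sqrt (x.1 ^ 2 + (a - x.2) ^ 2)) :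
    ∀ t ∈ Ici (0 : ℝ), ∀ x : ℝ × ℝ, 0 < x.2 → x ≠ A →
      deriv (fun s => ρ (s, x.2) A ^ 2) x.1 * f₁ t x +
        deriv (fun s => ρ (x.1, s) A ^ 2) x.2 * f₂ t x =
      -2 * d t x * ρ x A * (4 * x.1 ^ 2 * x.2 ^ 2 + (x.2 ^ 2 - x.1 ^ 2 - a ^ 2) ^ 2) / S x := by
  intro t ht x hx2 hxA
  obtain ⟨p, q⟩ := x
  simp only at hx2 ⊢
  subst hA
  have hxA' : ¬(p = 0 ∧ q = a) := by
    intro ⟨h1, h2⟩; exact hxA (by simp [h1, h2])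
  -- basic positivity
  have hqa : 0 < q + a := by linarith
  have hPpos : 0 < p ^ 2 + (q + a) ^ 2 := by positivity
  have hQpos : 0 < p ^ 2 + (q - a) ^ 2 := by
    rcases eq_or_ne p 0 with hp | hp
    · have hq : q - a ≠ 0 := sub_ne_zero.mpr (fun h => hxA' ⟨hp, h⟩)
      have : (q - a) ^ 2 > 0 := by positivity
      nlinarith [sq_nonneg p]
    · have : p ^ 2 > 0 := by positivity
      nlinarith [sq_nonneg (q - a)]
  set u := Real.sqrt (p ^ 2 + (q + a) ^ 2) with hu
  set v := Real.sqrt (p ^ 2 + (q - a) ^ 2) with hv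
  have hu0 : 0 < u := Real.sqrt_pos.mpr hPpos
  have hv0 : 0 < v := Real.sqrt_pos.mpr hQpos
  have hu2 : u ^ 2 = p ^ 2 + (q + a) ^ 2 := Real.sq_sqrt hPpos.le
  have hv2 : v ^ 2 = p ^ 2 + (q - a) ^ 2 := Real.sq_sqrt hQpos.le
  have hvu : v < u := by nlinarith
  have hUV : u - v ≠ 0 := sub_ne_zero.mpr (ne_of_gt hvu)
  have hUVp : (0:ℝ) < u + v := by linarith
  -- derivative in the first variable
  have hc1u : HasDerivAt (fun s : ℝ => s ^ 2 + (q + a) ^ 2) (2 * p) p := by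
    simpa using (hasDerivAt_pow 2 p).add_const ((q + a) ^ 2)
  have hc1v : HasDerivAt (fun s : ℝ => s ^ 2 + (q - a) ^ 2) (2 * p) p := by
    simpa using (hasDerivAt_pow 2 p).add_const ((q - a) ^ 2)
  have hL1 := logder_aux (fun s : ℝ => s ^ 2 + (q + a) ^ 2)
    (fun s : ℝ => s ^ 2 + (q - a) ^ 2) p u v (2 * p) (2 * p)
    hc1u hc1v hPpos hQpos hu hv hv0 hvu
  have hD1 : (2 * p * u ^ 2 - 2 * p * v ^ 2) / (u * v * (u - v) * (u + v))
      = 2 * p / (u * v) := by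
    field_simp
    ring
  rw [hD1] at hL1
  -- derivative in the second variable
  have hc2u : HasDerivAt (fun s : ℝ => p ^ 2 + (s + a) ^ 2) (2 * (q + a)) q := by
    have h := (((hasDerivAt_id q).add_const a).pow 2).const_add (p ^ 2)
    simpa using h
  have hc2v : HasDerivAt (fun s : ℝ => p ^ 2 + (s - a) ^ 2) (2 * (q - a)) q := by
    have h := (((hasDerivAt_id q).sub_const a).pow 2).const_add (p ^ 2)
    simpa using h
  have hL2 := logder_aux (fun s : ℝ => p ^ 2 + (s + a) ^ 2)
    (fun s : ℝ => p ^ 2 + (s - a) ^ 2) q u v (2 * (q + a)) (2 * (q - a))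
    hc2u hc2v hPpos hQpos hu hv hv0 hvu
  have hD2 : (2 * (q - a) * u ^ 2 - 2 * (q + a) * v ^ 2) / (u * v * (u - v) * (u + v))
      = (q ^ 2 - a ^ 2 - p ^ 2) / (q * (u * v)) := by
    rw [div_eq_div_iff (mul_pos (mul_pos (mul_pos hu0 hv0) (sub_pos.mpr hvu)) hUVp).ne'
      (by positivity)]
    linear_combination (u * v * (2 * q * (q - a) - (q ^ 2 - a ^ 2 - p ^ 2))) * hu2 +
      (u * v * ((q ^ 2 - a ^ 2 - p ^ 2) - 2 * q * (q + a))) * hv2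
  rw [hD2] at hL2
  -- the log value
  set L := Real.log ((u + v) / (u - v)) with hL
  -- derivative of the squared function, variable 1
  have hsq1 : HasDerivAt (fun s : ℝ => Real.log ((Real.sqrt (s ^ 2 + (q + a) ^ 2) +
      Real.sqrt (s ^ 2 + (q - a) ^ 2)) / (Real.sqrt (s ^ 2 + (q + a) ^ 2) -
      Real.sqrt (s ^ 2 + (q - a) ^ 2))) ^ 2) (2 * L * (2 * p / (u * v))) p := by
    have h := hL1.pow 2
    refine h.congr_deriv ?_
    simp [hL]
    exact Or.inl rfl
  have hsq2 : HasDerivAt (fun s : ℝ => Real.log ((Real.sqrt (p ^ 2 + (s + a) ^ 2) +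
      Real.sqrt (p ^ 2 + (s - a) ^ 2)) / (Real.sqrt (p ^ 2 + (s + a) ^ 2) -
      Real.sqrt (p ^ 2 + (s - a) ^ 2))) ^ 2) (2 * L * ((q ^ 2 - a ^ 2 - p ^ 2) / (q * (u * v)))) q := by
    have h := hL2.pow 2
    refine h.congr_deriv ?_
    simp [hL]
    exact Or.inl rfl
  have he1 : (fun s : ℝ => ρ (s, q) ((0:ℝ), a) ^ 2) = (fun s : ℝ =>
      Real.log ((Real.sqrt (s ^ 2 + (q + a) ^ 2) + Real.sqrt (s ^ 2 + (q - a) ^ 2)) /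
        (Real.sqrt (s ^ 2 + (q + a) ^ 2) - Real.sqrt (s ^ 2 + (q - a) ^ 2))) ^ 2) := by
    funext s
    rw [hρ]
    norm_num
  have he2 : (fun s : ℝ => ρ (p, s) ((0:ℝ), a) ^ 2) = (fun s : ℝ =>
      Real.log ((Real.sqrt (p ^ 2 + (s + a) ^ 2) + Real.sqrt (p ^ 2 + (s - a) ^ 2)) /
        (Real.sqrt (p ^ 2 + (s + a) ^ 2) - Real.sqrt (p ^ 2 + (s - a) ^ 2))) ^ 2) := by
    funext s
    rw [hρ]
    norm_num
  rw [he1, he2, hsq1.deriv, hsq2.deriv, hf₁, hf₂]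
  have hρx : ρ (p, q) ((0:ℝ), a) = L := by
    rw [hρ]
    norm_num [hL, hu, hv]
  have hSx : S (p, q) = u * v := by
    rw [hS]
    simp only
    rw [hu, hv]
    congr 2 <;> ring
  rw [hρx, hSx]
  simp only
  field_simp
  ring
end
end

section
/- Under the stated hypotheses on d and k, there exists a class KL function β defined on [0,∞) × [0,∞) such that for every t₀ ≥ 0, every x₀ ∈ H², and every solution x(·) : [t₀,∞) → H² of the system ẋ(t) = f(t, x(t)) with x(t₀) = x₀ (so in particular x₂(t) > 0 for all t ≥ t₀), one has ρ(x(t), A) ≤ β(ρ(x₀, A), t − t₀) for all t ≥ t₀ ≥ 0; hence the equilibrium point A is uniformly asymptotically stable in all of H² with respect to the hyperbolic metric. -/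
open Set Filter Metric Topology
open scoped ENNReal NNReal

noncomputable section

set_option maxHeartbeats 1000000
namespace S11
open intervalIntegral

def Vf (a : ℝ) (x : ℝ × ℝ) : ℝ := (x.1^2 + x.2^2 + a^2)/(2*a*x.2)
def Lf (v : ℝ) : ℝ := Real.log (v + Real.sqrt (v^2 - 1))

lemma Vf_ge_one {a : ℝ} (ha : 0 < a) {x : ℝ × ℝ} (hx : 0 < x.2) : 1 ≤ Vf a x := by
  rw [Vf, le_div_iff₀ (by positivity)]
  nlinarith [sq_nonneg (x.2 - a), sq_nonneg x.1]

lemma Vf_eq {a : ℝ} (ha : 0 < a) (x : ℝ × ℝ) (hx : 0 < x.2) :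
    2*a*x.2 * Vf a x = x.1^2 + x.2^2 + a^2 := by
  rw [Vf, mul_div_cancel₀ _ (by positivity)]

lemma Vf_eq_one_iff {a : ℝ} (ha : 0 < a) {x : ℝ × ℝ} (hx : 0 < x.2) :
    Vf a x = 1 ↔ x = (0, a) := by
  constructor
  · intro h
    have h2 := Vf_eq ha x hx
    rw [h, mul_one] at h2
    have h1 : x.1 = 0 ∧ x.2 = a := by
      constructor <;> nlinarith [sq_nonneg x.1, sq_nonneg (x.2 - a)]
    exact Prod.ext h1.1 h1.2
  · rintro rfl; simp only [Vf]; field_simp; ring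

lemma Vf_x2_ge {a : ℝ} (ha : 0 < a) {x : ℝ × ℝ} (hx : 0 < x.2) : a ≤ 2 * Vf a x * x.2 := by
  have h2 := Vf_eq ha x hx
  nlinarith [sq_nonneg x.1, sq_nonneg x.2]

lemma Lf_nonneg {v : ℝ} (hv : 1 ≤ v) : 0 ≤ Lf v := by
  rw [Lf]
  apply Real.log_nonneg
  nlinarith [Real.sqrt_nonneg (v^2-1)]

lemma Lf_mono {v w : ℝ} (hv : 1 ≤ v) (hw : v ≤ w) : Lf v ≤ Lf w := by
  rw [Lf, Lf]
  apply Real.log_le_log (by nlinarith [Real.sqrt_nonneg (v^2-1)])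
  have := Real.sqrt_le_sqrt (show v^2 - 1 ≤ w^2 - 1 by nlinarith)
  linarith

lemma Lf_strictMono {v w : ℝ} (hv : 1 ≤ v) (hw : v < w) : Lf v < Lf w := by
  rw [Lf, Lf]
  apply Real.log_lt_log (by nlinarith [Real.sqrt_nonneg (v^2-1)])
  have := Real.sqrt_le_sqrt (show v^2 - 1 ≤ w^2 - 1 by nlinarith)
  linarith

lemma Lf_one : Lf 1 = 0 := by rw [Lf]; norm_num

lemma cosh_Lf {v : ℝ} (hv : 1 ≤ v) : Real.cosh (Lf v) = v := by
  have hq : Real.sqrt (v^2-1) ^ 2 = v^2 - 1 := Real.sq_sqrt (by nlinarith)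
  have hq0 : 0 ≤ Real.sqrt (v^2-1) := Real.sqrt_nonneg _
  have hpos : 0 < v + Real.sqrt (v^2-1) := by nlinarith
  have hinv : (v + Real.sqrt (v^2-1))⁻¹ = v - Real.sqrt (v^2-1) :=
    inv_eq_of_mul_eq_one_right (by nlinarith)
  rw [Real.cosh_eq, Lf, Real.exp_log hpos, ← Real.log_inv, Real.exp_log (by positivity), hinv]
  ring

lemma Lf_contAt {v : ℝ} (hv : 1 ≤ v) : ContinuousAt Lf v := by
  have hq0 : 0 ≤ Real.sqrt (v^2-1) := Real.sqrt_nonneg _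
  have h1 : ContinuousAt (fun v : ℝ => v + Real.sqrt (v^2-1)) v := by fun_prop
  exact (Real.continuousAt_log (by nlinarith)).comp h1

lemma ratio_eq {a : ℝ} (ha : 0 < a) {x : ℝ × ℝ} (hx : 0 < x.2) :
    (Real.sqrt ((x.1 - 0)^2 + (x.2 + a)^2) + Real.sqrt ((x.1 - 0)^2 + (x.2 - a)^2)) /
      (Real.sqrt ((x.1 - 0)^2 + (x.2 + a)^2) - Real.sqrt ((x.1 - 0)^2 + (x.2 - a)^2))
    = Vf a x + Real.sqrt ((Vf a x)^2 - 1) := by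
  set w := Real.sqrt ((x.1 - 0)^2 + (x.2 + a)^2) with hw
  set u := Real.sqrt ((x.1 - 0)^2 + (x.2 - a)^2) with hu
  set v := Vf a x with hv
  set q := Real.sqrt (v^2 - 1) with hqdef
  have hv1 : 1 ≤ v := Vf_ge_one ha hx
  have hveq := Vf_eq ha x hx
  have hw2 : w^2 = (x.1 - 0)^2 + (x.2 + a)^2 := Real.sq_sqrt (by positivity)
  have hu2 : u^2 = (x.1 - 0)^2 + (x.2 - a)^2 := Real.sq_sqrt (by positivity)
  have hw0 : 0 ≤ w := Real.sqrt_nonneg _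
  have hu0 : 0 ≤ u := Real.sqrt_nonneg _
  have hq0 : 0 ≤ q := Real.sqrt_nonneg _
  have hq2 : q^2 = v^2 - 1 := Real.sq_sqrt (by nlinarith)
  have hdiff : w^2 - u^2 = 4*a*x.2 := by rw [hw2, hu2]; ring
  have hwu : u < w := by nlinarith
  have hsum : w^2 + u^2 = 4*a*x.2*v := by rw [hw2, hu2]; nlinarith
  have huw : u * w = 2*a*x.2*q := by
    have h1 : u * w = Real.sqrt (((x.1 - 0)^2 + (x.2 - a)^2) * ((x.1 - 0)^2 + (x.2 + a)^2)) :=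
      (Real.sqrt_mul (by positivity) _).symm
    have h2 : ((x.1 - 0)^2 + (x.2 - a)^2) * ((x.1 - 0)^2 + (x.2 + a)^2)
        = (2*a*x.2)^2 * (v^2 - 1) := by nlinarith
    rw [h1, h2, Real.sqrt_mul (by positivity), Real.sqrt_sq (by positivity), hqdef]
  have h1 : (w+u)^2 = 4*a*x.2*(v+q) := by linear_combination hsum + 2*huw
  have hwu0 : 0 < w + u := by nlinarith
  have key : ((w+u) - (v+q)*(w-u)) * (w+u) = 0 := by linear_combination h1 - (v+q) * hdiff
  have key2 : (w+u) = (v+q)*(w-u) := by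
    rcases mul_eq_zero.1 key with h | h
    · linarith
    · linarith
  rw [div_eq_iff (by linarith)]; linarith [key2]

def Cset (a u : ℝ) : Set (ℝ × ℝ) := {x | x.1^2 + x.2^2 + a^2 = 2*a*u*x.2}
def c0 (a : ℝ) (k : ℝ × ℝ → ℝ) (u : ℝ) : ℝ := sInf (k '' Cset a u)
def k1 (a : ℝ) (k : ℝ × ℝ → ℝ) (s : ℝ) : ℝ :=
  sInf ((fun u => min (c0 a k u) 1 + |u - s|) '' Ioi 1)
def Ann (a b1 b2 : ℝ) : Set (ℝ × ℝ) :=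
  {x | 2*a*b1*x.2 ≤ x.1^2 + x.2^2 + a^2 ∧ x.1^2 + x.2^2 + a^2 ≤ 2*a*b2*x.2}

variable {a : ℝ} {k : ℝ × ℝ → ℝ}

lemma Cset_pos (ha : 0 < a) {u : ℝ} (hu : 1 < u) {x : ℝ × ℝ} (hx : x ∈ Cset a u) :
    0 < x.2 := by
  have h : x.1^2 + x.2^2 + a^2 = 2*a*u*x.2 := hx
  by_contra hle
  push_neg at hle
  have hau : 0 < 2*a*u := by nlinarith
  have h1 : 2*a*u*x.2 ≤ 0 := mul_nonpos_of_nonneg_of_nonpos hau.le hle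
  nlinarith [sq_nonneg x.1, sq_nonneg x.2, pow_pos ha 2]

lemma Cset_subset (ha : 0 < a) {u : ℝ} (hu : 1 < u) :
    Cset a u ⊆ {x : ℝ × ℝ | 0 < x.2} \ {(0, a)} := by
  intro x hx
  have h2 : 0 < x.2 := Cset_pos ha hu hx
  refine ⟨h2, ?_⟩
  intro hxx
  simp only [mem_singleton_iff] at hxx
  have h : x.1^2 + x.2^2 + a^2 = 2*a*u*x.2 := hx
  rw [hxx] at h
  simp at h
  nlinarith [mul_pos (sub_pos.2 hu) (mul_pos ha ha)]

lemma Cset_nonempty (ha : 0 < a) {u : ℝ} (hu : 1 ≤ u) :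
    ((0 : ℝ), a*(u + Real.sqrt (u^2-1))) ∈ Cset a u := by
  have hq2 : (Real.sqrt (u^2-1))^2 = u^2 - 1 := Real.sq_sqrt (by nlinarith)
  show (0:ℝ)^2 + (a*(u + Real.sqrt (u^2-1)))^2 + a^2 = 2*a*u*(a*(u + Real.sqrt (u^2-1)))
  nlinarith [hq2]

lemma mem_Cset_Vf (ha : 0 < a) {x : ℝ × ℝ} (hx : 0 < x.2) : x ∈ Cset a (Vf a x) := by
  have := Vf_eq ha x hx
  show x.1^2 + x.2^2 + a^2 = 2*a*(Vf a x)*x.2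
  linarith [this]

variable (hk_pos : ∀ x : ℝ × ℝ, 0 < x.2 → x ≠ (0, a) → 0 < k x)
include hk_pos

lemma c0_bddBelow (ha : 0 < a) {u : ℝ} (hu : 1 < u) : BddBelow (k '' Cset a u) := by
  refine ⟨0, fun b hb => ?_⟩
  obtain ⟨x, hx, rfl⟩ := hb
  have := Cset_subset ha hu hx
  exact le_of_lt (hk_pos x this.1 this.2)

lemma c0_nonneg (ha : 0 < a) {u : ℝ} (hu : 1 < u) : 0 ≤ c0 a k u := by
  refine le_csInf ⟨k _, mem_image_of_mem k (Cset_nonempty ha hu.le)⟩ fun b hb => ?_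
  obtain ⟨x, hx, rfl⟩ := hb
  have := Cset_subset ha hu hx
  exact le_of_lt (hk_pos x this.1 this.2)

lemma c0_le (ha : 0 < a) {x : ℝ × ℝ} (hx : 0 < x.2) (hu : 1 < Vf a x) :
    c0 a k (Vf a x) ≤ k x :=
  csInf_le (c0_bddBelow hk_pos ha hu) (mem_image_of_mem k (mem_Cset_Vf ha hx))

lemma k1_bddBelow (ha : 0 < a) (s : ℝ) :
    BddBelow ((fun u => min (c0 a k u) 1 + |u - s|) '' Ioi 1) := by
  refine ⟨0, fun b hb => ?_⟩
  obtain ⟨u, hu, rfl⟩ := hb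
  have h1 : (0:ℝ) ≤ min (c0 a k u) 1 := le_min (c0_nonneg hk_pos ha hu) one_pos.le
  positivity

lemma k1_nonneg (ha : 0 < a) (s : ℝ) : 0 ≤ k1 a k s := by
  refine le_csInf ⟨_, mem_image_of_mem _ (show (2:ℝ) ∈ Ioi 1 by norm_num)⟩ fun b hb => ?_
  obtain ⟨u, hu, rfl⟩ := hb
  have h1 : (0:ℝ) ≤ min (c0 a k u) 1 := le_min (c0_nonneg hk_pos ha hu) one_pos.le
  positivity

lemma k1_le_min (ha : 0 < a) {s : ℝ} (hs : 1 < s) : k1 a k s ≤ min (c0 a k s) 1 := by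
  have : min (c0 a k s) 1 + |s - s| = min (c0 a k s) 1 := by simp
  rw [← this]
  exact csInf_le (k1_bddBelow hk_pos ha s) (mem_image_of_mem _ hs)

lemma k1_le_k (ha : 0 < a) {x : ℝ × ℝ} (hx : 0 < x.2) (hxA : x ≠ (0, a)) :
    k1 a k (Vf a x) ≤ k x := by
  have h1 : 1 < Vf a x :=
    lt_of_le_of_ne (Vf_ge_one ha hx) (fun h => hxA ((Vf_eq_one_iff ha hx).1 h.symm))
  calc k1 a k (Vf a x) ≤ min (c0 a k (Vf a x)) 1 := k1_le_min hk_pos ha h1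
    _ ≤ c0 a k (Vf a x) := min_le_left _ _
    _ ≤ k x := c0_le hk_pos ha hx h1

lemma k1_lipschitz (ha : 0 < a) (s t : ℝ) : k1 a k s ≤ k1 a k t + |s - t| := by
  rw [← sub_le_iff_le_add]
  refine le_csInf ⟨_, mem_image_of_mem _ (show (2:ℝ) ∈ Ioi 1 by norm_num)⟩ fun b hb => ?_
  obtain ⟨u, hu, rfl⟩ := hb
  have h1 : k1 a k s ≤ min (c0 a k u) 1 + |u - s| :=
    csInf_le (k1_bddBelow hk_pos ha s) (mem_image_of_mem _ hu)
  have h2 : |u - s| ≤ |u - t| + |s - t| := by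
    have := abs_sub_le u t s
    rw [abs_sub_comm t s] at this
    linarith
  simp only []
  linarith

lemma k1_continuous (ha : 0 < a) : Continuous (k1 a k) := by
  have : LipschitzWith 1 (k1 a k) := by
    refine LipschitzWith.of_dist_le_mul fun s t => ?_
    rw [Real.dist_eq, Real.dist_eq, NNReal.coe_one, one_mul]
    have h1 := k1_lipschitz hk_pos ha s t
    have h2 := k1_lipschitz hk_pos ha t s
    rw [abs_sub_comm] at h2
    exact abs_sub_le_iff.2 ⟨by linarith, by linarith⟩
  exact this.continuous

omit hk_pos

lemma Ann_pos (ha : 0 < a) {b1 b2 : ℝ} (hb2 : 0 < b2) {x : ℝ × ℝ} (hx : x ∈ Ann a b1 b2) :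
    0 < x.2 := by
  obtain ⟨_, h2⟩ := hx
  by_contra hle
  push_neg at hle
  have h3 : 2*a*b2*x.2 ≤ 0 := mul_nonpos_of_nonneg_of_nonpos (by positivity) hle
  nlinarith [sq_nonneg x.1, sq_nonneg x.2, pow_pos ha 2]

lemma Ann_subset (ha : 0 < a) {b1 b2 : ℝ} (hb1 : 1 < b1) (hb2 : 0 < b2) :
    Ann a b1 b2 ⊆ {x : ℝ × ℝ | 0 < x.2} \ {(0, a)} := by
  intro x hx
  have h2 : 0 < x.2 := Ann_pos ha hb2 hx
  refine ⟨h2, ?_⟩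
  intro hxx
  simp only [mem_singleton_iff] at hxx
  obtain ⟨h1, _⟩ := hx
  rw [hxx] at h1
  simp at h1
  nlinarith [mul_pos (sub_pos.2 hb1) (mul_pos ha ha)]

lemma Ann_compact (ha : 0 < a) {b1 b2 : ℝ} (hb2 : 0 < b2) : IsCompact (Ann a b1 b2) := by
  apply Metric.isCompact_of_isClosed_isBounded
  · have hc1 : Continuous fun x : ℝ × ℝ => 2*a*b1*x.2 := continuous_const.mul continuous_snd
    have hc2 : Continuous fun x : ℝ × ℝ => 2*a*b2*x.2 := continuous_const.mul continuous_snd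
    have hc3 : Continuous fun x : ℝ × ℝ => x.1^2 + x.2^2 + a^2 :=
      (((continuous_fst.pow 2).add (continuous_snd.pow 2)).add continuous_const)
    exact (isClosed_le hc1 hc3).inter (isClosed_le hc3 hc2)
  · apply (Metric.isBounded_closedBall (x := (0:ℝ×ℝ)) (r := 2*a*b2)).subset
    intro x hx
    obtain ⟨h1, h2⟩ := hx
    have hx2 : 0 < x.2 := Ann_pos ha hb2 ⟨h1, h2⟩
    have hub : x.2 ≤ 2*a*b2 := by nlinarith [sq_nonneg x.1, sq_nonneg (x.2 - 2*a*b2)]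
    have hub1 : x.1^2 ≤ (2*a*b2)^2 := by nlinarith [sq_nonneg x.2]
    have habs : |x.1| ≤ 2*a*b2 := by
      rw [abs_le]; constructor <;> nlinarith [sq_nonneg (x.1 - 2*a*b2), sq_nonneg (x.1 + 2*a*b2)]
    simp only [mem_closedBall, Prod.dist_eq, dist_zero_right, Real.norm_eq_abs]
    apply max_le habs
    rw [Real.norm_eq_abs, abs_le]; constructor <;> nlinarith

variable (hk_cont : ContinuousOn k ({x : ℝ × ℝ | 0 < x.2} \ {(0, a)}))
include hk_pos hk_cont

lemma k1_pos (ha : 0 < a) {s : ℝ} (hs : 1 < s) : 0 < k1 a k s := by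
  set δ := (s - 1)/2 with hδ
  have hδ0 : 0 < δ := by rw [hδ]; linarith
  set b1 := (s + 1)/2 with hb1def
  have hb1 : 1 < b1 := by rw [hb1def]; linarith
  set b2 := s + δ with hb2def
  have hb2 : 0 < b2 := by rw [hb2def]; linarith
  have hsb : b1 ≤ s := by rw [hb1def]; linarith
  have hsb2 : s ≤ b2 := by rw [hb2def]; linarith
  have hAnn_ne : (Ann a b1 b2).Nonempty := by
    have h := Cset_nonempty ha hs.le
    have heq : ((0:ℝ), a*(s + Real.sqrt (s^2-1))).1^2 + ((0:ℝ), a*(s + Real.sqrt (s^2-1))).2^2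
        + a^2 = 2*a*s*((0:ℝ), a*(s + Real.sqrt (s^2-1))).2 := h
    have hp2 : 0 < ((0:ℝ), a*(s + Real.sqrt (s^2-1))).2 := Cset_pos ha hs h
    exact ⟨_, ⟨by nlinarith, by nlinarith⟩⟩
  obtain ⟨z, hzA, hzmin⟩ := (Ann_compact ha hb2).exists_isMinOn hAnn_ne
    (hk_cont.mono (Ann_subset ha hb1 hb2))
  have hz := Ann_subset ha hb1 hb2 hzA
  have hkz : 0 < k z := hk_pos z hz.1 hz.2
  have hlb : ∀ u ∈ Ioi (1:ℝ), min δ (min (k z) 1) ≤ min (c0 a k u) 1 + |u - s| := by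
    intro u hu
    have hu1 : (1:ℝ) < u := hu
    rcases le_or_gt δ (|u - s|) with hcase | hcase
    · have h0 : (0:ℝ) ≤ min (c0 a k u) 1 := le_min (c0_nonneg hk_pos ha hu1) one_pos.le
      calc min δ (min (k z) 1) ≤ δ := min_le_left _ _
        _ ≤ min (c0 a k u) 1 + |u - s| := by linarith
    · have habs := abs_lt.1 hcase
      have hsub : Cset a u ⊆ Ann a b1 b2 := by
        intro x hx
        have hx2 : 0 < x.2 := Cset_pos ha hu1 hx
        have heq : x.1^2 + x.2^2 + a^2 = 2*a*u*x.2 := hx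
        constructor
        · have hb1u : b1 ≤ u := by rw [hb1def, hδ] at *; linarith
          nlinarith [mul_pos ha hx2]
        · have hub2 : u ≤ b2 := by rw [hb2def, hδ] at *; linarith
          nlinarith [mul_pos ha hx2]
      have hc0 : k z ≤ c0 a k u := by
        refine le_csInf ⟨k _, mem_image_of_mem k (Cset_nonempty ha hu1.le)⟩ fun b hb => ?_
        obtain ⟨x, hx, rfl⟩ := hb
        exact hzmin (hsub hx)
      have hmm : min (k z) 1 ≤ min (c0 a k u) 1 := min_le_min hc0 le_rfl
      calc min δ (min (k z) 1) ≤ min (k z) 1 := min_le_right _ _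
        _ ≤ min (c0 a k u) 1 + |u - s| := by
            have := abs_nonneg (u - s); linarith
  have hk1 : min δ (min (k z) 1) ≤ k1 a k s := by
    refine le_csInf ⟨_, mem_image_of_mem _ (show (2:ℝ) ∈ Ioi 1 by norm_num)⟩ fun b hb => ?_
    obtain ⟨u, hu, rfl⟩ := hb
    exact hlb u hu
  have hfin : 0 < min δ (min (k z) 1) := lt_min hδ0 (lt_min hkz one_pos)
  linarith


def gf (a : ℝ) (k : ℝ × ℝ → ℝ) (s : ℝ) : ℝ :=
  min (a^2/s * ((s^2-1) * k1 a k s)) (min ((s-1)^2) 1)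
def Gf (a : ℝ) (k : ℝ × ℝ → ℝ) (s : ℝ) : ℝ := ∫ u in (2:ℝ)..s, (gf a k u)⁻¹

lemma gf_pos (ha : 0 < a) {s : ℝ} (hs : 1 < s) : 0 < gf a k s := by
  have h1 : 0 < a^2/s * ((s^2-1) * k1 a k s) := by
    have := k1_pos hk_pos hk_cont ha hs
    have h2 : (0:ℝ) < s^2 - 1 := by nlinarith
    have h3 : (0:ℝ) < a^2/s := div_pos (pow_pos ha 2) (by linarith)
    exact mul_pos h3 (mul_pos h2 this)
  have h2 : (0:ℝ) < min ((s-1)^2) 1 := lt_min (pow_pos (by linarith) 2) one_pos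
  exact lt_min h1 h2

omit hk_pos hk_cont

lemma gf_le_sq {s : ℝ} : gf a k s ≤ (s-1)^2 := (min_le_right _ _).trans (min_le_left _ _)
lemma gf_le_one {s : ℝ} : gf a k s ≤ 1 := (min_le_right _ _).trans (min_le_right _ _)
lemma gf_le_main {s : ℝ} : gf a k s ≤ a^2/s * ((s^2-1) * k1 a k s) := min_le_left _ _

include hk_pos hk_cont

lemma gf_contAt (ha : 0 < a) {s : ℝ} (hs : 1 < s) : ContinuousAt (gf a k) s := by
  have hs0 : s ≠ 0 := by linarith
  have h1 : ContinuousAt (fun s => a^2/s * ((s^2-1) * k1 a k s)) s := by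
    exact (ContinuousAt.div continuousAt_const continuousAt_id hs0).mul
      ((ContinuousAt.sub (continuousAt_id.pow 2) continuousAt_const).mul
        (k1_continuous hk_pos ha).continuousAt)
  exact h1.min (((continuousAt_id.sub continuousAt_const).pow 2).min continuousAt_const)

lemma inv_gf_contOn (ha : 0 < a) : ContinuousOn (fun u => (gf a k u)⁻¹) (Ioi 1) :=
  fun s hs => ((gf_contAt hk_pos hk_cont ha hs).continuousWithinAt).inv₀
    (ne_of_gt (gf_pos hk_pos hk_cont ha hs))

omit hk_pos hk_cont
lemma uIcc_sub {s₁ s₂ : ℝ} (h₁ : 1 < s₁) (h₂ : 1 < s₂) : uIcc s₁ s₂ ⊆ Ioi 1 :=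
  fun u hu => lt_of_lt_of_le (lt_min h₁ h₂) hu.1
include hk_pos hk_cont

lemma gf_integrable (ha : 0 < a) {s₁ s₂ : ℝ} (h₁ : 1 < s₁) (h₂ : 1 < s₂) :
    IntervalIntegrable (fun u => (gf a k u)⁻¹) MeasureTheory.volume s₁ s₂ :=
  ((inv_gf_contOn hk_pos hk_cont ha).mono (uIcc_sub h₁ h₂)).intervalIntegrable

lemma Gf_hasDerivAt (ha : 0 < a) {s : ℝ} (hs : 1 < s) :
    HasDerivAt (Gf a k) ((gf a k s)⁻¹) s :=
  integral_hasDerivAt_right (gf_integrable hk_pos hk_cont ha one_lt_two hs)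
    ((inv_gf_contOn hk_pos hk_cont ha).stronglyMeasurableAtFilter isOpen_Ioi s hs)
    ((inv_gf_contOn hk_pos hk_cont ha s hs).continuousAt (Ioi_mem_nhds hs))

lemma Gf_contAt (ha : 0 < a) {s : ℝ} (hs : 1 < s) : ContinuousAt (Gf a k) s :=
  (Gf_hasDerivAt hk_pos hk_cont ha hs).continuousAt

lemma Gf_strictMono (ha : 0 < a) {s₁ s₂ : ℝ} (h₁ : 1 < s₁) (h : s₁ < s₂) :
    Gf a k s₁ < Gf a k s₂ := by
  have h₂ : 1 < s₂ := h₁.trans h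
  have hint : Gf a k s₂ - Gf a k s₁ = ∫ u in s₁..s₂, (gf a k u)⁻¹ :=
    integral_interval_sub_left (gf_integrable hk_pos hk_cont ha one_lt_two h₂)
      (gf_integrable hk_pos hk_cont ha one_lt_two h₁)
  have hpos : 0 < ∫ u in s₁..s₂, (gf a k u)⁻¹ := by
    apply intervalIntegral_pos_of_pos_on (gf_integrable hk_pos hk_cont ha h₁ h₂)
    · intro u hu
      exact inv_pos.2 (gf_pos hk_pos hk_cont ha (h₁.trans hu.1))
    · exact h
  linarith

lemma Gf_lb (ha : 0 < a) {s : ℝ} (hs : 2 ≤ s) : s - 2 ≤ Gf a k s := by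
  have h2 : (1:ℝ) < s := lt_of_lt_of_le one_lt_two hs
  have hpt : ∀ u ∈ Icc (2:ℝ) s, (1:ℝ) ≤ (gf a k u)⁻¹ := by
    intro u hu
    have hu1 : 1 < u := lt_of_lt_of_le one_lt_two hu.1
    exact (one_le_inv₀ (gf_pos hk_pos hk_cont ha hu1)).2 gf_le_one
  have hmono := integral_mono_on hs (intervalIntegrable_const (c := (1:ℝ)))
    (gf_integrable hk_pos hk_cont ha one_lt_two h2) hpt
  rw [integral_const] at hmono
  simpa [Gf] using hmono

lemma Gf_ub (ha : 0 < a) {s : ℝ} (hs : 1 < s) (hs2 : s ≤ 2) :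
    Gf a k s ≤ 1 - (s-1)⁻¹ := by
  have hFTC : ∫ u in s..2, ((u-1)^2)⁻¹ = (s-1)⁻¹ - 1 := by
    have : ∀ u ∈ uIcc s 2, HasDerivAt (fun u => -(u-1)⁻¹) (((u-1)^2)⁻¹) u := by
      intro u hu
      have hu1 : 1 < u := uIcc_sub hs one_lt_two hu
      have h1 : HasDerivAt (fun u : ℝ => u - 1) 1 u := (hasDerivAt_id u).sub_const 1
      have h2 := (h1.inv (by linarith)).neg
      have h3 : ((u-1)^2)⁻¹ = -(-1 / ((fun u : ℝ => u - 1) u)^2) := by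
        simp only []; ring
      rw [h3]; exact h2
    rw [integral_eq_sub_of_hasDerivAt this]
    · norm_num; ring
    · apply ContinuousOn.intervalIntegrable
      intro u hu
      have hu1 : 1 < u := uIcc_sub hs one_lt_two hu
      exact (((continuousWithinAt_id.sub continuousWithinAt_const).pow 2).inv₀
        (by simpa using ne_of_gt (pow_pos (show (0:ℝ) < u - 1 by linarith) 2)))
  have hmono : ∫ u in s..2, ((u-1)^2)⁻¹ ≤ ∫ u in s..2, (gf a k u)⁻¹ := by
    apply integral_mono_on hs2
    · apply ContinuousOn.intervalIntegrable
      intro u hu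
      have hu1 : 1 < u := uIcc_sub hs one_lt_two hu
      exact (((continuousWithinAt_id.sub continuousWithinAt_const).pow 2).inv₀
        (by simpa using ne_of_gt (pow_pos (show (0:ℝ) < u - 1 by linarith) 2)))
    · exact gf_integrable hk_pos hk_cont ha hs one_lt_two
    · intro u hu
      have hu1 : 1 < u := lt_of_lt_of_le hs hu.1
      exact inv_anti₀ (gf_pos hk_pos hk_cont ha hu1) gf_le_sq
  have hsymm : Gf a k s = -∫ u in s..2, (gf a k u)⁻¹ := by rw [Gf, ← integral_symm]
  rw [hsymm]
  linarith [hFTC ▸ hmono]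

lemma Gf_surj (ha : 0 < a) (z : ℝ) : ∃ s, 1 < s ∧ Gf a k s = z := by
  set s₁ := 1 + (2+|z|)⁻¹ with hs₁def
  have habs : 0 ≤ |z| := abs_nonneg z
  have hpos : (0:ℝ) < 2 + |z| := by linarith
  have hs₁1 : 1 < s₁ := by rw [hs₁def]; simp; positivity
  have hs₁2 : s₁ ≤ 2 := by
    rw [hs₁def]
    have : (2+|z|)⁻¹ ≤ 1 := by
      rw [inv_le_one_iff₀]; right; linarith
    linarith
  have hGs₁ : Gf a k s₁ ≤ z := by
    have := Gf_ub hk_pos hk_cont ha hs₁1 hs₁2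
    have heq : (s₁ - 1)⁻¹ = 2 + |z| := by rw [hs₁def]; simp [inv_inv]
    rw [heq] at this
    cases abs_cases z with
    | inl h => linarith [h.1]
    | inr h => linarith [h.1]
  set s₂ := max 2 (z+2) with hs₂def
  have hs₂2 : 2 ≤ s₂ := le_max_left _ _
  have hGs₂ : z ≤ Gf a k s₂ := by
    have := Gf_lb hk_pos hk_cont ha hs₂2
    have : z + 2 ≤ s₂ := le_max_right _ _
    linarith [Gf_lb hk_pos hk_cont ha hs₂2]
  have hle : s₁ ≤ s₂ := hs₁2.trans hs₂2
  have hcont : ContinuousOn (Gf a k) (Icc s₁ s₂) := by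
    intro u hu
    exact ((Gf_hasDerivAt hk_pos hk_cont ha
      (lt_of_lt_of_le hs₁1 hu.1)).continuousAt).continuousWithinAt
  have := intermediate_value_Icc hle hcont
  obtain ⟨s, hsmem, hseq⟩ := this ⟨hGs₁, hGs₂⟩
  exact ⟨s, lt_of_lt_of_le hs₁1 hsmem.1, hseq⟩

lemma exists_F (ha : 0 < a) : ∃ F : ℝ → ℝ, StrictMono F ∧ Continuous F ∧ (∀ z, 1 < F z) ∧
    (∀ z, Gf a k (F z) = z) ∧ (∀ s, 1 < s → F (Gf a k s) = s) ∧ Tendsto F atBot (𝓝 1) := by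
  set Gt : ℝ → ℝ := fun w => Gf a k (1 + Real.exp w) with hGt
  have hmono : StrictMono Gt := by
    intro w w' hww
    exact Gf_strictMono hk_pos hk_cont ha
      (by linarith [Real.exp_pos w] : (1:ℝ) < 1 + Real.exp w)
      (by simpa using Real.exp_lt_exp.2 hww)
  have hsurj : Function.Surjective Gt := by
    intro z
    obtain ⟨s, hs1, hseq⟩ := Gf_surj hk_pos hk_cont ha z
    refine ⟨Real.log (s - 1), ?_⟩
    show Gf a k (1 + Real.exp (Real.log (s-1))) = z
    rw [Real.exp_log (by linarith), show 1 + (s-1) = s by ring]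
    exact hseq
  set e := StrictMono.orderIsoOfSurjective Gt hmono hsurj with he
  have hecoe : ∀ w, e w = Gt w := fun w => rfl
  set F : ℝ → ℝ := fun z => 1 + Real.exp (e.symm z) with hF
  have hFgt : ∀ z, 1 < F z := fun z => by
    have := Real.exp_pos (e.symm z); simp only [hF]; linarith
  have hGF : ∀ z, Gf a k (F z) = z := by
    intro z
    have : Gt (e.symm z) = z := by
      have := e.apply_symm_apply z
      rw [← hecoe]; exact this
    rw [hF]; exact this
  refine ⟨F, ?_, ?_, hFgt, hGF, ?_, ?_⟩
  · intro z z' hzz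
    rw [hF]
    simp only [add_lt_add_iff_left, Real.exp_lt_exp]
    exact e.symm.strictMono hzz
  · exact continuous_const.add (Real.continuous_exp.comp e.symm.continuous)
  · intro s hs
    have hGts : Gt (Real.log (s-1)) = Gf a k s := by
      rw [hGt]; simp only []; rw [Real.exp_log (by linarith), show 1 + (s-1) = s by ring]
    have : e.symm (Gf a k s) = Real.log (s-1) := by
      rw [← hGts, ← hecoe, e.symm_apply_apply]
    rw [hF]; simp only [this]; rw [Real.exp_log (by linarith)]; ring
  · have h1 : Tendsto (fun z => e.symm z) atBot atBot := by
      apply tendsto_atBot_atBot.2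
      intro b
      refine ⟨e b, fun z hz => ?_⟩
      have := e.symm.monotone hz
      simpa using this
    have h2 : Tendsto (fun z => Real.exp (e.symm z)) atBot (𝓝 0) :=
      Real.tendsto_exp_atBot.comp h1
    have := (tendsto_const_nhds (x := (1:ℝ))).add h2
    simpa using this


def betaF (a : ℝ) (k : ℝ × ℝ → ℝ) (F : ℝ → ℝ) (r t : ℝ) : ℝ :=
  min (Lf (F (Gf a k (Real.cosh r) - t))) r + r * Real.exp (-t)

omit hk_pos hk_cont

lemma KLdom_top : KLdom ⊤ = Ici (0:ℝ) := by
  ext r; simp [KLdom]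

variable {F : ℝ → ℝ} (hFgt1 : ∀ z, 1 < F z)
include hFgt1

lemma betaF_nonneg (ha : 0 < a) {r : ℝ} (hr : 0 ≤ r) (t : ℝ) : 0 ≤ betaF a k F r t := by
  have h1 : 0 ≤ Lf (F (Gf a k (Real.cosh r) - t)) := Lf_nonneg (hFgt1 _).le
  have : 0 ≤ r * Real.exp (-t) := by positivity
  have := le_min h1 hr
  unfold betaF; positivity

lemma betaF_zero (t : ℝ) : betaF a k F 0 t = 0 := by
  unfold betaF
  rw [min_eq_right (Lf_nonneg (hFgt1 _).le), zero_mul, add_zero]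

lemma betaF_le (ha : 0 < a) {r t : ℝ} (hr : 0 ≤ r) (ht : 0 ≤ t) : betaF a k F r t ≤ 2*r := by
  unfold betaF
  have h1 : min (Lf (F (Gf a k (Real.cosh r) - t))) r ≤ r := min_le_right _ _
  have h2 : r * Real.exp (-t) ≤ r := by
    have : Real.exp (-t) ≤ 1 := Real.exp_le_one_iff.2 (by linarith)
    nlinarith [Real.exp_pos (-t)]
  linarith

include hk_pos hk_cont

lemma betaF_strictMono (ha : 0 < a) (hFm : StrictMono F) {t : ℝ} :
    StrictMonoOn (fun r => betaF a k F r t) (Ici (0:ℝ)) := by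
  intro r₁ hr₁ r₂ hr₂ hlt
  simp only [betaF]
  have hexp : r₁ * Real.exp (-t) < r₂ * Real.exp (-t) :=
    mul_lt_mul_of_pos_right hlt (Real.exp_pos _)
  have hmin : min (Lf (F (Gf a k (Real.cosh r₁) - t))) r₁
      ≤ min (Lf (F (Gf a k (Real.cosh r₂) - t))) r₂ := by
    rcases eq_or_lt_of_le (mem_Ici.1 hr₁) with h0 | h0
    · rw [← h0, min_eq_right (Lf_nonneg (hFgt1 _).le)]
      exact le_min (Lf_nonneg (hFgt1 _).le) (by linarith)
    · have hc : Real.cosh r₁ < Real.cosh r₂ := by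
        rw [Real.cosh_lt_cosh]
        rw [abs_of_nonneg (mem_Ici.1 hr₁), abs_of_nonneg (mem_Ici.1 hr₂)]
        exact hlt
      have hc1 : 1 < Real.cosh r₁ := Real.one_lt_cosh.2 (by linarith)
      have hG : Gf a k (Real.cosh r₁) - t < Gf a k (Real.cosh r₂) - t := by
        have := Gf_strictMono hk_pos hk_cont ha hc1 hc
        linarith
      have hF : F (Gf a k (Real.cosh r₁) - t) ≤ F (Gf a k (Real.cosh r₂) - t) :=
        (hFm hG).le
      exact min_le_min (Lf_mono (hFgt1 _).le hF) hlt.le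
  linarith

omit hk_pos hk_cont

lemma betaF_antitone (ha : 0 < a) (hFm : StrictMono F) {r : ℝ} (hr : 0 ≤ r) :
    AntitoneOn (fun t => betaF a k F r t) (Ici (0:ℝ)) := by
  intro t₁ _ t₂ _ hle
  simp only [betaF]
  have h1 : F (Gf a k (Real.cosh r) - t₂) ≤ F (Gf a k (Real.cosh r) - t₁) :=
    hFm.monotone (by linarith)
  have h2 : min (Lf (F (Gf a k (Real.cosh r) - t₂))) r
      ≤ min (Lf (F (Gf a k (Real.cosh r) - t₁))) r :=
    min_le_min (Lf_mono (hFgt1 _).le h1) le_rfl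
  have h3 : r * Real.exp (-t₂) ≤ r * Real.exp (-t₁) :=
    mul_le_mul_of_nonneg_left (Real.exp_le_exp.2 (by linarith)) hr
  linarith

lemma betaF_tendsto (hFbot : Tendsto F atBot (𝓝 1)) (ha : 0 < a) {r : ℝ} (hr : 0 ≤ r) :
    Tendsto (fun t => betaF a k F r t) atTop (𝓝 0) := by
  have h2 : Tendsto (fun t : ℝ => r * Real.exp (-t)) atTop (𝓝 0) := by
    have := Real.tendsto_exp_neg_atTop_nhds_zero
    simpa using this.const_mul r
  have h1 : Tendsto (fun t : ℝ => Gf a k (Real.cosh r) - t) atTop atBot := by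
    apply tendsto_atTop_atBot.2
    intro b
    exact ⟨Gf a k (Real.cosh r) - b, fun t ht => by linarith⟩
  have h3 : Tendsto (fun t : ℝ => F (Gf a k (Real.cosh r) - t)) atTop (𝓝 1) :=
    hFbot.comp h1
  have h4 : Tendsto (fun t : ℝ => Lf (F (Gf a k (Real.cosh r) - t))) atTop (𝓝 0) := by
    have := (Lf_contAt le_rfl).tendsto.comp h3
    rwa [Lf_one] at this
  have h5 : Tendsto (fun t : ℝ => min (Lf (F (Gf a k (Real.cosh r) - t))) r) atTop (𝓝 0) := by
    apply squeeze_zero (fun t => le_min (Lf_nonneg (hFgt1 _).le) hr) (fun t => min_le_left _ _) h4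
  simpa [betaF] using h5.add h2

include hk_pos hk_cont

lemma betaF_contOn (hFcont : Continuous F) (ha : 0 < a) :
    ContinuousOn (fun p : ℝ × ℝ => betaF a k F p.1 p.2) (Ici (0:ℝ) ×ˢ Ici (0:ℝ)) := by
  intro p hp
  rcases eq_or_lt_of_le (mem_Ici.1 hp.1) with h0 | h0
  · have hval : betaF a k F p.1 p.2 = 0 := by rw [← h0]; exact betaF_zero hFgt1 p.2
    rw [ContinuousWithinAt, hval]
    apply squeeze_zero' (f := fun q : ℝ × ℝ => betaF a k F q.1 q.2)
      (g := fun q : ℝ × ℝ => 2 * q.1) (t₀ := 𝓝[Ici (0:ℝ) ×ˢ Ici (0:ℝ)] p)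
    · filter_upwards [self_mem_nhdsWithin] with q hq
      exact betaF_nonneg hFgt1 ha hq.1 q.2
    · filter_upwards [self_mem_nhdsWithin] with q hq
      exact betaF_le hFgt1 ha hq.1 hq.2
    · have : Tendsto (fun q : ℝ × ℝ => 2 * q.1) (𝓝[Ici (0:ℝ) ×ˢ Ici (0:ℝ)] p) (𝓝 (2 * p.1)) :=
        ((continuous_const.mul continuous_fst).continuousAt).continuousWithinAt
      rw [← h0] at this
      simpa using this
  · apply ContinuousAt.continuousWithinAt
    have hc1 : (1:ℝ) < Real.cosh p.1 := Real.one_lt_cosh.2 (by linarith)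
    have hcosh : ContinuousAt (fun q : ℝ × ℝ => Real.cosh q.1) p :=
      (Real.continuous_cosh.comp continuous_fst).continuousAt
    have hGc : ContinuousAt (fun q : ℝ × ℝ => Gf a k (Real.cosh q.1)) p :=
      ContinuousAt.comp (g := Gf a k) (f := fun q : ℝ × ℝ => Real.cosh q.1)
        (Gf_contAt hk_pos hk_cont ha hc1) hcosh
    have hinner : ContinuousAt (fun q : ℝ × ℝ => Gf a k (Real.cosh q.1) - q.2) p :=
      hGc.sub continuous_snd.continuousAt
    have hFc : ContinuousAt (fun q : ℝ × ℝ => F (Gf a k (Real.cosh q.1) - q.2)) p :=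
      ContinuousAt.comp (g := F) (f := fun q : ℝ × ℝ => Gf a k (Real.cosh q.1) - q.2)
        hFcont.continuousAt hinner
    have hL : ContinuousAt (fun q : ℝ × ℝ => Lf (F (Gf a k (Real.cosh q.1) - q.2))) p :=
      ContinuousAt.comp (g := Lf) (f := fun q : ℝ × ℝ => F (Gf a k (Real.cosh q.1) - q.2))
        (Lf_contAt (hFgt1 _).le) hFc
    exact (hL.min continuous_fst.continuousAt).add
      (continuous_fst.continuousAt.mul
        ((Real.continuous_exp.comp continuous_neg).comp continuous_snd).continuousAt)

lemma betaF_isClassKL (hFmono : StrictMono F) (hFcont : Continuous F)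
    (hFbot : Tendsto F atBot (𝓝 1)) (ha : 0 < a) : IsClassKL ⊤ (betaF a k F) := by
  rw [IsClassKL, KLdom_top]
  refine ⟨betaF_contOn hk_pos hk_cont hFgt1 hFcont ha, ?_, ?_, ?_, ?_, ?_⟩
  · exact fun r hr t _ => betaF_nonneg hFgt1 ha hr t
  · exact fun t _ => betaF_strictMono hk_pos hk_cont hFgt1 ha hFmono
  · exact fun t _ => betaF_zero hFgt1 t
  · exact fun r hr => betaF_antitone hFgt1 ha hFmono hr
  · exact fun r hr => betaF_tendsto hFgt1 hFbot ha hr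

omit hk_pos hk_cont hFgt1

lemma y_deriv (ha : 0 < a) {x : ℝ → ℝ × ℝ} {s : ℝ} {D : ℝ}
    (hpos : 0 < (x s).2)
    (hD : HasDerivAt x (-2 * D * (x s).1 * (x s).2 ^ 2,
      D * (x s).2 * (a ^ 2 + (x s).1 ^ 2 - (x s).2 ^ 2)) s) :
    HasDerivAt (fun u => Vf a (x u)) (-(2*a*D*(x s).2*((Vf a (x s))^2 - 1))) s := by
  set φ1 : ℝ := -2 * D * (x s).1 * (x s).2 ^ 2 with hφ1
  set φ2 : ℝ := D * (x s).2 * (a ^ 2 + (x s).1 ^ 2 - (x s).2 ^ 2) with hφ2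
  have h1 : HasDerivAt (fun u => (x u).1) φ1 s :=
    ((ContinuousLinearMap.fst ℝ ℝ ℝ).hasFDerivAt).comp_hasDerivAt s hD
  have h2 : HasDerivAt (fun u => (x u).2) φ2 s :=
    ((ContinuousLinearMap.snd ℝ ℝ ℝ).hasFDerivAt).comp_hasDerivAt s hD
  have hnum : HasDerivAt (fun u => (x u).1^2 + (x u).2^2 + a^2)
      (2*(x s).1*φ1 + 2*(x s).2*φ2) s := by
    have := ((h1.pow 2).add (h2.pow 2)).add_const (a^2)
    exact this.congr_deriv (by norm_num)
  have hden : HasDerivAt (fun u => 2*a*(x u).2) (2*a*φ2) s := h2.const_mul _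
  have hden0 : 2*a*(x s).2 ≠ 0 := by positivity
  have hdiv := hnum.div hden hden0
  have : (fun u => ((x u).1^2 + (x u).2^2 + a^2) / (2*a*(x u).2)) = fun u => Vf a (x u) := rfl
  change HasDerivAt (fun u => Vf a (x u)) _ s at hdiv
  convert hdiv using 1
  rw [Vf, hφ1, hφ2]
  field_simp
  ring

end S11



/-- `W` is continuous on `D` and positive definite relative to `x₀`. -/

theorem stmt_11 (a : ℝ) (ha : 0 < a)
    (A : ℝ × ℝ) (hA : A = ((0 : ℝ), a))
    (d : ℝ → ℝ × ℝ → ℝ)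
    -- `d` is continuous in `t`
    (hd_t : ∀ x : ℝ × ℝ, 0 < x.2 → ContinuousOn (fun t => d t x) (Ici (0 : ℝ)))
    -- `d` is locally Lipschitz in `x` on `H²`
    (hd_x : ∀ t ∈ Ici (0 : ℝ), ∀ x₀ : ℝ × ℝ, 0 < x₀.2 → ∃ K : ℝ≥0, ∃ ε > (0 : ℝ),
      LipschitzOnWith K (d t) (ball x₀ ε ∩ {x : ℝ × ℝ | 0 < x.2}))
    (k : ℝ × ℝ → ℝ)
    (hk_cont : ContinuousOn k ({x : ℝ × ℝ | 0 < x.2} \ {A}))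
    (hk_pos : ∀ x : ℝ × ℝ, 0 < x.2 → x ≠ A → 0 < k x)
    -- `k x * √(x₁² + (x₂ - a)²) → 0` as `x → A`
    (hk_lim : Tendsto (fun x : ℝ × ℝ => k x * Real.sqrt (x.1 ^ 2 + (x.2 - a) ^ 2))
      (nhdsWithin A ({x : ℝ × ℝ | 0 < x.2} \ {A})) (nhds 0))
    -- `d t x ≥ k x`
    (hdk : ∀ t ∈ Ici (0 : ℝ), ∀ x : ℝ × ℝ, 0 < x.2 → x ≠ A → k x ≤ d t x)
    (f : ℝ → ℝ × ℝ → ℝ × ℝ)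
    (hf : ∀ t x, f t x =
      (-2 * d t x * x.1 * x.2 ^ 2, d t x * x.2 * (a ^ 2 + x.1 ^ 2 - x.2 ^ 2)))
    -- the hyperbolic distance of the Poincaré upper half-plane model
    (ρ : ℝ × ℝ → ℝ × ℝ → ℝ)
    (hρ : ∀ x y : ℝ × ℝ, ρ x y =
      Real.log
        ((Real.sqrt ((x.1 - y.1) ^ 2 + (x.2 + y.2) ^ 2) +
            Real.sqrt ((x.1 - y.1) ^ 2 + (x.2 - y.2) ^ 2)) /
          (Real.sqrt ((x.1 - y.1) ^ 2 + (x.2 + y.2) ^ 2) -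
            Real.sqrt ((x.1 - y.1) ^ 2 + (x.2 - y.2) ^ 2)))) :
    ∃ β : ℝ → ℝ → ℝ, IsClassKL ⊤ β ∧
      ∀ (t₀ : ℝ) (x : ℝ → ℝ × ℝ), 0 ≤ t₀ →
        (∀ t ∈ Ici t₀, 0 < (x t).2) →
        (∀ t ∈ Ici t₀, HasDerivWithinAt x (f t (x t)) (Ici t₀) t) →
        ∀ t ∈ Ici t₀, ρ (x t) A ≤ β (ρ (x t₀) A) (t - t₀) := by
  subst hA
  obtain ⟨F, hFmono, hFcont, hFgt1, hGF, hFG, hFbot⟩ := S11.exists_F hk_pos hk_cont ha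
  refine ⟨S11.betaF a k F,
    S11.betaF_isClassKL hk_pos hk_cont hFgt1 hFmono hFcont hFbot ha, ?_⟩
  intro t₀ x ht₀ hx2 hx' t ht
  set y : ℝ → ℝ := fun s => S11.Vf a (x s) with hydef
  have hy1 : ∀ s ∈ Ici t₀, 1 ≤ y s := fun s hs => S11.Vf_ge_one ha (hx2 s hs)
  -- rho identity
  have hrho : ∀ s ∈ Ici t₀, ρ (x s) ((0:ℝ), a) = S11.Lf (y s) := by
    intro s hs
    rw [hρ]
    show Real.log
        ((Real.sqrt (((x s).1 - 0)^2 + ((x s).2 + a)^2) +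
          Real.sqrt (((x s).1 - 0)^2 + ((x s).2 - a)^2)) /
         (Real.sqrt (((x s).1 - 0)^2 + ((x s).2 + a)^2) -
          Real.sqrt (((x s).1 - 0)^2 + ((x s).2 - a)^2))) = S11.Lf (y s)
    rw [S11.ratio_eq ha (hx2 s hs)]
    rfl
  -- derivative of y at interior points
  have hyd : ∀ s ∈ Ioi t₀, HasDerivAt y (-(2*a*(d s (x s))*(x s).2*((y s)^2 - 1))) s := by
    intro s hs
    have hD : HasDerivAt x (f s (x s)) s :=
      (hx' s (mem_Ici.2 (le_of_lt hs))).hasDerivAt (Ici_mem_nhds hs)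
    rw [hf] at hD
    exact S11.y_deriv ha (hx2 s (mem_Ici.2 (le_of_lt hs))) hD
  -- continuity of y
  have hycont : ContinuousOn y (Ici t₀) := by
    intro s hs
    have hxc : ContinuousWithinAt x (Ici t₀) s := (hx' s hs).continuousWithinAt
    have hVc : ContinuousAt (S11.Vf a) (x s) := by
      apply ContinuousAt.div
      · exact (((continuous_fst.pow 2).add (continuous_snd.pow 2)).add
          continuous_const).continuousAt
      · exact (continuous_const.mul continuous_snd).continuousAt
      · have := hx2 s hs
        positivity
    exact hVc.comp_continuousWithinAt hxc
  -- y' ≤ 0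
  have hderiv_nonpos : ∀ s ∈ Ioi t₀, deriv y s ≤ 0 := by
    intro s hs
    rw [(hyd s hs).deriv]
    have h1 : 1 ≤ y s := hy1 s (mem_Ici.2 (le_of_lt hs))
    rcases eq_or_lt_of_le h1 with h | h
    · rw [← h]; norm_num
    · have hx2s := hx2 s (mem_Ici.2 (le_of_lt hs))
      have hxA : x s ≠ ((0:ℝ), a) := by
        intro hc
        have h2 : y s = 1 := (S11.Vf_eq_one_iff ha hx2s).2 hc
        linarith
      have hkd : k (x s) ≤ d s (x s) :=
        hdk s (mem_Ici.2 (le_trans ht₀ (le_of_lt hs))) (x s) hx2s hxA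
      have hkp : 0 < k (x s) := hk_pos _ hx2s hxA
      nlinarith [mul_pos (mul_pos (mul_pos (mul_pos two_pos ha)
        (lt_of_lt_of_le hkp hkd)) hx2s) (show (0:ℝ) < (y s)^2 - 1 by nlinarith)]
  -- y antitone
  have hanti : AntitoneOn y (Ici t₀) := by
    apply antitoneOn_of_deriv_nonpos (convex_Ici t₀) hycont
    · intro s hs
      rw [interior_Ici] at hs
      exact (hyd s hs).differentiableAt.differentiableWithinAt
    · intro s hs
      rw [interior_Ici] at hs
      exact hderiv_nonpos s hs
  have hyt1 : 1 ≤ y t := hy1 t ht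
  have hyt01 : 1 ≤ y t₀ := hy1 t₀ self_mem_Ici
  have hdecr : y t ≤ y t₀ := hanti self_mem_Ici ht ht
  rw [hrho t ht, hrho t₀ self_mem_Ici]
  have hcosh : Real.cosh (S11.Lf (y t₀)) = y t₀ := S11.cosh_Lf hyt01
  have hb1 : S11.Lf (y t) ≤ S11.Lf (y t₀) := S11.Lf_mono hyt1 hdecr
  have hb2 : S11.Lf (y t) ≤
      S11.Lf (F (S11.Gf a k (Real.cosh (S11.Lf (y t₀))) - (t - t₀))) := by
    rw [hcosh]
    rcases eq_or_lt_of_le hyt1 with h | h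
    · rw [← h, S11.Lf_one]
      exact S11.Lf_nonneg (hFgt1 _).le
    · have hyt0 : 1 < y t₀ := lt_of_lt_of_le h hdecr
      have hkey : S11.Gf a k (y t) ≤ S11.Gf a k (y t₀) - (t - t₀) := by
        rcases eq_or_lt_of_le (mem_Ici.1 ht) with heq | hlt
        · rw [← heq]; simp
        · set w : ℝ → ℝ := fun s => S11.Gf a k (y s) + (s - t₀) with hwdef
          have hygt : ∀ s ∈ Icc t₀ t, 1 < y s := fun s hs =>
            lt_of_lt_of_le h (hanti (mem_Ici.2 hs.1) ht hs.2)
          have hwcont : ContinuousOn w (Icc t₀ t) := by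
            apply ContinuousOn.add
            · intro s hs
              exact ContinuousAt.comp_continuousWithinAt
                (S11.Gf_contAt hk_pos hk_cont ha (hygt s hs))
                ((hycont.mono Icc_subset_Ici_self) s hs)
            · exact (continuous_id.sub continuous_const).continuousOn
          have hwderiv : ∀ s ∈ Ioo t₀ t, HasDerivAt w
              ((S11.gf a k (y s))⁻¹ * (-(2*a*(d s (x s))*(x s).2*((y s)^2 - 1))) + 1) s := by
            intro s hs
            have hy' := hyd s hs.1
            have hG := S11.Gf_hasDerivAt hk_pos hk_cont ha (hygt s ⟨hs.1.le, hs.2.le⟩)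
            have hcomp := HasDerivAt.comp s hG hy'
            have hid : HasDerivAt (fun s : ℝ => s - t₀) 1 s := (hasDerivAt_id s).sub_const _
            exact hcomp.add hid
          have hwd_nonpos : ∀ s ∈ Ioo t₀ t, deriv w s ≤ 0 := by
            intro s hs
            rw [(hwderiv s hs).deriv]
            have hV : 1 < y s := hygt s ⟨hs.1.le, hs.2.le⟩
            have hx2s := hx2 s (mem_Ici.2 hs.1.le)
            have hxA : x s ≠ ((0:ℝ), a) := by
              intro hc
              have h2 : y s = 1 := (S11.Vf_eq_one_iff ha hx2s).2 hc
              linarith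
            have hkd : k (x s) ≤ d s (x s) :=
              hdk s (mem_Ici.2 (by linarith [hs.1] : (0:ℝ) ≤ s)) (x s) hx2s hxA
            have hk1k : S11.k1 a k (y s) ≤ k (x s) := S11.k1_le_k hk_pos ha hx2s hxA
            have hk1pos : 0 < S11.k1 a k (y s) := S11.k1_pos hk_pos hk_cont ha hV
            have hgfpos : 0 < S11.gf a k (y s) := S11.gf_pos hk_pos hk_cont ha hV
            have hp2 : a ≤ 2 * (y s) * (x s).2 := S11.Vf_x2_ge ha hx2s
            have hymain : S11.gf a k (y s) ≤ 2*a*(d s (x s))*(x s).2*((y s)^2-1) := by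
              have hgm : S11.gf a k (y s) ≤ a^2/(y s)*(((y s)^2-1)*S11.k1 a k (y s)) :=
                S11.gf_le_main
              have hV0 : (0:ℝ) < y s := by linarith
              have step1 : a^2/(y s) ≤ 2*a*(x s).2 := by
                rw [div_le_iff₀ hV0]; nlinarith
              have step2 : a^2/(y s)*(((y s)^2-1)*S11.k1 a k (y s))
                  ≤ (2*a*(x s).2)*(((y s)^2-1)*(d s (x s))) := by
                apply mul_le_mul step1
                · apply mul_le_mul_of_nonneg_left (le_trans hk1k hkd)
                  nlinarith
                · apply mul_nonneg (by nlinarith) hk1pos.le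
                · nlinarith
              nlinarith [hgm, step2]
            have hfin : (S11.gf a k (y s))⁻¹ * (-(2*a*(d s (x s))*(x s).2*((y s)^2 - 1))) ≤ -1 := by
              rw [inv_mul_le_iff₀ hgfpos]
              linarith [hymain]
            linarith
          have hwanti : AntitoneOn w (Icc t₀ t) := by
            apply antitoneOn_of_deriv_nonpos (convex_Icc _ _) hwcont
            · intro s hs
              rw [interior_Icc] at hs
              exact (hwderiv s hs).differentiableAt.differentiableWithinAt
            · intro s hs
              rw [interior_Icc] at hs
              exact hwd_nonpos s hs
          have hwt := hwanti (left_mem_Icc.2 (mem_Ici.1 ht)) (right_mem_Icc.2 (mem_Ici.1 ht)) (mem_Ici.1 ht)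
          simp only [hwdef] at hwt
          linarith
      have hyF : y t ≤ F (S11.Gf a k (y t₀) - (t - t₀)) := by
        have h1 : F (S11.Gf a k (y t)) ≤ F (S11.Gf a k (y t₀) - (t - t₀)) :=
          hFmono.monotone hkey
        rwa [hFG _ h] at h1
      exact S11.Lf_mono hyt1 hyF
  have hfinal : S11.Lf (y t) ≤
      min (S11.Lf (F (S11.Gf a k (Real.cosh (S11.Lf (y t₀))) - (t - t₀)))) (S11.Lf (y t₀)) :=
    le_min hb2 hb1
  have hexp : 0 ≤ S11.Lf (y t₀) * Real.exp (-(t - t₀)) :=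
    mul_nonneg (S11.Lf_nonneg hyt01) (Real.exp_pos _).le
  unfold S11.betaF
  linarith
end
end
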